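/- arXiv:1504.00848 — 10 statements merged into one kernel-verified Lean document; each statement's English description precedes it below -/
import Mathlib

section
/- Let n and k be integers with 2 ≤ k and n > 2k, and let A = A_{n,k}. For any elements y₁, …, y_{2n−6} of the F₂-linear span of {R, V₁, …, V_{n−1}} in A (i.e., arbitrary degree-one classes), the product ∏_{i=1}^{2n−6} (y_i ⊗ 1 + 1 ⊗ y_i) equals 0 in A ⊗_{F₂} A. -/
open MvPolynomial
open scoped TensorProduct

noncomputable section

/-- The relations defining `A_{n,k}`: the polynomial ring is
`F₂[R, V₁, …, V_{n−1}]`, realized as `MvPolynomial (Option (Fin (n-1))) (ZMod 2)`,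
where `X none` plays the role of `R` and `X (some j)` plays the role of `V_{j+1}`. -/
def polygonRels (n k : ℕ) : Set (MvPolynomial (Option (Fin (n - 1))) (ZMod 2)) :=
  (Set.range fun i : Fin (n - 1) => X (some i) ^ 2 + X (some i) * X none) ∪
  ((fun S : Finset (Fin (n - 1)) => ∏ i ∈ S, X (some i)) '' {S | S.card = k}) ∪
  ((fun L : Finset (Fin (n - 1)) =>
      ∑ S ∈ L.powerset.filter (fun S => S.card ≤ k - 1),
        X none ^ (L.card - 1 - S.card) * ∏ i ∈ S, X (some i)) ''
    {L | n - k ≤ L.card ∧ L.card ≤ n - 2})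

/-- The ideal `I_{n,k}`. -/
def polygonIdeal (n k : ℕ) : Ideal (MvPolynomial (Option (Fin (n - 1))) (ZMod 2)) :=
  Ideal.span (polygonRels n k)

/-- The algebra `A_{n,k} ≅ H^*(M̄_{n,n-2k}; Z/2)`. -/
abbrev PolygonAlg (n k : ℕ) :=
  MvPolynomial (Option (Fin (n - 1))) (ZMod 2) ⧸ polygonIdeal n k

/-- The class `R` in `A_{n,k}`. -/
def Rcl (n k : ℕ) : PolygonAlg n k := Ideal.Quotient.mk _ (X none)

/-- The class `V_{i+1}` in `A_{n,k}` (so `Vcl n k j` is `V_{j+1}` in 1-based notation). -/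
def Vcl (n k : ℕ) (i : Fin (n - 1)) : PolygonAlg n k := Ideal.Quotient.mk _ (X (some i))

/-- The zero divisor `a ⊗ 1 + 1 ⊗ a` in `A_{n,k} ⊗_{F₂} A_{n,k}`. -/
def zd {n k : ℕ} (a : PolygonAlg n k) : PolygonAlg n k ⊗[ZMod 2] PolygonAlg n k :=
  a ⊗ₜ 1 + 1 ⊗ₜ a

end

noncomputable section Aux

namespace PolygonAux

variable (n k : ℕ)

/-- product of the `V` classes over a finset -/
def vp (T : Finset (Fin (n - 1))) : PolygonAlg n k := ∏ i ∈ T, Vcl n k i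

/-- reduced monomial `R^a * V_T` -/
def mm (a : ℕ) (T : Finset (Fin (n - 1))) : PolygonAlg n k := Rcl n k ^ a * vp n k T

variable {n k}

lemma quot_rel_zero {p : MvPolynomial (Option (Fin (n - 1))) (ZMod 2)}
    (hp : p ∈ polygonRels n k) : Ideal.Quotient.mk (polygonIdeal n k) p = 0 :=
  Ideal.Quotient.eq_zero_iff_mem.2 (Ideal.subset_span hp)

lemma char2 (x : PolygonAlg n k) : x + x = 0 := by
  have h := two_smul (ZMod 2) x
  rw [show (2 : ZMod 2) = 0 by decide, zero_smul] at h
  exact h.symm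

lemma eq_of_add_eq_zero {x y : PolygonAlg n k} (h : x + y = 0) : x = y := by
  calc x = x + (y + y) := by rw [char2, add_zero]
  _ = (x + y) + y := by ring
  _ = y := by rw [h, zero_add]

lemma rel1 (i : Fin (n - 1)) : Vcl n k i ^ 2 = Vcl n k i * Rcl n k := by
  have h : Ideal.Quotient.mk (polygonIdeal n k)
      (X (some i) ^ 2 + X (some i) * X none) = 0 :=
    quot_rel_zero (Or.inl (Or.inl ⟨i, rfl⟩))
  rw [map_add, map_pow, map_mul] at h
  exact eq_of_add_eq_zero h

lemma relk {S : Finset (Fin (n - 1))} (hS : S.card = k) : vp n k S = 0 := by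
  have h : Ideal.Quotient.mk (polygonIdeal n k) (∏ i ∈ S, X (some i)) = 0 :=
    quot_rel_zero (Or.inl (Or.inr ⟨S, hS, rfl⟩))
  rw [map_prod] at h
  exact h

lemma prodk {S : Finset (Fin (n - 1))} (hS : k ≤ S.card) : vp n k S = 0 := by
  obtain ⟨S₀, hsub, hcard⟩ := Finset.exists_subset_card_eq hS
  have : vp n k S = vp n k (S \ S₀) * vp n k S₀ := (Finset.prod_sdiff hsub).symm
  rw [this, relk hcard, mul_zero]

lemma relL {L : Finset (Fin (n - 1))} (h1 : n - k ≤ L.card) (h2 : L.card ≤ n - 2) :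
    ∑ S ∈ L.powerset.filter (fun S => S.card ≤ k - 1),
      Rcl n k ^ (L.card - 1 - S.card) * vp n k S = 0 := by
  have h : Ideal.Quotient.mk (polygonIdeal n k)
      (∑ S ∈ L.powerset.filter (fun S => S.card ≤ k - 1),
        X none ^ (L.card - 1 - S.card) * ∏ i ∈ S, X (some i)) = 0 :=
    quot_rel_zero (Or.inr ⟨L, ⟨h1, h2⟩, rfl⟩)
  rw [map_sum] at h
  simp only [map_mul, map_pow, map_prod] at h
  exact h

lemma masterRel {T L : Finset (Fin (n - 1))} (hd : Disjoint T L)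
    (h1 : n - k ≤ L.card) (h2 : L.card ≤ n - 2) (c : ℕ) :
    ∑ S ∈ L.powerset.filter (fun S => S.card ≤ k - 1),
      Rcl n k ^ (c + (L.card - 1 - S.card)) * vp n k (T ∪ S) = 0 := by
  have h := relL (n := n) (k := k) h1 h2
  calc ∑ S ∈ L.powerset.filter (fun S => S.card ≤ k - 1),
      Rcl n k ^ (c + (L.card - 1 - S.card)) * vp n k (T ∪ S)
      = Rcl n k ^ c * vp n k T *
        ∑ S ∈ L.powerset.filter (fun S => S.card ≤ k - 1),
          Rcl n k ^ (L.card - 1 - S.card) * vp n k S := by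
        rw [Finset.mul_sum]
        refine Finset.sum_congr rfl fun S hS => ?_
        have hSL : S ⊆ L := Finset.mem_powerset.1 (Finset.mem_filter.1 hS).1
        have hdis : Disjoint T S := hd.mono_right hSL
        have hu : vp n k (T ∪ S) = vp n k T * vp n k S := Finset.prod_union hdis
        rw [hu, pow_add]; ring
  _ = 0 := by rw [h, mul_zero]

end PolygonAux

end Aux

noncomputable section L1sec
namespace PolygonAux
variable {n k : ℕ}

lemma disjoint_of_subset_compl {T L : Finset (Fin (n - 1))} (h : L ⊆ Finset.univ \ T) :
    Disjoint T L := by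
  refine Finset.disjoint_left.2 fun i hiT hiL => ?_
  have := h hiL
  simp only [Finset.mem_sdiff, Finset.mem_univ, true_and] at this
  exact this hiT

lemma card_compl_finset (T : Finset (Fin (n - 1))) :
    (Finset.univ \ T).card = (n - 1) - T.card := by
  simp [Finset.card_sdiff_of_subset, Finset.card_univ]

lemma top_vanish_step (hk : 2 ≤ k) (hnk : 2 * k < n) (T : Finset (Fin (n - 1)))
    (hT : T.card ≤ k - 1)
    (hrec : ∀ T' : Finset (Fin (n - 1)), T'.card ≤ k - 1 → T.card < T'.card →
      mm n k (n - 2 - T'.card) T' = 0) :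
    mm n k (n - 2 - T.card) T = 0 := by
  set t := T.card with hta
  set ℓ : ℕ := min (n - 1 - t) (n - 2) with hℓ
  have hl1 : n - k ≤ ℓ := by omega
  have hl2 : ℓ ≤ n - 2 := by omega
  have hl3 : ℓ ≤ n - 1 - t := by omega
  obtain ⟨L, hLsub, hLcard⟩ := Finset.exists_subset_card_eq
    (show ℓ ≤ (Finset.univ \ T).card by rw [card_compl_finset]; omega)
  have hd : Disjoint T L := disjoint_of_subset_compl hLsub
  have h0 := masterRel (n := n) (k := k) hd (hLcard ▸ hl1) (hLcard ▸ hl2) ((n - 1 - t) - ℓ)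
  set c : ℕ := (n - 1 - t) - ℓ with hc
  set D := L.powerset.filter (fun S => S.card ≤ k - 1) with hD
  have hmem : (∅ : Finset (Fin (n - 1))) ∈ D := by
    refine Finset.mem_filter.2 ⟨Finset.mem_powerset.2 (Finset.empty_subset L), ?_⟩
    simp
  rw [← Finset.add_sum_erase _ _ hmem] at h0
  have hrest : ∑ S ∈ D.erase ∅,
      Rcl n k ^ (c + (L.card - 1 - S.card)) * vp n k (T ∪ S) = 0 := by
    refine Finset.sum_eq_zero fun S hS => ?_
    obtain ⟨hne, hSD⟩ := Finset.mem_erase.1 hS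
    have hSL : S ⊆ L := Finset.mem_powerset.1 (Finset.mem_filter.1 hSD).1
    have hsk : S.card ≤ k - 1 := (Finset.mem_filter.1 hSD).2
    have hs1 : 1 ≤ S.card := Finset.card_pos.2 (Finset.nonempty_iff_ne_empty.2 hne)
    have hdis : Disjoint T S := hd.mono_right hSL
    have hcardU : (T ∪ S).card = t + S.card := by
      rw [Finset.card_union_of_disjoint hdis]
    by_cases hbig : k ≤ t + S.card
    · have : vp n k (T ∪ S) = 0 := prodk (by omega)
      rw [this, mul_zero]
    · have h' : (T ∪ S).card ≤ k - 1 := by omega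
      have h'' := hrec (T ∪ S) h' (by omega)
      rw [mm] at h''
      have hsl : S.card ≤ L.card := Finset.card_le_card hSL
      have hexp : c + (L.card - 1 - S.card) = n - 2 - (T ∪ S).card := by
        rw [hcardU, hLcard]; omega
      rw [hexp, h'']
  rw [hrest, add_zero] at h0
  have hexp0 : c + (L.card - 1 - (∅ : Finset (Fin (n - 1))).card) = n - 2 - t := by
    rw [Finset.card_empty, hLcard]; omega
  rw [hexp0, Finset.union_empty] at h0
  exact h0

lemma top_vanish (hk : 2 ≤ k) (hnk : 2 * k < n) (T : Finset (Fin (n - 1)))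
    (hT : T.card ≤ k - 1) : mm n k (n - 2 - T.card) T = 0 := by
  suffices h : ∀ j : ℕ, ∀ T : Finset (Fin (n - 1)), T.card ≤ k - 1 → k - 1 - T.card ≤ j →
      mm n k (n - 2 - T.card) T = 0 from h (k - 1 - T.card) T hT le_rfl
  intro j
  induction j with
  | zero =>
    intro T hT hj
    refine top_vanish_step hk hnk T hT fun T' hT' hlt => absurd hlt (by omega)
  | succ j ih =>
    intro T hT hj
    exact top_vanish_step hk hnk T hT fun T' hT' hlt => ih T' hT' (by omega)

end PolygonAux
end L1sec

noncomputable section Swapsec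
namespace PolygonAux
variable {n k : ℕ}

lemma relation_for_erase (hk : 2 ≤ k) (hnk : 2 * k < n) (U : Finset (Fin (n - 1)))
    (hU : U.card = k - 2) {j : Fin (n - 1)} (hj : j ∉ U) :
    Rcl n k ^ (n - k - 1) * vp n k U +
      ∑ j' ∈ (Finset.univ \ U).erase j, mm n k (n - k - 2) (insert j' U) = 0 := by
  set A := Finset.univ \ U with hA
  have hjA : j ∈ A := by simp [hA, hj]
  set L := A.erase j with hL
  have hLcard : L.card = n - k := by
    rw [hL, Finset.card_erase_of_mem hjA, card_compl_finset, hU]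
    omega
  have hLsub : L ⊆ Finset.univ \ U := Finset.erase_subset _ _
  have hd : Disjoint U L := disjoint_of_subset_compl hLsub
  have h0 := masterRel (n := n) (k := k) hd (by omega) (by omega) 0
  set D := L.powerset.filter (fun S => S.card ≤ k - 1) with hD
  have hmem : (∅ : Finset (Fin (n - 1))) ∈ D := by
    refine Finset.mem_filter.2 ⟨Finset.mem_powerset.2 (Finset.empty_subset L), ?_⟩
    simp
  rw [← Finset.add_sum_erase _ _ hmem] at h0
  -- split the rest into singletons and bigger sets
  rw [← Finset.sum_filter_add_sum_filter_not (D.erase ∅) (fun S => S.card = 1)] at h0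
  have hbig : ∑ S ∈ (D.erase ∅).filter (fun S => ¬S.card = 1),
      Rcl n k ^ (0 + (L.card - 1 - S.card)) * vp n k (U ∪ S) = 0 := by
    refine Finset.sum_eq_zero fun S hS => ?_
    have h1 := Finset.mem_filter.1 hS
    obtain ⟨hne, hSD⟩ := Finset.mem_erase.1 h1.1
    have hSL : S ⊆ L := Finset.mem_powerset.1 (Finset.mem_filter.1 hSD).1
    have hs1 : 1 ≤ S.card := Finset.card_pos.2 (Finset.nonempty_iff_ne_empty.2 hne)
    have hs2 : 2 ≤ S.card := by
      rcases Nat.lt_or_ge S.card 2 with h | h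
      · exact absurd (by omega : S.card = 1) h1.2
      · exact h
    have hdis : Disjoint U S := hd.mono_right hSL
    have : vp n k (U ∪ S) = 0 := by
      refine prodk ?_
      rw [Finset.card_union_of_disjoint hdis]
      omega
    rw [this, mul_zero]
  have hsing : ∑ S ∈ (D.erase ∅).filter (fun S => S.card = 1),
      Rcl n k ^ (0 + (L.card - 1 - S.card)) * vp n k (U ∪ S) =
      ∑ j' ∈ L, mm n k (n - k - 2) (insert j' U) := by
    have himg : (D.erase ∅).filter (fun S => S.card = 1) =
        L.image (fun j' => ({j'} : Finset (Fin (n - 1)))) := by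
      ext S
      simp only [Finset.mem_filter, Finset.mem_erase, Finset.mem_image, hD,
        Finset.mem_powerset]
      constructor
      · rintro ⟨⟨hne, hSL, hcard⟩, h1⟩
        obtain ⟨a, rfl⟩ := Finset.card_eq_one.1 h1
        exact ⟨a, Finset.singleton_subset_iff.1 hSL, rfl⟩
      · rintro ⟨a, haL, rfl⟩
        refine ⟨⟨?_, Finset.singleton_subset_iff.2 haL, by simp; omega⟩, by simp⟩
        simp
    rw [himg, Finset.sum_image (fun a _ b _ h => Finset.singleton_injective h)]
    refine Finset.sum_congr rfl fun j' hj' => ?_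
    rw [hLcard, Finset.card_singleton]
    have he : 0 + (n - k - 1 - 1) = n - k - 2 := by omega
    rw [he, Finset.union_comm, ← Finset.insert_eq, mm]
  rw [hbig, add_zero, hsing] at h0
  rw [Finset.card_empty, Finset.union_empty, hLcard] at h0
  have hexp : 0 + (n - k - 1 - 0) = n - k - 1 := by omega
  rw [hexp] at h0
  exact h0

lemma swap_lemma (hk : 2 ≤ k) (hnk : 2 * k < n) (U : Finset (Fin (n - 1)))
    (hU : U.card = k - 2) {j₀ j₁ : Fin (n - 1)} (h0 : j₀ ∉ U) (h1 : j₁ ∉ U) :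
    mm n k (n - k - 2) (insert j₀ U) = mm n k (n - k - 2) (insert j₁ U) := by
  by_cases heq : j₀ = j₁
  · rw [heq]
  set A := Finset.univ \ U with hA
  have h₀ := relation_for_erase hk hnk U hU h0
  have h₁ := relation_for_erase hk hnk U hU h1
  have hsum : ∑ j' ∈ A.erase j₀, mm n k (n - k - 2) (insert j' U) =
      ∑ j' ∈ A.erase j₁, mm n k (n - k - 2) (insert j' U) := by
    have := h₀.trans h₁.symm
    exact add_left_cancel this
  have hj1A : j₁ ∈ A.erase j₀ := by
    simp [hA, Finset.mem_erase, h1]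
    exact fun hc => heq hc.symm
  have hj0A : j₀ ∈ A.erase j₁ := by
    simp [hA, Finset.mem_erase, h0]
    exact heq
  rw [← Finset.add_sum_erase _ _ hj1A, ← Finset.add_sum_erase _ _ hj0A] at hsum
  rw [Finset.erase_right_comm] at hsum
  exact (add_right_cancel hsum).symm

lemma connect_lemma (hk : 2 ≤ k) (hnk : 2 * k < n) :
    ∀ d : ℕ, ∀ T T' : Finset (Fin (n - 1)), T.card = k - 1 → T'.card = k - 1 →
      (T \ T').card ≤ d → mm n k (n - k - 2) T = mm n k (n - k - 2) T' := by
  intro d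
  induction d with
  | zero =>
    intro T T' hT hT' hd
    have : T \ T' = ∅ := Finset.card_eq_zero.1 (by omega)
    have hsub : T ⊆ T' := Finset.sdiff_eq_empty_iff_subset.1 this
    rw [Finset.eq_of_subset_of_card_le hsub (by omega)]
  | succ d ih =>
    intro T T' hT hT' hd
    by_cases h0 : (T \ T').card = 0
    · have : T \ T' = ∅ := Finset.card_eq_zero.1 h0
      have hsub : T ⊆ T' := Finset.sdiff_eq_empty_iff_subset.1 this
      rw [Finset.eq_of_subset_of_card_le hsub (by omega)]
    · obtain ⟨i, hi⟩ := Finset.card_pos.1 (by omega : 0 < (T \ T').card)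
      have hiT : i ∈ T := (Finset.mem_sdiff.1 hi).1
      have hiT' : i ∉ T' := (Finset.mem_sdiff.1 hi).2
      have hTT' : ¬(T' ⊆ T) := by
        intro hsub
        have : T' = T := Finset.eq_of_subset_of_card_le hsub (by omega)
        rw [this] at h0
        simp at h0
      obtain ⟨i', hi'T', hi'T⟩ := Finset.not_subset.1 hTT'
      set U := T.erase i with hUdef
      have hU : U.card = k - 2 := by
        rw [hUdef, Finset.card_erase_of_mem hiT, hT]
        omega
      have hiU : i ∉ U := Finset.notMem_erase _ _
      have hi'U : i' ∉ U := fun hc => hi'T (Finset.erase_subset _ _ hc)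
      have hTins : T = insert i U := (Finset.insert_erase hiT).symm
      have hswap := swap_lemma hk hnk U hU hiU hi'U
      set T₂ := insert i' U with hT₂def
      have hT₂ : T₂.card = k - 1 := by
        rw [hT₂def, Finset.card_insert_of_notMem hi'U, hU]
        omega
      have hdiff : (T₂ \ T').card ≤ d := by
        have e1 : T₂ \ T' = U \ T' := Finset.insert_sdiff_of_mem _ hi'T'
        have e2 : U \ T' = (T \ T').erase i := Finset.erase_sdiff_comm _ _ _
        rw [e1, e2, Finset.card_erase_of_mem hi]
        omega
      calc mm n k (n - k - 2) T = mm n k (n - k - 2) T₂ := by rw [hTins]; exact hswap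
      _ = mm n k (n - k - 2) T' := ih T₂ T' hT₂ hT' hdiff

end PolygonAux
end Swapsec

noncomputable section Qsec
namespace PolygonAux
variable {n k : ℕ}

lemma Qbase (hk : 2 ≤ k) (hnk : 2 * k < n) {T₀ : Finset (Fin (n - 1))}
    (hT₀ : T₀.card = k - 1) {T : Finset (Fin (n - 1))} (hT : T.card = k - 1) :
    mm n k (n - 3 - (k - 1)) T = mm n k (n - 3 - (k - 1)) T₀ := by
  have he : n - 3 - (k - 1) = n - k - 2 := by omega
  rw [he]
  exact connect_lemma hk hnk (T \ T₀).card T T₀ hT hT₀ le_rfl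

lemma Qlemma (hk : 2 ≤ k) (hnk : 2 * k < n) {T₀ : Finset (Fin (n - 1))}
    (hT₀ : T₀.card = k - 1) :
    ∀ j t : ℕ, t ≤ k - 1 → k - 1 - t ≤ j →
      ∃ u ∈ Submodule.span (ZMod 2) ({mm n k (n - 3 - (k - 1)) T₀} :
          Set (PolygonAlg n k)),
        ∀ T : Finset (Fin (n - 1)), T.card = t → mm n k (n - 3 - t) T = u := by
  intro j
  induction j with
  | zero =>
    intro t ht hj
    have : t = k - 1 := by omega
    subst this
    exact ⟨mm n k (n - 3 - (k - 1)) T₀, Submodule.subset_span rfl,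
      fun T hT => Qbase hk hnk hT₀ hT⟩
  | succ j ih =>
    intro t ht hj
    by_cases htop : t = k - 1
    · subst htop
      exact ⟨mm n k (n - 3 - (k - 1)) T₀, Submodule.subset_span rfl,
        fun T hT => Qbase hk hnk hT₀ hT⟩
    · have ht2 : t ≤ k - 2 := by omega
      -- the value function at higher levels
      set U : ℕ → PolygonAlg n k := fun m =>
        if h : 1 ≤ m ∧ t + m ≤ k - 1 then (ih (t + m) h.2 (by omega)).choose else 0
        with hUdef
      have hU0 : ∀ m, ¬(1 ≤ m ∧ t + m ≤ k - 1) → U m = 0 := by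
        intro m hm; simp only [hUdef]; exact dif_neg hm
      have hUΩ : ∀ m, U m ∈ Submodule.span (ZMod 2)
          ({mm n k (n - 3 - (k - 1)) T₀} : Set (PolygonAlg n k)) := by
        intro m
        by_cases h : 1 ≤ m ∧ t + m ≤ k - 1
        · simp only [hUdef, dif_pos h]
          exact (ih (t + m) h.2 (by omega)).choose_spec.1
        · simp only [hUdef, dif_neg h]; exact Submodule.zero_mem _
      have hUval : ∀ m, 1 ≤ m → t + m ≤ k - 1 →
          ∀ T : Finset (Fin (n - 1)), T.card = t + m →
            mm n k (n - 3 - (t + m)) T = U m := by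
        intro m h1 h2 T hT
        have h : 1 ≤ m ∧ t + m ≤ k - 1 := ⟨h1, h2⟩
        simp only [hUdef, dif_pos h]
        exact (ih (t + m) h.2 (by omega)).choose_spec.2 T hT
      refine ⟨∑ m ∈ Finset.range ((n - 2 - t) + 1), (n - 2 - t).choose m • U m,
        Submodule.sum_mem _ fun m _ => nsmul_mem (hUΩ m) _, ?_⟩
      intro T hT
      -- get a suitable L
      obtain ⟨L, hLsub, hLcard⟩ := Finset.exists_subset_card_eq
        (show n - 2 - t ≤ (Finset.univ \ T).card by rw [card_compl_finset, hT]; omega)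
      have hd : Disjoint T L := disjoint_of_subset_compl hLsub
      have h0 := masterRel (n := n) (k := k) hd (by omega) (by omega) 0
      set D := L.powerset.filter (fun S => S.card ≤ k - 1) with hD
      have hmem : (∅ : Finset (Fin (n - 1))) ∈ D := by
        refine Finset.mem_filter.2 ⟨Finset.mem_powerset.2 (Finset.empty_subset L), ?_⟩
        simp
      rw [← Finset.add_sum_erase _ _ hmem] at h0
      have claim1 : ∑ S ∈ D.erase ∅,
          Rcl n k ^ (0 + (L.card - 1 - S.card)) * vp n k (T ∪ S) =
          ∑ S ∈ D.erase ∅, U S.card := by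
        refine Finset.sum_congr rfl fun S hS => ?_
        obtain ⟨hne, hSD⟩ := Finset.mem_erase.1 hS
        have hSL : S ⊆ L := Finset.mem_powerset.1 (Finset.mem_filter.1 hSD).1
        have hsk : S.card ≤ k - 1 := (Finset.mem_filter.1 hSD).2
        have hs1 : 1 ≤ S.card := Finset.card_pos.2 (Finset.nonempty_iff_ne_empty.2 hne)
        have hdis : Disjoint T S := hd.mono_right hSL
        have hcardU : (T ∪ S).card = t + S.card := by
          rw [Finset.card_union_of_disjoint hdis, hT]
        by_cases hbig : k ≤ t + S.card
        · have hz : vp n k (T ∪ S) = 0 := prodk (by omega)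
          rw [hz, mul_zero, hU0 S.card (by omega)]
        · have h2 : t + S.card ≤ k - 1 := by omega
          have hexp : 0 + (L.card - 1 - S.card) = n - 3 - (t + S.card) := by
            rw [hLcard]; omega
          rw [hexp, ← hUval S.card hs1 h2 (T ∪ S) hcardU, mm]
      have claim2 : ∑ S ∈ D.erase ∅, U S.card = ∑ S ∈ L.powerset, U S.card := by
        refine Finset.sum_subset ?_ ?_
        · intro S hS
          exact Finset.mem_powerset.2
            (Finset.mem_powerset.1 (Finset.mem_filter.1 (Finset.mem_erase.1 hS).2).1)
        · intro S hS hnot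
          by_cases hS0 : S = ∅
          · subst hS0; rw [Finset.card_empty]; exact hU0 0 (by omega)
          · have : ¬ S.card ≤ k - 1 := by
              intro hle
              exact hnot (Finset.mem_erase.2 ⟨hS0,
                Finset.mem_filter.2 ⟨hS, hle⟩⟩)
            exact hU0 S.card (by omega)
      have claim3 : ∑ S ∈ L.powerset, U S.card =
          ∑ m ∈ Finset.range ((n - 2 - t) + 1), (n - 2 - t).choose m • U m := by
        rw [Finset.sum_powerset_apply_card, hLcard]
      rw [claim1, claim2, claim3] at h0
      have hfin := eq_of_add_eq_zero h0
      rw [Finset.card_empty, Finset.union_empty, hLcard] at hfin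
      have hexp0 : 0 + (n - 2 - t - 1 - 0) = n - 3 - t := by omega
      rw [hexp0] at hfin
      exact hfin

end PolygonAux
end Qsec

noncomputable section Msec
namespace PolygonAux
variable {n k : ℕ}

variable (n k) in
def genM (d : ℕ) : Set (PolygonAlg n k) :=
  {x | ∃ a T, a + T.card = d ∧ x = mm n k a T}

variable (n k) in
def MM (d : ℕ) : Submodule (ZMod 2) (PolygonAlg n k) :=
  Submodule.span (ZMod 2) (genM n k d)

lemma one_mem_M0 : (1 : PolygonAlg n k) ∈ MM n k 0 :=
  Submodule.subset_span ⟨0, ∅, by simp, by simp [mm, vp]⟩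

lemma r_mul_mm (a : ℕ) (T : Finset (Fin (n - 1))) :
    Rcl n k * mm n k a T = mm n k (a + 1) T := by
  rw [mm, mm, pow_succ]; ring

lemma v_mul_mm_mem (i : Fin (n - 1)) (a : ℕ) (T : Finset (Fin (n - 1))) :
    Vcl n k i * mm n k a T ∈ genM n k (a + T.card + 1) := by
  by_cases hi : i ∈ T
  · refine ⟨a + 1, T, by omega, ?_⟩
    have hvp : vp n k T = Vcl n k i * vp n k (T.erase i) :=
      (Finset.mul_prod_erase T _ hi).symm
    rw [mm, mm, hvp]
    have h := rel1 (n := n) (k := k) i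
    rw [pow_succ]
    linear_combination (Rcl n k ^ a * vp n k (T.erase i)) * h
  · refine ⟨a, insert i T, by rw [Finset.card_insert_of_notMem hi]; omega, ?_⟩
    rw [mm, mm]
    unfold vp
    rw [Finset.prod_insert hi]
    ring

lemma mul_mem_M {x z : PolygonAlg n k}
    (hx : x ∈ Submodule.span (ZMod 2) ({Rcl n k} ∪ Set.range (Vcl n k)))
    {d : ℕ} (hz : z ∈ MM n k d) : x * z ∈ MM n k (d + 1) := by
  have hle : Submodule.span (ZMod 2) ({Rcl n k} ∪ Set.range (Vcl n k)) * MM n k d ≤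
      MM n k (d + 1) := by
    rw [MM, Submodule.span_mul_span]
    refine Submodule.span_le.2 ?_
    rintro w ⟨g, hg, zz, ⟨a, T, hdT, rfl⟩, rfl⟩
    rw [SetLike.mem_coe]
    rcases hg with hg | ⟨i, rfl⟩
    · rw [Set.mem_singleton_iff] at hg
      subst hg
      show Rcl n k * mm n k a T ∈ MM n k (d + 1)
      rw [r_mul_mm]
      exact Submodule.subset_span ⟨a + 1, T, by omega, rfl⟩
    · show Vcl n k i * mm n k a T ∈ MM n k (d + 1)
      refine Submodule.subset_span ?_
      have := v_mul_mm_mem (n := n) (k := k) i a T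
      rwa [show a + T.card + 1 = d + 1 by omega] at this
  exact hle (Submodule.mul_mem_mul hx hz)

lemma prod_mem_M {ι : Type*} [DecidableEq ι] (s : Finset ι) (f : ι → PolygonAlg n k)
    (hf : ∀ i ∈ s, f i ∈ Submodule.span (ZMod 2) ({Rcl n k} ∪ Set.range (Vcl n k))) :
    ∏ i ∈ s, f i ∈ MM n k s.card := by
  induction s using Finset.cons_induction with
  | empty => simpa using one_mem_M0
  | cons a s ha ih =>
    rw [Finset.prod_cons, Finset.card_cons]
    exact mul_mem_M (hf a (Finset.mem_cons_self a s))
      (ih fun i hi => hf i (Finset.mem_cons_of_mem hi))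

lemma M_top_eq_zero (hk : 2 ≤ k) (hnk : 2 * k < n) {x : PolygonAlg n k}
    (hx : x ∈ MM n k (n - 2)) : x = 0 := by
  have hle : MM n k (n - 2) ≤ ⊥ := by
    refine Submodule.span_le.2 ?_
    rintro w ⟨a, T, hdT, rfl⟩
    rw [SetLike.mem_coe, Submodule.mem_bot]
    by_cases hT : k ≤ T.card
    · rw [mm, prodk hT, mul_zero]
    · have hTk : T.card ≤ k - 1 := by omega
      have ha : a = n - 2 - T.card := by omega
      rw [ha]
      exact top_vanish hk hnk T hTk
  exact Submodule.mem_bot (ZMod 2) |>.1 (hle hx)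

lemma M_n3_le (hk : 2 ≤ k) (hnk : 2 * k < n) {T₀ : Finset (Fin (n - 1))}
    (hT₀ : T₀.card = k - 1) :
    MM n k (n - 3) ≤ Submodule.span (ZMod 2)
      ({mm n k (n - 3 - (k - 1)) T₀} : Set (PolygonAlg n k)) := by
  refine Submodule.span_le.2 ?_
  rintro w ⟨a, T, hdT, rfl⟩
  rw [SetLike.mem_coe]
  by_cases hT : k ≤ T.card
  · have hz : mm n k a T = 0 := by rw [mm, prodk hT, mul_zero]
    rw [hz]
    exact Submodule.zero_mem _
  · have hTk : T.card ≤ k - 1 := by omega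
    obtain ⟨u, huΩ, huval⟩ := Qlemma hk hnk hT₀ (k - 1 - T.card) T.card hTk le_rfl
    have ha : a = n - 3 - T.card := by omega
    rw [ha, huval T rfl]
    exact huΩ

end PolygonAux
end Msec

namespace PolygonAux

lemma add_self_module {Mod : Type*} [AddCommMonoid Mod] [Module (ZMod 2) Mod]
    (x : Mod) : x + x = 0 := by
  have h := two_smul (ZMod 2) x
  rw [show (2 : ZMod 2) = 0 by decide, zero_smul] at h
  exact h.symm

end PolygonAux


set_option maxHeartbeats 1000000 in
open PolygonAux in
/-- For any `2n - 6` degree-one classes `y_i` (elements of the `F₂`-span of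
`{R, V₁, …, V_{n−1}}`) in `A = A_{n,k}`, the product of the zero divisors
`y_i ⊗ 1 + 1 ⊗ y_i` vanishes in `A ⊗_{F₂} A`. -/
theorem prod_zero_divisors_eq_zero (n k : ℕ) (hk : 2 ≤ k) (hnk : 2 * k < n)
    (y : Fin (2 * n - 6) → PolygonAlg n k)
    (hy : ∀ i, y i ∈ Submodule.span (ZMod 2) ({Rcl n k} ∪ Set.range (Vcl n k))) :
    ∏ i, ((y i) ⊗ₜ[ZMod 2] (1 : PolygonAlg n k) + (1 : PolygonAlg n k) ⊗ₜ[ZMod 2] (y i)) = 0 := by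
  classical
  have hn5 : 5 ≤ n := by omega
  obtain ⟨T₀, hT₀sub, hT₀⟩ := Finset.exists_subset_card_eq
    (show k - 1 ≤ (Finset.univ : Finset (Fin (n - 1))).card by
      rw [Finset.card_univ, Fintype.card_fin]; omega)
  set ω := mm n k (n - 3 - (k - 1)) T₀ with hω
  have hcardFin : (Finset.univ : Finset (Fin (2 * n - 6))).card = 2 * n - 6 := by
    rw [Finset.card_univ, Fintype.card_fin]
  -- big subsets give zero products
  have hbigzero : ∀ s : Finset (Fin (2 * n - 6)), n - 2 ≤ s.card → ∏ i ∈ s, y i = 0 := by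
    intro s hs
    obtain ⟨s₀, hsub, hcard⟩ := Finset.exists_subset_card_eq hs
    rw [← Finset.prod_sdiff hsub]
    have h0 : ∏ i ∈ s₀, y i = 0 := by
      apply M_top_eq_zero hk hnk (x := ∏ i ∈ s₀, y i)
      have := prod_mem_M s₀ y (fun i _ => hy i)
      rwa [hcard] at this
    rw [h0, mul_zero]
  -- subsets of size n-3 give multiples of ω
  have homega : ∀ s : Finset (Fin (2 * n - 6)), s.card = n - 3 →
      ∃ c : ZMod 2, c • ω = ∏ i ∈ s, y i := by
    intro s hs
    have hmem : ∏ i ∈ s, y i ∈ MM n k (n - 3) := by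
      have := prod_mem_M s y (fun i _ => hy i)
      rwa [hs] at this
    exact Submodule.mem_span_singleton.1 (M_n3_le hk hnk hT₀ hmem)
  rw [Finset.prod_add (fun i => (y i) ⊗ₜ[ZMod 2] (1 : PolygonAlg n k))
    (fun i => (1 : PolygonAlg n k) ⊗ₜ[ZMod 2] (y i)) Finset.univ]
  have hterm : ∀ t : Finset (Fin (2 * n - 6)),
      (∏ i ∈ t, ((y i) ⊗ₜ[ZMod 2] (1 : PolygonAlg n k))) *
        (∏ i ∈ Finset.univ \ t, ((1 : PolygonAlg n k) ⊗ₜ[ZMod 2] (y i))) =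
      (∏ i ∈ t, y i) ⊗ₜ[ZMod 2] (∏ i ∈ Finset.univ \ t, y i) := by
    intro t
    have h1 : ∏ i ∈ t, ((y i) ⊗ₜ[ZMod 2] (1 : PolygonAlg n k)) =
        (∏ i ∈ t, y i) ⊗ₜ[ZMod 2] (1 : PolygonAlg n k) := by
      have h := map_prod (Algebra.TensorProduct.includeLeft :
        PolygonAlg n k →ₐ[ZMod 2] (PolygonAlg n k ⊗[ZMod 2] PolygonAlg n k)) y t
      simp only [Algebra.TensorProduct.includeLeft_apply] at h
      exact h.symm
    have h2 : ∏ i ∈ Finset.univ \ t, ((1 : PolygonAlg n k) ⊗ₜ[ZMod 2] (y i)) =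
        (1 : PolygonAlg n k) ⊗ₜ[ZMod 2] (∏ i ∈ Finset.univ \ t, y i) := by
      have h := map_prod (Algebra.TensorProduct.includeRight :
        PolygonAlg n k →ₐ[ZMod 2] (PolygonAlg n k ⊗[ZMod 2] PolygonAlg n k)) y
        (Finset.univ \ t)
      simp only [Algebra.TensorProduct.includeRight_apply] at h
      exact h.symm
    rw [h1, h2, Algebra.TensorProduct.tmul_mul_tmul, mul_one, one_mul]
  rw [Finset.sum_congr rfl (fun t _ => hterm t)]
  rw [← Finset.sum_filter_add_sum_filter_not Finset.univ.powerset
    (fun t => t.card = n - 3)]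
  have hz2 : ∑ t ∈ Finset.univ.powerset.filter (fun t => ¬t.card = n - 3),
      (∏ i ∈ t, y i) ⊗ₜ[ZMod 2] (∏ i ∈ Finset.univ \ t, y i) = 0 := by
    refine Finset.sum_eq_zero fun t ht => ?_
    obtain ⟨htp, htc⟩ := Finset.mem_filter.1 ht
    have htu : t ⊆ Finset.univ := Finset.mem_powerset.1 htp
    have htle : t.card ≤ 2 * n - 6 := by
      have := Finset.card_le_card htu; rwa [hcardFin] at this
    rcases Nat.lt_or_ge t.card (n - 2) with hlt | hge
    · have hcompl : (Finset.univ \ t).card = 2 * n - 6 - t.card := by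
        rw [Finset.card_sdiff_of_subset htu, hcardFin]
      have : n - 2 ≤ (Finset.univ \ t).card := by rw [hcompl]; omega
      rw [hbigzero _ this, TensorProduct.tmul_zero]
    · rw [hbigzero t hge, TensorProduct.zero_tmul]
  rw [hz2, add_zero]
  refine Finset.sum_involution (fun t _ => Finset.univ \ t) ?_ ?_ ?_ ?_
  · intro t ht
    obtain ⟨htp, htc⟩ := Finset.mem_filter.1 ht
    have htu : t ⊆ Finset.univ := Finset.mem_powerset.1 htp
    have hcompl : (Finset.univ \ t).card = n - 3 := by
      rw [Finset.card_sdiff_of_subset htu, hcardFin, htc]; omega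
    have hback : Finset.univ \ (Finset.univ \ t) = t :=
      Finset.sdiff_sdiff_eq_self htu
    obtain ⟨c, hc⟩ := homega t htc
    obtain ⟨c', hc'⟩ := homega _ hcompl
    rw [hback, ← hc, ← hc']
    have h2 : ∀ c : ZMod 2, c = 0 ∨ c = 1 := by decide
    have hcc : (c • ω) ⊗ₜ[ZMod 2] (c' • ω) = (c' • ω) ⊗ₜ[ZMod 2] (c • ω) := by
      rcases h2 c with rfl | rfl <;> rcases h2 c' with rfl | rfl
      · rfl
      · rw [zero_smul, TensorProduct.zero_tmul, TensorProduct.tmul_zero]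
      · rw [zero_smul, TensorProduct.zero_tmul, TensorProduct.tmul_zero]
      · rfl
    rw [hcc]
    exact add_self_module _
  · intro t ht _
    obtain ⟨htp, htc⟩ := Finset.mem_filter.1 ht
    intro heq
    change Finset.univ \ t = t at heq
    have hdisj : Disjoint t (Finset.univ \ t) := Finset.disjoint_sdiff
    rw [heq] at hdisj
    have : t = ∅ := by rw [← Finset.bot_eq_empty]; exact disjoint_self.1 hdisj
    rw [this, Finset.card_empty] at htc
    omega
  · intro t ht
    obtain ⟨htp, htc⟩ := Finset.mem_filter.1 ht
    have htu : t ⊆ Finset.univ := Finset.mem_powerset.1 htp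
    refine Finset.mem_filter.2 ⟨Finset.mem_powerset.2 (Finset.subset_univ _), ?_⟩
    rw [Finset.card_sdiff_of_subset htu, hcardFin, htc]; omega
  · intro t ht
    exact Finset.sdiff_sdiff_eq_self (Finset.mem_powerset.1 (Finset.mem_filter.1 ht).1)
end

section
/- Let n and k be integers with 2 ≤ k and n > 2k, and let A = A_{n,k}. The homogeneous degree-(n−3) component of A is a one-dimensional F₂-vector space, and for every subset S ⊆ {1,…,n−1} with |S| ≤ k−1, the image in A of the monomial R^{n−3−|S|}·∏_{i∈S} V_i is nonzero if and only if the binomial coefficient C(n−2−|S|, k−1−|S|) is odd. -/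
open MvPolynomial
open scoped TensorProduct

/-- The degree-`d` homogeneous component of the graded algebra `A_{n,k}`
(all generators `R, Vᵢ` have degree 1): the image in the quotient of the
submodule of homogeneous polynomials of degree `d`. -/
noncomputable def homComponent (n k d : ℕ) : Submodule (ZMod 2) (PolygonAlg n k) :=
  (MvPolynomial.homogeneousSubmodule (Option (Fin (n - 1))) (ZMod 2) d).map
    (Ideal.Quotient.mkₐ (ZMod 2) (polygonIdeal n k)).toLinearMap

namespace PolyTop
open Finset

lemma addSelf {M : Type*} [AddCommMonoid M] [Module (ZMod 2) M] (a : M) : a + a = 0 := by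
  have h : (2 : ZMod 2) • a = a + a := two_smul _ a
  rw [show (2 : ZMod 2) = 0 by decide, zero_smul] at h
  exact h.symm

lemma binom_step (g : ℕ → ZMod 2) (m : ℕ) :
    ∑ j ∈ range (m + 2), (Nat.choose (m+1) j : ZMod 2) * g j =
    ∑ j ∈ range (m + 1), (Nat.choose m j : ZMod 2) * (g j + g (j + 1)) := by
  have h1 : ∑ j ∈ range (m + 2), (Nat.choose m j : ZMod 2) * g j
      = (Nat.choose m 0 : ZMod 2) * g 0
        + ∑ j ∈ range (m + 1), (Nat.choose m (j+1) : ZMod 2) * g (j+1) := by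
    rw [Finset.sum_range_succ' (fun j => (Nat.choose m j : ZMod 2) * g j) (m+1)]
    ring
  have h2 : ∑ j ∈ range (m + 2), (Nat.choose m j : ZMod 2) * g j
      = ∑ j ∈ range (m + 1), (Nat.choose m j : ZMod 2) * g j := by
    rw [Finset.sum_range_succ]
    simp [Nat.choose_eq_zero_of_lt (Nat.lt_succ_self m)]
  have h3 : ∑ j ∈ range (m + 2), (Nat.choose (m+1) j : ZMod 2) * g j
      = (Nat.choose m 0 : ZMod 2) * g 0
        + ∑ j ∈ range (m + 1), ((Nat.choose m j : ZMod 2) + Nat.choose m (j+1)) * g (j+1) := by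
    rw [Finset.sum_range_succ' (fun j => (Nat.choose (m+1) j : ZMod 2) * g j) (m+1)]
    simp only [Nat.choose_succ_succ, Nat.cast_add, Nat.choose_zero_right,
      Nat.succ_eq_add_one]
    ring
  rw [h3]
  simp only [add_mul, mul_add, Finset.sum_add_distrib]
  linear_combination h2 - h1

lemma lemmaD : ∀ (b l a : ℕ), b < l → l ≤ a →
    ∑ j ∈ range (l + 1), (Nat.choose l j : ZMod 2) * (Nat.choose (a - j) b : ZMod 2) = 0 := by
  intro b
  induction b with
  | zero =>
    intro l a hb _
    simp only [Nat.choose_zero_right, Nat.cast_one, mul_one]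
    have h2 : ((∑ j ∈ range (l+1), Nat.choose l j : ℕ) : ZMod 2)
        = ((2^l : ℕ) : ZMod 2) := by rw [Nat.sum_range_choose]
    rw [Nat.cast_sum] at h2
    rw [h2, Nat.cast_pow, show ((2:ℕ):ZMod 2) = 0 by decide, zero_pow (by omega)]
  | succ b ih =>
    intro l a hb ha
    obtain ⟨m, rfl⟩ : ∃ m, l = m + 1 := ⟨l - 1, by omega⟩
    rw [show m + 1 + 1 = m + 2 from rfl, binom_step]
    have key : ∀ j ∈ range (m + 1),
        (Nat.choose m j : ZMod 2) * ((Nat.choose (a - j) (b+1) : ZMod 2) + (Nat.choose (a - (j+1)) (b+1) : ZMod 2))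
        = (Nat.choose m j : ZMod 2) * (Nat.choose ((a-1) - j) b : ZMod 2) := by
      intro j hj
      have hj' : j ≤ m := Nat.lt_succ_iff.mp (mem_range.mp hj)
      have h1 : a - j = (a - 1 - j) + 1 := by omega
      have h2 : a - (j+1) = a - 1 - j := by omega
      rw [h1, h2, Nat.choose_succ_succ]
      push_cast
      have h3 : (Nat.choose (a-1-j) (b+1) : ZMod 2) + Nat.choose (a-1-j) (b+1) = 0 :=
        addSelf _
      linear_combination (Nat.choose m j : ZMod 2) * h3
    rw [Finset.sum_congr rfl key]
    exact ih m (a-1) (by omega) (by omega)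

/-- The coefficient function: `cc n k u = C(n-2-u, n-1-k) mod 2`. -/
def cc (n k u : ℕ) : ZMod 2 := (Nat.choose (n - 2 - u) (n - 1 - k) : ZMod 2)

lemma cc_eq_zero {n k u : ℕ} (hk : 2 ≤ k) (hnk : 2 * k < n) (hu : k ≤ u) :
    cc n k u = 0 := by
  unfold cc
  rw [Nat.choose_eq_zero_of_lt (by omega)]
  exact Nat.cast_zero

/-- Numeric core: sum over all subsets of `L` of `cc (t₀ + |S|)` vanishes. -/
lemma lemmaC' {n k t₀ : ℕ} {ι : Type*} [DecidableEq ι] (L : Finset ι)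
    (hk : 2 ≤ k) (hnk : 2 * k < n)
    (hL1 : n - k ≤ L.card) (hL2 : t₀ + L.card ≤ n - 2) :
    ∑ S ∈ L.powerset, cc n k (t₀ + S.card) = 0 := by
  rw [Finset.sum_powerset L (fun S => cc n k (t₀ + S.card))]
  have h1 : ∀ j ∈ range (L.card + 1),
      ∑ S ∈ L.powersetCard j, cc n k (t₀ + S.card)
      = (Nat.choose L.card j : ZMod 2) * cc n k (t₀ + j) := by
    intro j hj
    have := Finset.sum_powersetCard j L (fun c => cc n k (t₀ + c))
    rw [this, nsmul_eq_mul]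
  rw [Finset.sum_congr rfl h1]
  have h2 : ∀ j ∈ range (L.card + 1),
      (Nat.choose L.card j : ZMod 2) * cc n k (t₀ + j)
      = (Nat.choose L.card j : ZMod 2) * (Nat.choose ((n - 2 - t₀) - j) (n - 1 - k) : ZMod 2) := by
    intro j hj
    unfold cc
    rw [show n - 2 - (t₀ + j) = n - 2 - t₀ - j from by omega]
  rw [Finset.sum_congr rfl h2]
  exact lemmaD (n - 1 - k) L.card (n - 2 - t₀) (by omega) (by omega)

/-- Main combinatorial lemma: the `ε`-functional kills the long relations. -/
lemma lemmaC {n k : ℕ} {ι : Type*} [DecidableEq ι] (T L : Finset ι)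
    (hk : 2 ≤ k) (hnk : 2 * k < n)
    (hL1 : n - k ≤ L.card) (hL2 : L.card ≤ n - 2) (hT : T.card ≤ n - 2 - L.card) :
    ∑ S ∈ L.powerset.filter (fun S => S.card ≤ k - 1), cc n k ((T ∪ S).card) = 0 := by
  have hfull : ∑ S ∈ L.powerset.filter (fun S => S.card ≤ k - 1), cc n k ((T ∪ S).card)
      = ∑ S ∈ L.powerset, cc n k ((T ∪ S).card) := by
    rw [Finset.sum_filter]
    refine Finset.sum_congr rfl fun S hS => ?_
    by_cases h : S.card ≤ k - 1
    · rw [if_pos h]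
    · rw [if_neg h, cc_eq_zero hk hnk ?_]
      calc k ≤ S.card := by omega
        _ ≤ (T ∪ S).card := Finset.card_le_card Finset.subset_union_right
  rw [hfull]
  by_cases hdisj : Disjoint T L
  · have : ∀ S ∈ L.powerset, cc n k ((T ∪ S).card) = cc n k (T.card + S.card) := by
      intro S hS
      rw [Finset.card_union_of_disjoint
        (hdisj.mono_right (Finset.mem_powerset.mp hS))]
    rw [Finset.sum_congr rfl this]
    exact lemmaC' L hk hnk hL1 (by omega)
  · obtain ⟨a, haT, haL⟩ := Finset.not_disjoint_iff.mp hdisj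
    have hrw : L = insert a (L.erase a) := (Finset.insert_erase haL).symm
    rw [hrw, Finset.sum_powerset_insert (Finset.notMem_erase a L)]
    have : ∀ S ∈ (L.erase a).powerset,
        cc n k ((T ∪ insert a S).card) = cc n k ((T ∪ S).card) := by
      intro S hS
      congr 2
      rw [Finset.union_insert, Finset.insert_eq_self.mpr (Finset.mem_union_left S haT)]
    rw [Finset.sum_congr rfl this]
    exact addSelf _

/-- degree of an exponent vector -/
def deg {n : ℕ} (σ : Option (Fin (n-1)) →₀ ℕ) : ℕ := σ none + ∑ j : Fin (n-1), σ (some j)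

def vsupp {n : ℕ} (σ : Option (Fin (n-1)) →₀ ℕ) : Finset (Fin (n-1)) :=
  Finset.univ.filter fun j => σ (some j) ≠ 0

lemma deg_add {n : ℕ} (σ τ : Option (Fin (n-1)) →₀ ℕ) : deg (σ + τ) = deg σ + deg τ := by
  simp only [deg, Finsupp.add_apply, Finset.sum_add_distrib]
  ring

lemma deg_single_none {n : ℕ} (e : ℕ) :
    deg (Finsupp.single (none : Option (Fin (n-1))) e) = e := by
  simp [deg, Finsupp.single_apply]

lemma deg_single_some {n : ℕ} (i : Fin (n-1)) (e : ℕ) :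
    deg (Finsupp.single (some i) e) = e := by
  simp [deg, Finsupp.single_apply]

/-- exponent vector of the squarefree monomial `∏_{i∈T} V_i` -/
noncomputable def tt {n : ℕ} (T : Finset (Fin (n-1))) : Option (Fin (n-1)) →₀ ℕ :=
  ∑ i ∈ T, Finsupp.single (some i) 1

lemma tt_none {n : ℕ} (T : Finset (Fin (n-1))) : tt T none = 0 := by
  simp [tt, Finset.sum_apply', Finsupp.single_apply]

lemma tt_some {n : ℕ} (T : Finset (Fin (n-1))) (j : Fin (n-1)) :
    tt T (some j) = if j ∈ T then 1 else 0 := by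
  classical
  simp only [tt, Finset.sum_apply', Finsupp.single_apply, Option.some.injEq]
  rw [Finset.sum_ite_eq' T j (fun _ => 1)]

lemma deg_tt {n : ℕ} (T : Finset (Fin (n-1))) : deg (tt T) = T.card := by
  simp only [deg, tt_none, tt_some, zero_add]
  rw [Finset.sum_ite_mem, Finset.univ_inter, Finset.sum_const, smul_eq_mul, mul_one]

noncomputable def ww (n k : ℕ) (σ : Option (Fin (n-1)) →₀ ℕ) : ZMod 2 :=
  if deg σ = n - 3 then cc n k (vsupp σ).card else 0

noncomputable def eps (n k : ℕ) (p : MvPolynomial (Option (Fin (n-1))) (ZMod 2)) : ZMod 2 :=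
  ∑ σ ∈ p.support, MvPolynomial.coeff σ p * ww n k σ

lemma eps_zero (n k : ℕ) : eps n k 0 = 0 := by simp [eps]

lemma eps_add (n k : ℕ) (p q : MvPolynomial (Option (Fin (n-1))) (ZMod 2)) :
    eps n k (p + q) = eps n k p + eps n k q := by
  classical
  unfold eps
  rw [Finset.sum_subset (MvPolynomial.support_add (p := p) (q := q))
    (fun σ _ hσ => by
      rw [MvPolynomial.notMem_support_iff.mp hσ, zero_mul])]
  rw [Finset.sum_subset (Finset.subset_union_left (s₁ := p.support) (s₂ := q.support))
    (fun σ _ hσ => by rw [MvPolynomial.notMem_support_iff.mp hσ, zero_mul])]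
  rw [Finset.sum_subset (Finset.subset_union_right (s₁ := p.support) (s₂ := q.support))
    (fun σ _ hσ => by rw [MvPolynomial.notMem_support_iff.mp hσ, zero_mul])]
  rw [← Finset.sum_add_distrib]
  refine Finset.sum_congr rfl fun σ _ => ?_
  rw [MvPolynomial.coeff_add, add_mul]

lemma eps_monomial (n k : ℕ) (σ : Option (Fin (n-1)) →₀ ℕ) (a : ZMod 2) :
    eps n k (MvPolynomial.monomial σ a) = a * ww n k σ := by
  classical
  by_cases ha : a = 0
  · subst ha; simp [eps]
  · unfold eps
    rw [MvPolynomial.support_monomial, if_neg ha, Finset.sum_singleton,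
      MvPolynomial.coeff_monomial, if_pos rfl]

lemma eps_sum (n k : ℕ) {α : Type*} (s : Finset α)
    (f : α → MvPolynomial (Option (Fin (n-1))) (ZMod 2)) :
    eps n k (∑ i ∈ s, f i) = ∑ i ∈ s, eps n k (f i) := by
  classical
  induction s using Finset.cons_induction with
  | empty => simp [eps_zero]
  | cons a s ha ih => rw [Finset.sum_cons, Finset.sum_cons, eps_add, ih]


lemma vsupp_add {n : ℕ} (σ τ : Option (Fin (n-1)) →₀ ℕ) :
    vsupp (σ + τ) = vsupp σ ∪ vsupp τ := by
  ext j
  simp only [vsupp, Finset.mem_filter, Finset.mem_union, Finset.mem_univ, true_and]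
  simp only [vsupp, Finset.mem_filter, Finset.mem_union, Finset.mem_univ, true_and,
    Finsupp.add_apply]
  omega

lemma vsupp_single_none {n : ℕ} (e : ℕ) :
    vsupp (Finsupp.single (none : Option (Fin (n-1))) e) = ∅ := by
  ext j
  simp [vsupp, Finsupp.single_apply]

lemma vsupp_single_some {n : ℕ} (i : Fin (n-1)) {e : ℕ} (he : e ≠ 0) :
    vsupp (Finsupp.single (some i) e) = {i} := by
  ext j
  simp only [vsupp, Finset.mem_filter, Finset.mem_univ, true_and, Finsupp.single_apply,
    Option.some.injEq, Finset.mem_singleton]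
  by_cases h : i = j <;> simp [h, he, eq_comm]

lemma vsupp_tt {n : ℕ} (T : Finset (Fin (n-1))) : vsupp (tt T) = T := by
  ext j
  simp only [vsupp, Finset.mem_filter, Finset.mem_univ, true_and, tt_some]
  by_cases h : j ∈ T <;> simp [h]

lemma vsupp_card_le_deg {n : ℕ} (σ : Option (Fin (n-1)) →₀ ℕ) : (vsupp σ).card ≤ deg σ := by
  have h1 : (vsupp σ).card = ∑ j ∈ vsupp σ, 1 := by simp
  have h2 : ∑ j ∈ vsupp σ, 1 ≤ ∑ j ∈ vsupp σ, σ (some j) := by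
    refine Finset.sum_le_sum fun j hj => ?_
    have := (Finset.mem_filter.mp hj).2
    omega
  have h3 : ∑ j ∈ vsupp σ, σ (some j) ≤ ∑ j : Fin (n-1), σ (some j) :=
    Finset.sum_le_sum_of_subset (Finset.subset_univ _)
  unfold deg
  omega

lemma prodX {n : ℕ} (T : Finset (Fin (n-1))) :
    (∏ i ∈ T, X (some i) : MvPolynomial (Option (Fin (n-1))) (ZMod 2)) = monomial (tt T) 1 := by
  classical
  induction T using Finset.cons_induction with
  | empty =>
    simp only [Finset.prod_empty, tt, Finset.sum_empty]
    rw [monomial_zero']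
    simp
  | cons a s ha ih =>
    rw [Finset.prod_cons, ih, show (X (some a) : MvPolynomial (Option (Fin (n-1))) (ZMod 2))
      = monomial (Finsupp.single (some a) 1) 1 from rfl, monomial_mul, one_mul]
    congr 1
    simp only [tt, Finset.sum_cons]

lemma eps_mul_rel {n k : ℕ} (hk : 2 ≤ k) (hnk : 2 * k < n) :
    ∀ g ∈ polygonRels n k, ∀ q, eps n k (q * g) = 0 := by
  intro g hg
  have main : ∀ σ (a : ZMod 2), eps n k (monomial σ a * g) = 0 := by
    intro σ a
    rcases hg with (⟨i, rfl⟩ | ⟨S, hS, rfl⟩) | ⟨L, hL, rfl⟩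
    · -- relation V_i^2 + V_i R
      rw [mul_add, eps_add]
      rw [X_pow_eq_monomial, show (X (some i) * X none : MvPolynomial (Option (Fin (n-1))) (ZMod 2))
        = monomial (Finsupp.single (some i) 1 + Finsupp.single none 1) 1 by
          rw [show (X (some i) : MvPolynomial (Option (Fin (n-1))) (ZMod 2))
            = monomial (Finsupp.single (some i) 1) 1 from rfl,
            show (X (none : Option (Fin (n-1))) : MvPolynomial (Option (Fin (n-1))) (ZMod 2))
            = monomial (Finsupp.single none 1) 1 from rfl, monomial_mul, one_mul]]
      rw [monomial_mul, monomial_mul, eps_monomial, eps_monomial]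
      have hww : ww n k (σ + Finsupp.single (some i) 2)
          = ww n k (σ + (Finsupp.single (some i) 1 + Finsupp.single none 1)) := by
        unfold ww
        rw [deg_add, deg_add, deg_add, deg_single_some, deg_single_some, deg_single_none,
          vsupp_add, vsupp_add, vsupp_add, vsupp_single_some (e := 2) i (by omega),
          vsupp_single_some (e := 1) i (by omega), vsupp_single_none, Finset.union_empty]
      rw [hww, ← mul_add, addSelf (ww n k _), mul_zero]
    · -- relation ∏_{i∈S} V_i, |S| = k
      change eps n k (monomial σ a * ∏ i ∈ S, X (some i)) = 0
      rw [prodX, monomial_mul, mul_one, eps_monomial]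
      unfold ww
      split
      · rw [cc_eq_zero hk hnk ?_, mul_zero]
        rw [vsupp_add, vsupp_tt]
        calc k = S.card := (hS : S.card = k).symm
          _ ≤ (vsupp σ ∪ S).card := Finset.card_le_card Finset.subset_union_right
      · rw [mul_zero]
    · -- long relation for L
      change eps n k (monomial σ a * ∑ S ∈ L.powerset.filter (fun S => S.card ≤ k - 1),
        X none ^ (L.card - 1 - S.card) * ∏ i ∈ S, X (some i)) = 0
      obtain ⟨hL1, hL2⟩ := hL
      rw [Finset.mul_sum, eps_sum]
      have hterm : ∀ S ∈ L.powerset.filter (fun S => S.card ≤ k - 1),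
          eps n k (monomial σ a * (X none ^ (L.card - 1 - S.card) * ∏ i ∈ S, X (some i)))
          = a * ww n k (σ + (Finsupp.single none (L.card - 1 - S.card) + tt S)) := by
        intro S hS
        rw [prodX, X_pow_eq_monomial, monomial_mul, one_mul, monomial_mul, mul_one, eps_monomial]
      rw [Finset.sum_congr rfl hterm]
      by_cases hdeg : deg σ + (L.card - 1) = n - 3
      · have hterm2 : ∀ S ∈ L.powerset.filter (fun S => S.card ≤ k - 1),
            a * ww n k (σ + (Finsupp.single none (L.card - 1 - S.card) + tt S))
            = a * cc n k ((vsupp σ ∪ S).card) := by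
          intro S hS
          obtain ⟨hSL, hSc⟩ := Finset.mem_filter.mp hS
          unfold ww
          rw [deg_add, deg_add, deg_single_none, deg_tt, if_pos (by omega),
            vsupp_add, vsupp_add, vsupp_single_none, vsupp_tt, Finset.empty_union]
        rw [Finset.sum_congr rfl hterm2, ← Finset.mul_sum,
          lemmaC (vsupp σ) L hk hnk hL1 hL2 ?_, mul_zero]
        have := vsupp_card_le_deg σ
        omega
      · have hterm2 : ∀ S ∈ L.powerset.filter (fun S => S.card ≤ k - 1),
            a * ww n k (σ + (Finsupp.single none (L.card - 1 - S.card) + tt S)) = 0 := by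
          intro S hS
          obtain ⟨hSL, hSc⟩ := Finset.mem_filter.mp hS
          have hcS : S.card ≤ L.card - 1 - (L.card - 1 - S.card) := by
            have := Finset.card_le_card (Finset.mem_powerset.mp hSL)
            omega
          unfold ww
          rw [deg_add, deg_add, deg_single_none, deg_tt, if_neg (by
            have := Finset.card_le_card (Finset.mem_powerset.mp hSL)
            omega), mul_zero]
        rw [Finset.sum_congr rfl hterm2, Finset.sum_const, smul_zero]
  intro q
  induction q using MvPolynomial.induction_on' with
  | monomial u a => exact main u a
  | add p q hp hq => rw [add_mul, eps_add, hp, hq, add_zero]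

lemma eps_ideal {n k : ℕ} (hk : 2 ≤ k) (hnk : 2 * k < n)
    {p : MvPolynomial (Option (Fin (n-1))) (ZMod 2)} (hp : p ∈ polygonIdeal n k) :
    eps n k p = 0 := by
  let K : Ideal (MvPolynomial (Option (Fin (n-1))) (ZMod 2)) :=
    { carrier := {p | ∀ q, eps n k (q * p) = 0}
      add_mem' := fun ha hb q => by rw [mul_add, eps_add, ha q, hb q, add_zero]
      zero_mem' := fun q => by rw [mul_zero, eps_zero]
      smul_mem' := fun c x hx q => by
        rw [smul_eq_mul, ← mul_assoc]; exact hx (q * c) }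
  have h1 : polygonIdeal n k ≤ K := Ideal.span_le.mpr (fun g hg => eps_mul_rel hk hnk g hg)
  have h2 := h1 hp 1
  rwa [one_mul] at h2

/-- squarefree monomial class in the quotient -/
noncomputable def xU (n k : ℕ) (U : Finset (Fin (n - 1))) : (MvPolynomial (Option (Fin (n - 1))) (ZMod 2)) ⧸ polygonIdeal n k :=
  Ideal.Quotient.mk (polygonIdeal n k) (X none ^ (n - 3 - U.card) * ∏ i ∈ U, X (some i))

lemma mk_rel_zero {n k : ℕ} {g : MvPolynomial (Option (Fin (n - 1))) (ZMod 2)}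
    (hg : g ∈ polygonRels n k) : Ideal.Quotient.mk (polygonIdeal n k) g = 0 :=
  Ideal.Quotient.eq_zero_iff_mem.mpr (Ideal.subset_span hg)

lemma xU_zero {n k : ℕ} {U : Finset (Fin (n - 1))} (hU : k ≤ U.card) : xU n k U = 0 := by
  obtain ⟨T', hT'U, hT'⟩ := Finset.exists_subset_card_eq hU
  unfold xU
  rw [← Finset.prod_sdiff hT'U, map_mul, map_mul,
    mk_rel_zero (Or.inl (Or.inr ⟨T', hT', rfl⟩)), mul_zero, mul_zero]

/-- The derived relation (★) in the quotient. -/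
lemma star {n k : ℕ} (hk : 2 ≤ k) (hnk : 2 * k < n) (L T : Finset (Fin (n - 1)))
    (hdisj : Disjoint T L) (hL1 : n - k ≤ L.card) (hL2 : L.card ≤ n - 2)
    (hLT : L.card + T.card ≤ n - 2) :
    ∑ S ∈ L.powerset.filter (fun S => S.card ≤ k - 1), xU n k (S ∪ T) = 0 := by
  have hg : (∑ S ∈ L.powerset.filter (fun S => S.card ≤ k - 1),
      X none ^ (L.card - 1 - S.card) * ∏ i ∈ S, X (some i) :
        MvPolynomial (Option (Fin (n - 1))) (ZMod 2)) ∈ polygonRels n k :=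
    Or.inr ⟨L, ⟨hL1, hL2⟩, rfl⟩
  have key : ∀ S ∈ L.powerset.filter (fun S => S.card ≤ k - 1),
      (X none ^ (L.card - 1 - S.card) * ∏ i ∈ S, X (some i)) *
        (X none ^ (n - 2 - L.card - T.card) * ∏ i ∈ T, X (some i)) =
      (X none ^ (n - 3 - (S ∪ T).card) * ∏ i ∈ S ∪ T, X (some i) :
        MvPolynomial (Option (Fin (n - 1))) (ZMod 2)) := by
    intro S hS
    obtain ⟨hSL, hSc⟩ := Finset.mem_filter.mp hS
    have hdS : Disjoint S T := (hdisj.mono_right (Finset.mem_powerset.mp hSL)).symm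
    rw [Finset.prod_union hdS, mul_mul_mul_comm, ← pow_add]
    congr 2
    have h1 := Finset.card_le_card (Finset.mem_powerset.mp hSL)
    rw [Finset.card_union_of_disjoint hdS]
    omega
  calc ∑ S ∈ L.powerset.filter (fun S => S.card ≤ k - 1), xU n k (S ∪ T)
      = Ideal.Quotient.mk (polygonIdeal n k)
          (∑ S ∈ L.powerset.filter (fun S => S.card ≤ k - 1),
            (X none ^ (L.card - 1 - S.card) * ∏ i ∈ S, X (some i)) *
              (X none ^ (n - 2 - L.card - T.card) * ∏ i ∈ T, X (some i))) := by
        rw [map_sum]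
        exact Finset.sum_congr rfl fun S hS => by rw [key S hS]; rfl
    _ = 0 := by
        rw [← Finset.sum_mul, map_mul, mk_rel_zero hg, zero_mul]

/-- sums over powersets of functions vanishing on sets of size ≥ 2 -/
lemma sum_powerset_small {M : Type*} [AddCommMonoid M] {ι : Type*} [DecidableEq ι]
    (L : Finset ι) (f : Finset ι → M) (hf : ∀ S ⊆ L, 2 ≤ S.card → f S = 0) :
    ∑ S ∈ L.powerset, f S = f ∅ + ∑ a ∈ L, f {a} := by
  classical
  induction L using Finset.induction with
  | empty => simp
  | @insert a s ha ih =>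
    rw [Finset.sum_powerset_insert ha]
    have h2 : ∑ t ∈ s.powerset, f (insert a t) = f {a} := by
      refine Finset.sum_eq_single_of_mem ∅ (Finset.mem_powerset.mpr (Finset.empty_subset s)) ?_
      intro t ht hne
      refine hf _ ?_ ?_
      · exact Finset.insert_subset_insert a (Finset.mem_powerset.mp ht)
      · have hat : a ∉ t := fun h => ha (Finset.mem_powerset.mp ht h)
        have := Finset.card_insert_of_notMem hat
        have : 1 ≤ t.card := Finset.card_pos.mpr (Finset.nonempty_of_ne_empty hne)
        rw [Finset.card_insert_of_notMem hat]
        omega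
    rw [h2, ih (fun S hS h2c => hf S (hS.trans (Finset.subset_insert a s)) h2c),
      Finset.sum_insert ha]
    abel

lemma xU_swap {n k : ℕ} (hk : 2 ≤ k) (hnk : 2 * k < n) (W : Finset (Fin (n - 1)))
    (hW : W.card = k - 2) {i j : Fin (n - 1)} (hi : i ∉ W) (hj : j ∉ W) :
    xU n k (insert i W) = xU n k (insert j W) := by
  classical
  by_cases hij : i = j
  · rw [hij]
  have hn1 : (Finset.univ : Finset (Fin (n - 1))).card = n - 1 := by
    rw [Finset.card_univ, Fintype.card_fin]
  have hWu : W ⊆ Finset.univ := Finset.subset_univ W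
  have hcard_sd : (Finset.univ \ W).card = n - 1 - (k - 2) := by
    rw [Finset.card_sdiff_of_subset hWu, hn1, hW]
  -- the key relation for b ∉ W
  have hrel : ∀ b : Fin (n - 1), b ∉ W →
      xU n k W + ∑ a ∈ (Finset.univ \ W).erase b, xU n k (insert a W) = 0 := by
    intro b hb
    have hbmem : b ∈ Finset.univ \ W := Finset.mem_sdiff.mpr ⟨Finset.mem_univ b, hb⟩
    set L := (Finset.univ \ W).erase b with hLdef
    have hLcard : L.card = n - k := by
      rw [hLdef, Finset.card_erase_of_mem hbmem, hcard_sd]; omega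
    have hdisj : Disjoint W L := by
      refine Finset.disjoint_left.mpr fun x hxW hxL => ?_
      have := Finset.mem_sdiff.mp (Finset.mem_of_mem_erase hxL)
      exact this.2 hxW
    have hstar := star hk hnk L W hdisj (by omega) (by omega) (by rw [hLcard, hW]; omega)
    -- drop the filter
    have hfull : ∑ S ∈ L.powerset.filter (fun S => S.card ≤ k - 1), xU n k (S ∪ W)
        = ∑ S ∈ L.powerset, xU n k (S ∪ W) := by
      rw [Finset.sum_filter]
      refine Finset.sum_congr rfl fun S hS => ?_
      by_cases h : S.card ≤ k - 1
      · rw [if_pos h]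
      · rw [if_neg h, xU_zero ?_]
        calc k ≤ S.card := by omega
          _ ≤ (S ∪ W).card := Finset.card_le_card Finset.subset_union_left
    rw [hfull] at hstar
    have hsmall : ∀ S ⊆ L, 2 ≤ S.card → xU n k (S ∪ W) = 0 := by
      intro S hSL h2
      refine xU_zero ?_
      have hdS : Disjoint S W := (hdisj.mono_right hSL).symm
      rw [Finset.card_union_of_disjoint hdS, hW]
      omega
    rw [sum_powerset_small L _ hsmall, Finset.empty_union] at hstar
    have : ∀ a ∈ L, xU n k ({a} ∪ W) = xU n k (insert a W) := by
      intro a _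
      rw [← Finset.insert_eq]
    rwa [Finset.sum_congr rfl this] at hstar
  -- apply to b = i and b = j, subtract
  set K := (Finset.univ \ W) \ {i, j} with hKdef
  have hKi : (Finset.univ \ W).erase i = insert j K := by
    ext x
    simp only [hKdef, Finset.mem_erase, Finset.mem_sdiff, Finset.mem_insert,
      Finset.mem_univ, true_and, Finset.mem_singleton, Finset.mem_insert]
    constructor
    · rintro ⟨hxi, hxW⟩
      by_cases hxj : x = j
      · exact Or.inl hxj
      · exact Or.inr ⟨hxW, by tauto⟩
    · rintro (rfl | ⟨hxW, hx⟩)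
      · exact ⟨fun h => hij h.symm, hj⟩
      · exact ⟨by tauto, hxW⟩
  have hKj : (Finset.univ \ W).erase j = insert i K := by
    ext x
    simp only [hKdef, Finset.mem_erase, Finset.mem_sdiff, Finset.mem_insert,
      Finset.mem_univ, true_and, Finset.mem_singleton, Finset.mem_insert]
    constructor
    · rintro ⟨hxj, hxW⟩
      by_cases hxi : x = i
      · exact Or.inl hxi
      · exact Or.inr ⟨hxW, by tauto⟩
    · rintro (rfl | ⟨hxW, hx⟩)
      · exact ⟨hij, hi⟩
      · exact ⟨by tauto, hxW⟩
  have hjK : j ∉ K := by simp [hKdef]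
  have hiK : i ∉ K := by simp [hKdef]
  have h1 := hrel i hi
  have h2 := hrel j hj
  rw [hKi, Finset.sum_insert hjK] at h1
  rw [hKj, Finset.sum_insert hiK] at h2
  have h3 : xU n k W + (xU n k (insert j W) + ∑ a ∈ K, xU n k (insert a W))
      = xU n k W + (xU n k (insert i W) + ∑ a ∈ K, xU n k (insert a W)) := by
    rw [h1, h2]
  exact (add_right_cancel (add_left_cancel h3)).symm

lemma eq_of_add_eq_zero {M : Type*} [AddCommGroup M] [Module (ZMod 2) M]
    {a b : M} (h : a + b = 0) : a = b := by
  have h2 := addSelf b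
  exact add_right_cancel (h.trans h2.symm)

lemma rel1A {n k : ℕ} (i : Fin (n - 1)) :
    Ideal.Quotient.mk (polygonIdeal n k) (X (some i)) * Ideal.Quotient.mk (polygonIdeal n k) (X (some i))
    = Ideal.Quotient.mk (polygonIdeal n k) (X (some i)) * Ideal.Quotient.mk (polygonIdeal n k) (X none) := by
  have h := mk_rel_zero (n := n) (k := k) (Or.inl (Or.inl ⟨i, rfl⟩))
  rw [map_add, map_mul, map_pow] at h
  have := eq_of_add_eq_zero h
  rw [pow_two] at this
  exact this

lemma Vpow {n k : ℕ} (i : Fin (n - 1)) (e : ℕ) :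
    (Ideal.Quotient.mk (polygonIdeal n k) (X (some i))) ^ (e + 1)
    = Ideal.Quotient.mk (polygonIdeal n k) (X (some i)) *
        (Ideal.Quotient.mk (polygonIdeal n k) (X none)) ^ e := by
  induction e with
  | zero => rw [pow_one, pow_zero, mul_one]
  | succ e ih =>
    calc (Ideal.Quotient.mk (polygonIdeal n k) (X (some i))) ^ (e + 1 + 1)
        = (Ideal.Quotient.mk (polygonIdeal n k) (X (some i)) *
            (Ideal.Quotient.mk (polygonIdeal n k) (X none)) ^ e) *
            Ideal.Quotient.mk (polygonIdeal n k) (X (some i)) := by rw [pow_succ, ih]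
      _ = (Ideal.Quotient.mk (polygonIdeal n k) (X (some i)) *
            Ideal.Quotient.mk (polygonIdeal n k) (X (some i))) *
            (Ideal.Quotient.mk (polygonIdeal n k) (X none)) ^ e := by ring
      _ = (Ideal.Quotient.mk (polygonIdeal n k) (X (some i)) *
            Ideal.Quotient.mk (polygonIdeal n k) (X none)) *
            (Ideal.Quotient.mk (polygonIdeal n k) (X none)) ^ e := by rw [rel1A]
      _ = Ideal.Quotient.mk (polygonIdeal n k) (X (some i)) *
            (Ideal.Quotient.mk (polygonIdeal n k) (X none)) ^ (e + 1) := by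
          rw [pow_succ]; ring

lemma mk_monomial {n k : ℕ} (hk : 2 ≤ k) (hnk : 2 * k < n)
    (σ : Option (Fin (n-1)) →₀ ℕ) (hσ : deg σ = n - 3) :
    Ideal.Quotient.mk (polygonIdeal n k) (monomial σ 1) = xU n k (vsupp σ) := by
  classical
  set mk := Ideal.Quotient.mk (polygonIdeal n k) with hmk
  set T := vsupp σ with hT
  -- expand the monomial as a product over the support
  have h1 : (monomial σ (1 : ZMod 2)) = ∏ o ∈ σ.support, X o ^ σ o := by
    rw [monomial_eq, C_1, one_mul]
    rfl
  rw [h1, map_prod]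
  -- split off the `none` part
  rw [← Finset.prod_filter_mul_prod_filter_not σ.support (fun o => o = none)]
  have h2 : ∏ o ∈ σ.support.filter (fun o => o = none), mk (X o ^ σ o)
      = mk (X none) ^ (σ none) := by
    by_cases hnone : σ none = 0
    · rw [(show σ.support.filter (fun o => o = none) = ite (none ∈ σ.support) {none} ∅ from by convert Finset.filter_eq' σ.support none)]
      rw [if_neg (by rwa [Finsupp.mem_support_iff, not_not])]
      rw [Finset.prod_empty, hnone, pow_zero]
    · rw [(show σ.support.filter (fun o => o = none) = ite (none ∈ σ.support) {none} ∅ from by convert Finset.filter_eq' σ.support none),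
        if_pos (Finsupp.mem_support_iff.mpr hnone), Finset.prod_singleton, map_pow]
  rw [h2]
  -- the rest of the product
  have h3 : σ.support.filter (fun o => ¬ o = none) = T.image some := by
    ext o
    cases o with
    | none => simp
    | some j =>
      simp only [Finset.mem_filter, Finsupp.mem_support_iff, Finset.mem_image, hT, vsupp,
        Finset.mem_filter, Finset.mem_univ, true_and]
      constructor
      · rintro ⟨hne, -⟩; exact ⟨j, hne, rfl⟩
      · rintro ⟨j', hj', he⟩
        cases he
        exact ⟨hj', by simp⟩
  have hinj : Set.InjOn some (T : Set (Fin (n-1))) := fun a _ b _ h => Option.some_injective _ h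
  rw [h3, Finset.prod_image (fun a ha b hb h => hinj ha hb h)]
  -- rewrite each factor using Vpow
  have h4 : ∀ j ∈ T, mk (X (some j)) ^ σ (some j)
      = mk (X (some j)) * mk (X none) ^ (σ (some j) - 1) := by
    intro j hj
    have hj1 : σ (some j) ≠ 0 := by
      rw [hT, vsupp] at hj
      exact (Finset.mem_filter.mp hj).2
    have h5 : σ (some j) = (σ (some j) - 1) + 1 := by omega
    rw [hmk]
    conv_lhs => rw [h5]
    exact Vpow j (σ (some j) - 1)
  have h5 : ∀ o, mk (X o ^ σ o) = mk (X o) ^ σ o := fun o => map_pow mk (X o) (σ o)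
  rw [Finset.prod_congr rfl (fun j hj => (h5 (some j)).trans (h4 j hj)),
    Finset.prod_mul_distrib, Finset.prod_pow_eq_pow_sum]
  -- exponent bookkeeping
  have hsum1 : ∑ j ∈ T, σ (some j) = ∑ j : Fin (n-1), σ (some j) := by
    refine Finset.sum_subset (Finset.subset_univ T) fun j _ hj => ?_
    rw [hT, vsupp] at hj
    simp only [Finset.mem_filter, Finset.mem_univ, true_and, not_not] at hj
    exact hj
  have hsum2 : ∑ j ∈ T, (σ (some j) - 1) + T.card = ∑ j ∈ T, σ (some j) := by
    rw [Finset.card_eq_sum_ones, ← Finset.sum_add_distrib]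
    refine Finset.sum_congr rfl fun j hj => ?_
    have hj1 : σ (some j) ≠ 0 := by
      rw [hT, vsupp] at hj
      exact (Finset.mem_filter.mp hj).2
    omega
  have hdeg : σ none + ∑ j : Fin (n-1), σ (some j) = n - 3 := hσ
  have hTdeg : T.card ≤ ∑ j ∈ T, σ (some j) := by
    rw [Finset.card_eq_sum_ones]
    refine Finset.sum_le_sum fun j hj => ?_
    have hj1 : σ (some j) ≠ 0 := by
      rw [hT, vsupp] at hj
      exact (Finset.mem_filter.mp hj).2
    omega
  have hexp : σ none + ∑ j ∈ T, (σ (some j) - 1) = n - 3 - T.card := by omega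
  calc mk (X none) ^ σ none *
        ((∏ j ∈ T, mk (X (some j))) * mk (X none) ^ (∑ j ∈ T, (σ (some j) - 1)))
      = mk (X none) ^ (σ none + ∑ j ∈ T, (σ (some j) - 1)) * ∏ j ∈ T, mk (X (some j)) := by
        rw [pow_add]; ring
    _ = mk (X none) ^ (n - 3 - T.card) * ∏ j ∈ T, mk (X (some j)) := by rw [hexp]
    _ = xU n k T := by
        rw [xU, map_mul, map_pow, map_prod, hmk]

/-- all squarefree top classes with |U| = k-1 agree -/
lemma xU_eq_of_card {n k : ℕ} (hk : 2 ≤ k) (hnk : 2 * k < n) :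
    ∀ d (U U' : Finset (Fin (n - 1))), (U' \ U).card = d →
      U.card = k - 1 → U'.card = k - 1 → xU n k U = xU n k U' := by
  intro d
  induction d using Nat.strong_induction_on with
  | _ d ih =>
    intro U U' hd hU hU'
    rcases Nat.eq_zero_or_pos d with h0 | hpos
    · have hsub : U' ⊆ U := by
        rw [← Finset.sdiff_eq_empty_iff_subset]
        exact Finset.card_eq_zero.mp (by omega)
      rw [Finset.eq_of_subset_of_card_le hsub (by omega)]
    · obtain ⟨i, hi⟩ := Finset.card_pos.mp (by omega : 0 < (U' \ U).card)
      have hiU' : i ∈ U' := (Finset.mem_sdiff.mp hi).1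
      have hiU : i ∉ U := (Finset.mem_sdiff.mp hi).2
      have hUU' : (U \ U').card = d := by
        rw [Finset.card_sdiff_comm (by omega)]; exact hd
      obtain ⟨j, hj⟩ := Finset.card_pos.mp (by omega : 0 < (U \ U').card)
      have hjU : j ∈ U := (Finset.mem_sdiff.mp hj).1
      have hjU' : j ∉ U' := (Finset.mem_sdiff.mp hj).2
      set W := U.erase j with hWdef
      have hWcard : W.card = k - 2 := by
        rw [hWdef, Finset.card_erase_of_mem hjU]; omega
      have hiW : i ∉ W := fun h => hiU (Finset.mem_of_mem_erase h)
      have hjW : j ∉ W := Finset.notMem_erase j U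
      have h1 : xU n k U = xU n k (insert i W) := by
        conv_lhs => rw [show U = insert j W from (Finset.insert_erase hjU).symm]
        exact xU_swap hk hnk W hWcard hjW hiW
      set U'' := insert i W with hU''def
      have hU''card : U''.card = k - 1 := by
        rw [hU''def, Finset.card_insert_of_notMem hiW, hWcard]; omega
      have hsub : U' \ U'' ⊆ (U' \ U).erase i := by
        intro x hx
        obtain ⟨hx1, hx2⟩ := Finset.mem_sdiff.mp hx
        rw [Finset.mem_erase, Finset.mem_sdiff]
        refine ⟨?_, hx1, ?_⟩
        · rintro rfl; exact hx2 (Finset.mem_insert_self x W)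
        · intro hxU
          by_cases hxj : x = j
          · subst hxj; exact hjU' hx1
          · exact hx2 (Finset.mem_insert_of_mem (Finset.mem_erase.mpr ⟨hxj, hxU⟩))
      have hlt : (U' \ U'').card < d := by
        calc (U' \ U'').card ≤ ((U' \ U).erase i).card := Finset.card_le_card hsub
          _ = d - 1 := by rw [Finset.card_erase_of_mem hi, hd]
          _ < d := by omega
      rw [h1]
      exact ih _ hlt U'' U' rfl hU''card hU'
/-- Step 3 -/
lemma xU_red {n k : ℕ} (hk : 2 ≤ k) (hnk : 2 * k < n) (S₀ : Finset (Fin (n - 1)))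
    (hS₀ : S₀.card = k - 1) :
    ∀ m (U : Finset (Fin (n - 1))), U.card ≤ k - 1 → k - 1 - U.card ≤ m →
      xU n k U = cc n k U.card • xU n k S₀ := by
  intro m
  induction m with
  | zero =>
    intro U hU1 hU2
    have hcard : U.card = k - 1 := by omega
    have hcc : cc n k U.card = 1 := by
      unfold cc
      rw [hcard, show n - 2 - (k - 1) = n - 1 - k  from by omega, Nat.choose_self]
      exact Nat.cast_one
    rw [hcc, one_smul]
    exact xU_eq_of_card hk hnk (S₀ \ U).card U S₀ rfl hcard hS₀
  | succ m ih =>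
    intro U hU1 hU2
    by_cases hle : k - 1 - U.card ≤ m
    · exact ih U hU1 hle
    have hcard : U.card = k - 1 - (m + 1) := by omega
    have hUm : U.card ≤ k - 2 := by omega
    -- choose L disjoint from U with |L| = n - 2 - |U|
    have hcompl : n - 2 - U.card ≤ (Finset.univ \ U).card := by
      rw [Finset.card_sdiff_of_subset (Finset.subset_univ U), Finset.card_univ, Fintype.card_fin]
      omega
    obtain ⟨L, hLsub, hLcard⟩ := Finset.exists_subset_card_eq hcompl
    have hdisj : Disjoint U L := by
      refine Finset.disjoint_left.mpr fun x hxU hxL => ?_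
      exact (Finset.mem_sdiff.mp (hLsub hxL)).2 hxU
    have hL1 : n - k ≤ L.card := by rw [hLcard]; omega
    have hL2 : L.card ≤ n - 2 := by rw [hLcard]; omega
    have hstar := star hk hnk L U hdisj hL1 hL2 (by rw [hLcard]; omega)
    have hmem : ∅ ∈ L.powerset.filter (fun S => S.card ≤ k - 1) :=
      Finset.mem_filter.mpr ⟨Finset.mem_powerset.mpr (Finset.empty_subset L), by simp⟩
    rw [← Finset.add_sum_erase _ _ hmem, Finset.empty_union] at hstar
    have hterm : ∀ S ∈ (L.powerset.filter (fun S => S.card ≤ k - 1)).erase ∅,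
        xU n k (S ∪ U) = cc n k ((U ∪ S).card) • xU n k S₀ := by
      intro S hS
      obtain ⟨hSne, hSfil⟩ := Finset.mem_erase.mp hS
      obtain ⟨hSL, hSc⟩ := Finset.mem_filter.mp hSfil
      have hdS : Disjoint S U := (hdisj.mono_right (Finset.mem_powerset.mp hSL)).symm
      have hcardSU : (S ∪ U).card = S.card + U.card := Finset.card_union_of_disjoint hdS
      have hSpos : 1 ≤ S.card := Finset.card_pos.mpr (Finset.nonempty_of_ne_empty hSne)
      have hUS : (U ∪ S).card = (S ∪ U).card := by rw [Finset.union_comm]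
      by_cases hbig : k ≤ (S ∪ U).card
      · rw [xU_zero hbig, hUS, cc_eq_zero hk hnk hbig, zero_smul]
      · rw [hUS]
        refine ih (S ∪ U) (by omega) (by omega)
    rw [Finset.sum_congr rfl hterm, ← Finset.sum_smul] at hstar
    -- the coefficient sum equals cc n k U.card
    have hcsum := lemmaC U L hk hnk hL1 hL2 (by omega)
    rw [← Finset.add_sum_erase _ _ hmem, Finset.union_empty] at hcsum
    have hcoeff : ∑ S ∈ (L.powerset.filter (fun S => S.card ≤ k - 1)).erase ∅,
        cc n k ((U ∪ S).card) = cc n k U.card := by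
      have h2 := addSelf (cc n k U.card)
      -- hcsum : cc U.card + Σ = 0 = cc + cc  ⇒ Σ = cc
      have := hcsum.trans h2.symm
      exact add_left_cancel this
    rw [hcoeff] at hstar
    -- hstar : xU U + cc • xU S₀ = 0
    have h2 := addSelf (cc n k U.card • xU n k S₀)
    have := hstar.trans h2.symm
    rw [hcard] at this ⊢
    exact add_right_cancel this



lemma deg_eq_degree {n : ℕ} (σ : Option (Fin (n-1)) →₀ ℕ) : Finsupp.degree σ = deg σ := by
  rw [Finsupp.degree_apply, deg]
  rw [Finset.sum_subset (Finset.subset_univ σ.support)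
    (fun o _ ho => Finsupp.notMem_support_iff.mp ho)]
  exact Fintype.sum_option σ

lemma repU {n : ℕ} (e : ℕ) (T : Finset (Fin (n-1))) :
    (X none ^ e * ∏ i ∈ T, X (some i) : MvPolynomial (Option (Fin (n-1))) (ZMod 2))
      = monomial (Finsupp.single none e + tt T) 1 := by
  rw [prodX, X_pow_eq_monomial, monomial_mul, one_mul]

lemma cast_eq_one_iff_odd (m : ℕ) : ((m : ZMod 2) = 1) ↔ Odd m := by
  rw [Nat.odd_iff, ← ZMod.natCast_mod m 2]
  rcases Nat.mod_two_eq_zero_or_one m with h | h <;> rw [h] <;> decide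

theorem main (n k : ℕ) (hk : 2 ≤ k) (hnk : 2 * k < n) :
    Module.finrank (ZMod 2) (homComponent n k (n - 3)) = 1 ∧
    ∀ S : Finset (Fin (n - 1)), S.card ≤ k - 1 →
      ((Ideal.Quotient.mk (polygonIdeal n k)
          (X none ^ (n - 3 - S.card) * ∏ i ∈ S, X (some i)) ≠ 0) ↔
        Odd (Nat.choose (n - 2 - S.card) (k - 1 - S.card))) := by
  classical
  obtain ⟨S₀, hS₀sub, hS₀⟩ := Finset.exists_subset_card_eq
    (show k - 1 ≤ (Finset.univ : Finset (Fin (n-1))).card by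
      rw [Finset.card_univ, Fintype.card_fin]; omega)
  set μ := xU n k S₀ with hμdef
  -- μ is nonzero, via the ε functional
  have hμrep : (X none ^ (n - 3 - S₀.card) * ∏ i ∈ S₀, X (some i) :
      MvPolynomial (Option (Fin (n-1))) (ZMod 2))
      = monomial (Finsupp.single none (n - 3 - S₀.card) + tt S₀) 1 := repU _ _
  have hdegμ : deg (Finsupp.single (none : Option (Fin (n-1))) (n - 3 - S₀.card) + tt S₀)
      = n - 3 := by
    rw [deg_add, deg_single_none, deg_tt, hS₀]; omega
  have hvsuppμ : vsupp (Finsupp.single (none : Option (Fin (n-1))) (n - 3 - S₀.card) + tt S₀)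
      = S₀ := by
    rw [vsupp_add, vsupp_single_none, vsupp_tt, Finset.empty_union]
  have hμne : μ ≠ 0 := by
    intro h
    rw [hμdef, xU, Ideal.Quotient.eq_zero_iff_mem] at h
    have he := eps_ideal hk hnk h
    rw [hμrep, eps_monomial, one_mul, ww, if_pos hdegμ, hvsuppμ, hS₀, cc] at he
    rw [show n - 2 - (k - 1) = n - 1 - k from by omega, Nat.choose_self] at he
    exact one_ne_zero (by rwa [Nat.cast_one] at he)
  -- every squarefree class is a multiple of μ
  have hred : ∀ U : Finset (Fin (n-1)), xU n k U = cc n k U.card • μ := by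
    intro U
    by_cases h : U.card ≤ k - 1
    · exact xU_red hk hnk S₀ hS₀ (k-1) U h (by omega)
    · rw [xU_zero (by omega), cc_eq_zero hk hnk (by omega), zero_smul]
  -- the span description of the top component
  have hspan : homComponent n k (n - 3) = Submodule.span (ZMod 2) {μ} := by
    apply le_antisymm
    · rintro x ⟨p, hp, rfl⟩
      have hp' : p.IsHomogeneous (n - 3) := hp
      have hmksum : (Ideal.Quotient.mkₐ (ZMod 2) (polygonIdeal n k)).toLinearMap p
          = ∑ v ∈ p.support, (coeff v p) •
              Ideal.Quotient.mk (polygonIdeal n k) (monomial v 1) := by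
        conv_lhs => rw [p.as_sum]
        rw [map_sum]
        refine Finset.sum_congr rfl fun v hv => ?_
        have : monomial v (coeff v p) = (coeff v p) • monomial v 1 := by
          rw [MvPolynomial.smul_monomial, smul_eq_mul, mul_one]
        rw [this, map_smul]
        rfl
      rw [hmksum]
      refine Submodule.sum_mem _ fun v hv => Submodule.smul_mem _ _ ?_
      have hdv : deg v = n - 3 := by
        rw [← deg_eq_degree, Finsupp.degree_eq_weight_one]
        exact hp' (MvPolynomial.mem_support_iff.mp hv)
      rw [mk_monomial hk hnk v hdv, hred]
      exact Submodule.smul_mem _ _ (Submodule.mem_span_singleton_self μ)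
    · rw [Submodule.span_le, Set.singleton_subset_iff]
      refine ⟨X none ^ (n - 3 - S₀.card) * ∏ i ∈ S₀, X (some i), ?_, ?_⟩
      · show MvPolynomial.IsHomogeneous _ (n - 3)
        rw [hμrep]
        exact isHomogeneous_monomial 1 (by rw [deg_eq_degree]; exact hdegμ)
      · rfl
  constructor
  · rw [hspan]
    exact finrank_span_singleton hμne
  · intro S hS
    have hxu : Ideal.Quotient.mk (polygonIdeal n k)
        (X none ^ (n - 3 - S.card) * ∏ i ∈ S, X (some i)) = xU n k S := rfl
    have hsymm : Nat.choose (n - 2 - S.card) (k - 1 - S.card)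
        = Nat.choose (n - 2 - S.card) (n - 1 - k) := by
      rw [← Nat.choose_symm (show k - 1 - S.card ≤ n - 2 - S.card by omega)]
      congr 1
      omega
    rw [hxu, hred S, hsymm]
    have h01 : cc n k S.card = 0 ∨ cc n k S.card = 1 := by
      rcases (cc n k S.card) with ⟨v, hv⟩
      interval_cases v
      · exact Or.inl rfl
      · exact Or.inr rfl
    rcases h01 with h0 | h1
    · rw [h0, zero_smul]
      simp only [ne_eq, not_true_eq_false, false_iff]
      rw [← cast_eq_one_iff_odd]
      rw [cc] at h0
      rw [h0]
      decide
    · rw [h1, one_smul]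
      have : Odd (Nat.choose (n - 2 - S.card) (n - 1 - k)) := by
        rw [← cast_eq_one_iff_odd]
        rw [cc] at h1
        exact h1
      simp only [ne_eq, this, iff_true]
      exact hμne

end PolyTop

/-- The degree-`(n−3)` component of `A_{n,k}` is a one-dimensional `F₂`-vector space,
and the image of the monomial `R^{n−3−|S|}·∏_{i∈S} V_i` (for `|S| ≤ k−1`) is nonzero
iff the binomial coefficient `C(n−2−|S|, k−1−|S|)` is odd.  Here the subset
`S ⊆ {1,…,n−1}` is realized as `S : Finset (Fin (n-1))`, with `i ∈ S` corresponding
to `V_{i+1}`, i.e. the variable `X (some i)`. -/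
theorem top_component_rank_one (n k : ℕ) (hk : 2 ≤ k) (hnk : 2 * k < n) :
    Module.finrank (ZMod 2) (homComponent n k (n - 3)) = 1 ∧
    ∀ S : Finset (Fin (n - 1)), S.card ≤ k - 1 →
      ((Ideal.Quotient.mk (polygonIdeal n k)
          (X none ^ (n - 3 - S.card) * ∏ i ∈ S, X (some i)) ≠ 0) ↔
        Odd (Nat.choose (n - 2 - S.card) (k - 1 - S.card))) := by
  exact PolyTop.main n k hk hnk
end

section
/- Let n and k be integers with 2 ≤ k and n > 2k, and let A = A_{n,k}. There exists an F₂-linear map φ₂ from the homogeneous degree-(n−4) component of A to F₂ such that for every subset S ⊆ {1,…,n−1} with |S| ≤ min(k−1, n−4), φ₂ sends the class of the monomial R^{n−4−|S|}·∏_{i∈S} V_i to the residue of the binomial coefficient C(n−2−|S|, k−1−|S|) modulo 2. -/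
open MvPolynomial
open scoped TensorProduct

open Finset

noncomputable def Bser : PowerSeries (ZMod 2) := PowerSeries.mk (fun _ => (1 : ZMod 2))

lemma one_add_X_mul_B : ((1 + PowerSeries.X) * Bser : PowerSeries (ZMod 2)) = 1 := by
  ext n
  cases n with
  | zero => simp [Bser, PowerSeries.coeff_zero_eq_constantCoeff]
  | succ m =>
    rw [add_mul, one_mul, map_add, PowerSeries.coeff_succ_X_mul, Bser, PowerSeries.coeff_mk, PowerSeries.coeff_mk, PowerSeries.coeff_one]
    simp [CharTwo.add_self_eq_zero]

lemma choose_symm' (a b : ℕ) : (a + b).choose a = (a + b).choose b := by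
  rw [← Nat.choose_symm (Nat.le_add_right a b)]
  congr 1
  omega

@[simp] lemma coeff_Bser (n : ℕ) : PowerSeries.coeff (R := ZMod 2) n Bser = 1 := PowerSeries.coeff_mk _ _

lemma coeff_B_pow (q : ℕ) : ∀ r : ℕ,
    PowerSeries.coeff (R := ZMod 2) r (Bser ^ (q + 1)) = ((q + r).choose r : ZMod 2) := by
  induction q with
  | zero => intro r; simp [Bser]
  | succ q ih =>
    intro r
    rw [pow_succ, PowerSeries.coeff_mul, Nat.sum_antidiagonal_eq_sum_range_succ_mk]
    simp only [coeff_Bser, mul_one]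
    rw [Finset.sum_congr rfl (fun i _ => ih i)]
    have hs : ∑ i ∈ range (r+1), ((q + i).choose i) = (q + 1 + r).choose r := by
      have h1 : ∀ i ∈ range (r+1), (q+i).choose i = (q+i).choose q := fun i _ => by
        rw [add_comm q i]; exact choose_symm' i q
      rw [Finset.sum_congr rfl h1]
      have h2 := Nat.sum_Icc_choose (q + r) q
      have h4 : ∑ x ∈ range (r + 1), (q + x).choose q = ∑ m ∈ Icc q (q + r), m.choose q := by
        refine Finset.sum_nbij' (fun x => q + x) (fun m => m - q) ?_ ?_ ?_ ?_ ?_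
        · intro a ha; simp only [mem_range] at ha; simp only [mem_Icc]; omega
        · intro a ha; simp only [mem_Icc] at ha; simp only [mem_range]; omega
        · intro a ha; simp only [mem_range] at ha; show q + a - q = a; omega
        · intro a ha; simp only [mem_Icc] at ha; show q + (a - q) = a; omega
        · intro a ha; rfl
      rw [h4, h2, show q + r + 1 = (q+1) + r by omega, choose_symm' (q+1) r]
    rw [← hs]
    push_cast
    rfl

lemma coeff_one_add_X_pow' (m b : ℕ) :
    PowerSeries.coeff (R := ZMod 2) b ((1 + PowerSeries.X) ^ m) = (m.choose b : ZMod 2) := by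
  have : ((1 + PowerSeries.X : PowerSeries (ZMod 2)) ^ m) = ((((1 + Polynomial.X) ^ m : Polynomial (ZMod 2))) : PowerSeries (ZMod 2)) := by
    push_cast
    rfl
  rw [this, Polynomial.coeff_coe, Polynomial.coeff_one_add_X_pow]

lemma key_sum (q e r : ℕ) (hq : 1 ≤ q) (her : e < r) :
    ∑ b ∈ range (r + 1),
      ((q + e).choose b : ZMod 2) * ((q - 1 + (r - b)).choose (r - b) : ZMod 2) = 0 := by
  have h1 : ((1 + PowerSeries.X) ^ (q + e) * Bser ^ q : PowerSeries (ZMod 2)) = (1 + PowerSeries.X) ^ e := by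
    rw [add_comm q e, pow_add, mul_assoc, ← mul_pow, one_add_X_mul_B, one_pow, mul_one]
  have h2 := congrArg (PowerSeries.coeff (R := ZMod 2) r) h1
  rw [PowerSeries.coeff_mul, Nat.sum_antidiagonal_eq_sum_range_succ_mk, coeff_one_add_X_pow',
    Nat.choose_eq_zero_of_lt her] at h2
  push_cast at h2
  rw [← h2]
  refine Finset.sum_congr rfl fun b _ => ?_
  rw [coeff_one_add_X_pow']
  congr 1
  obtain ⟨q', rfl⟩ : ∃ q', q = q' + 1 := ⟨q - 1, by omega⟩
  rw [coeff_B_pow]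
  norm_num

noncomputable def Fw (n k j : ℕ) : ZMod 2 :=
  if j ≤ k - 1 then ((n - 2 - j).choose (k - 1 - j) : ZMod 2) else 0

lemma comb_sum {ι : Type*} [DecidableEq ι] (n k : ℕ) (hk : 2 ≤ k) (hn : 2 * k < n)
    (L T : Finset ι) (hL : n - k ≤ L.card) (hu : T.card + L.card ≤ n - 3) :
    ∑ S ∈ L.powerset, Fw n k ((S ∪ T).card) = 0 := by
  by_cases hLT : (L ∩ T).Nonempty
  · obtain ⟨i₀, hi₀⟩ := hLT
    rw [Finset.mem_inter] at hi₀
    refine Finset.sum_involution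
      (fun S _ => if i₀ ∈ S then S.erase i₀ else insert i₀ S) ?_ ?_ ?_ ?_
    · intro S hS
      have hun : (if i₀ ∈ S then S.erase i₀ else insert i₀ S) ∪ T = S ∪ T := by
        have h2 := hi₀.2
        split <;> rename_i h <;> ext x <;>
          simp only [Finset.mem_union, Finset.mem_erase, Finset.mem_insert] <;>
          (by_cases hxi : x = i₀
           · subst hxi; tauto
           · tauto)
      rw [hun]
      exact CharTwo.add_self_eq_zero _
    · intro S hS hne
      split <;> rename_i h
      · intro heq; exact (Finset.erase_eq_self.mp heq) h
      · intro heq; exact h (Finset.insert_eq_self.mp heq)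
    · intro S hS
      simp only [Finset.mem_powerset] at hS ⊢
      split <;> rename_i h
      · exact (Finset.erase_subset _ _).trans hS
      · exact Finset.insert_subset hi₀.1 hS
    · intro S hS
      by_cases h : i₀ ∈ S
      · rw [if_pos h, if_neg (Finset.notMem_erase _ _), Finset.insert_erase h]
      · rw [if_neg h, if_pos (Finset.mem_insert_self _ _), Finset.erase_insert h]
  · have hdisj : Disjoint L T := by
      rw [Finset.disjoint_iff_inter_eq_empty]
      exact Finset.not_nonempty_iff_eq_empty.mp hLT
    have h1 : ∀ S ∈ L.powerset, Fw n k ((S ∪ T).card) = Fw n k (S.card + T.card) := by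
      intro S hS
      rw [Finset.card_union_of_disjoint
        (Finset.disjoint_of_subset_left (Finset.mem_powerset.mp hS) hdisj)]
    rw [Finset.sum_congr rfl h1, Finset.sum_powerset]
    have h2 : ∀ j ∈ Finset.range (L.card + 1),
        ∑ S ∈ Finset.powersetCard j L, Fw n k (S.card + T.card)
          = (L.card.choose j : ZMod 2) * Fw n k (j + T.card) := by
      intro j _
      rw [Finset.sum_congr rfl (fun S hS => by
        rw [(Finset.mem_powersetCard.mp hS).2]), Finset.sum_const,
        Finset.card_powersetCard, nsmul_eq_mul]
    rw [Finset.sum_congr rfl h2]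
    -- now reduce to key_sum
    set ℓ := L.card with hℓ
    set u := T.card with huu
    have hrange : Finset.range (k - 1 - u + 1) ⊆ Finset.range (ℓ + 1) :=
      Finset.range_subset_range.mpr (by omega)
    rw [← Finset.sum_subset hrange (fun j _ hj => by
      rw [Fw, if_neg (by simp only [Finset.mem_range] at hj; omega), mul_zero])]
    have h3 : ∀ j ∈ Finset.range (k - 1 - u + 1),
        (ℓ.choose j : ZMod 2) * Fw n k (j + u)
          = ((n - k + (ℓ - (n - k))).choose j : ZMod 2)
            * (((n - k) - 1 + ((k - 1 - u) - j)).choose ((k - 1 - u) - j) : ZMod 2) := by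
      intro j hj
      simp only [Finset.mem_range] at hj
      rw [Fw, if_pos (by omega), show n - k + (ℓ - (n - k)) = ℓ by omega,
        show (n - k) - 1 + ((k - 1 - u) - j) = n - 2 - (j + u) by omega,
        show (k - 1 - u) - j = k - 1 - (j + u) by omega]
    rw [Finset.sum_congr rfl h3]
    exact key_sum (n - k) (ℓ - (n - k)) (k - 1 - u) (by omega) (by omega)

open MvPolynomial
open MvPolynomial Finset

-- helper degree lemmas
lemma deg_add {σ : Type*} (d e : σ →₀ ℕ) :
    (d + e).degree = d.degree + e.degree := by
  simp only [Finsupp.degree_eq_weight_one, map_add]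

lemma deg_single {σ : Type*} (a : σ) (b : ℕ) : (Finsupp.single a b).degree = b := by
  by_cases hb : b = 0
  · simp [hb, Finsupp.degree]
  · exact Finsupp.degree_single a b

lemma deg_eS {ι σ : Type*} (S : Finset ι) (f : ι → σ) :
    (∑ i ∈ S, Finsupp.single (f i) 1).degree = S.card := by
  simp only [Finsupp.degree_eq_weight_one, map_sum]
  rw [Finset.sum_congr rfl (fun i _ => by
    rw [← Finsupp.degree_eq_weight_one, deg_single]), Finset.sum_const, smul_eq_mul, mul_one]

lemma eS_apply {ι σ : Type*} [DecidableEq ι] [DecidableEq σ] (S : Finset ι) (f : ι → σ)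
    (hf : Function.Injective f) (j : ι) :
    (∑ i ∈ S, Finsupp.single (f i) 1) (f j) = if j ∈ S then 1 else 0 := by
  rw [Finsupp.finset_sum_apply]
  rw [Finset.sum_congr rfl (fun i _ => Finsupp.single_apply)]
  simp only [hf.eq_iff]
  exact Finset.sum_ite_eq' S j (fun _ => 1)

lemma eS_apply_none {ι : Type*} {m : ℕ} (S : Finset ι) (f : ι → Fin m) :
    (∑ i ∈ S, Finsupp.single (some (f i) : Option (Fin m)) 1) none = 0 := by
  rw [Finsupp.finset_sum_apply]
  exact Finset.sum_eq_zero fun i _ => by simp [Finsupp.single_apply]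

lemma prod_X_eq_monomial'' {ι σ : Type*} [DecidableEq ι] (S : Finset ι) (f : ι → σ) :
    ∏ i ∈ S, (X (f i) : MvPolynomial σ (ZMod 2)) =
      monomial (∑ i ∈ S, Finsupp.single (f i) 1) 1 := by
  classical
  induction S using Finset.induction with
  | empty => simp
  | insert a s h ih =>
    rw [Finset.prod_insert h, Finset.sum_insert h, ih, ← pow_one (X (f a)),
      X_pow_eq_monomial, monomial_mul, one_mul]

def scount (n : ℕ) (d : Option (Fin (n - 1)) →₀ ℕ) : ℕ :=
  (Finset.univ.filter fun j : Fin (n - 1) => d (some j) ≠ 0).card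

lemma scount_le_deg (n : ℕ) (d : Option (Fin (n - 1)) →₀ ℕ) : scount n d ≤ d.degree := by
  rw [scount]
  have h1 : ((Finset.univ.filter fun j : Fin (n-1) => d (some j) ≠ 0).image
      (fun j => (some j : Option (Fin (n-1))))) ⊆ d.support := by
    intro o ho
    simp only [Finset.mem_image, Finset.mem_filter] at ho
    obtain ⟨j, ⟨-, hj⟩, rfl⟩ := ho
    exact Finsupp.mem_support_iff.mpr hj
  have h2 := Finset.card_le_card h1
  rw [Finset.card_image_of_injective _ (Option.some_injective _)] at h2
  refine h2.trans ?_
  rw [Finsupp.degree, Finset.card_eq_sum_ones]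
  exact Finset.sum_le_sum fun i hi => Nat.one_le_iff_ne_zero.mpr (Finsupp.mem_support_iff.mp hi)

lemma filter_add_none (n : ℕ) (d : Option (Fin (n - 1)) →₀ ℕ) (a : ℕ) :
    (Finset.univ.filter fun j : Fin (n-1) =>
        (d + Finsupp.single (none : Option (Fin (n-1))) a) (some j) ≠ 0)
      = (Finset.univ.filter fun j : Fin (n-1) => d (some j) ≠ 0) := by
  apply Finset.filter_congr
  intro j _
  simp [Finsupp.add_apply, Finsupp.single_apply]

lemma scount_add_eS (n : ℕ) (d : Option (Fin (n - 1)) →₀ ℕ) (S : Finset (Fin (n - 1))) :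
    scount n (d + ∑ i ∈ S, Finsupp.single (some i) 1)
      = ((Finset.univ.filter fun j : Fin (n-1) => d (some j) ≠ 0) ∪ S).card := by
  rw [scount]
  congr 1
  ext j
  simp only [Finset.mem_filter, Finset.mem_union, Finset.mem_univ, true_and,
    Finsupp.add_apply, eS_apply S (fun i : Fin (n-1) => (some i : Option (Fin (n-1))))
      (Option.some_injective _) j]
  by_cases hj : j ∈ S <;> simp [hj, Finsupp.single_apply]

noncomputable def wfun (n k : ℕ) (d : Option (Fin (n - 1)) →₀ ℕ) : ZMod 2 :=
  if d.degree = n - 4 then Fw n k (scount n d) else 0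

noncomputable def Phi (n k : ℕ) :
    MvPolynomial (Option (Fin (n - 1))) (ZMod 2) →ₗ[ZMod 2] ZMod 2 :=
  (Finsupp.linearCombination (ZMod 2) (wfun n k)).comp
    (AddMonoidAlgebra.coeffLinearEquiv (ZMod 2)).toLinearMap

lemma Phi_monomial (n k : ℕ) (d : Option (Fin (n - 1)) →₀ ℕ) (c : ZMod 2) :
    Phi n k (monomial d c) = c * wfun n k d := by
  show Finsupp.linearCombination (ZMod 2) (wfun n k) (Finsupp.single d c) = c * wfun n k d
  rw [Finsupp.linearCombination_single, smul_eq_mul]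
lemma gen1_vanish (n k : ℕ) (d : Option (Fin (n - 1)) →₀ ℕ) (i : Fin (n - 1)) :
    Phi n k (monomial d 1 * (X (some i) ^ 2 + X (some i) * X none)) = 0 := by
  rw [mul_add, X_pow_eq_monomial, monomial_mul,
    show (X (some i) * X none : MvPolynomial (Option (Fin (n-1))) (ZMod 2))
      = monomial (Finsupp.single (some i) 1 + Finsupp.single none 1) 1 by
        rw [← pow_one (X (some i)), ← pow_one (X (none : Option (Fin (n-1)))),
          X_pow_eq_monomial, X_pow_eq_monomial, monomial_mul, one_mul],
    monomial_mul, map_add, Phi_monomial, Phi_monomial, one_mul, one_mul, one_mul]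
  have hdeg : (d + Finsupp.single (some i) 2).degree
      = (d + (Finsupp.single (some i) 1 + Finsupp.single (none : Option (Fin (n-1))) 1)).degree := by
    rw [deg_add, deg_add, deg_add, deg_single, deg_single, deg_single]
  have hsc : scount n (d + Finsupp.single (some i) 2)
      = scount n (d + (Finsupp.single (some i) 1 + Finsupp.single none 1)) := by
    rw [scount, scount]
    congr 1
    apply Finset.filter_congr
    intro j _
    simp only [Finsupp.add_apply, Finsupp.single_apply]
    by_cases hij : (some i : Option (Fin (n-1))) = some j <;> simp [hij]
  rw [wfun, wfun, hdeg, hsc]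
  exact CharTwo.add_self_eq_zero _

lemma gen2_vanish (n k : ℕ) (hk : 1 ≤ k) (d : Option (Fin (n - 1)) →₀ ℕ)
    (S : Finset (Fin (n - 1))) (hS : S.card = k) :
    Phi n k (monomial d 1 * ∏ i ∈ S, X (some i)) = 0 := by
  rw [prod_X_eq_monomial'' S (fun i : Fin (n-1) => (some i : Option (Fin (n-1)))),
    monomial_mul, one_mul, Phi_monomial, one_mul, wfun]
  split
  · rw [scount_add_eS, Fw, if_neg]
    have h2 : S.card ≤ ((Finset.univ.filter fun j : Fin (n-1) => d (some j) ≠ 0) ∪ S).card :=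
      Finset.card_le_card Finset.subset_union_right
    omega
  · rfl
lemma gen3_vanish (n k : ℕ) (hk : 2 ≤ k) (hnk : 2 * k < n) (d : Option (Fin (n - 1)) →₀ ℕ)
    (L : Finset (Fin (n - 1))) (hL1 : n - k ≤ L.card) :
    Phi n k (monomial d 1 * ∑ S ∈ L.powerset.filter (fun S => S.card ≤ k - 1),
      X none ^ (L.card - 1 - S.card) * ∏ i ∈ S, X (some i)) = 0 := by
  rw [Finset.mul_sum, map_sum]
  have hterm : ∀ S ∈ L.powerset.filter (fun S => S.card ≤ k - 1),
      Phi n k (monomial d 1 * (X none ^ (L.card - 1 - S.card) * ∏ i ∈ S, X (some i)))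
        = wfun n k (d + (Finsupp.single (none : Option (Fin (n-1))) (L.card - 1 - S.card)
            + ∑ i ∈ S, Finsupp.single (some i) 1)) := by
    intro S _
    rw [X_pow_eq_monomial, prod_X_eq_monomial'' S (fun i : Fin (n-1) => (some i : Option (Fin (n-1)))),
      monomial_mul, monomial_mul, one_mul, one_mul, Phi_monomial, one_mul]
  rw [Finset.sum_congr rfl hterm]
  have hdeg : ∀ S ∈ L.powerset.filter (fun S => S.card ≤ k - 1),
      (d + (Finsupp.single (none : Option (Fin (n-1))) (L.card - 1 - S.card)
        + ∑ i ∈ S, Finsupp.single (some i) 1)).degree = d.degree + (L.card - 1) := by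
    intro S hS
    rw [Finset.mem_filter] at hS
    rw [deg_add, deg_add, deg_single,
      deg_eS S (fun i : Fin (n-1) => (some i : Option (Fin (n-1))))]
    have := hS.2
    omega
  by_cases hcase : d.degree + (L.card - 1) = n - 4
  · set T := Finset.univ.filter fun j : Fin (n-1) => d (some j) ≠ 0 with hT
    have hval : ∀ S ∈ L.powerset.filter (fun S => S.card ≤ k - 1),
        wfun n k (d + (Finsupp.single (none : Option (Fin (n-1))) (L.card - 1 - S.card)
            + ∑ i ∈ S, Finsupp.single (some i) 1)) = Fw n k ((S ∪ T).card) := by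
      intro S hS
      rw [wfun, if_pos ((hdeg S hS).trans hcase), ← add_assoc, scount_add_eS,
        filter_add_none, ← hT, Finset.union_comm]
    rw [Finset.sum_congr rfl hval]
    rw [Finset.sum_filter_of_ne (fun S hS hne => ?_)]
    · refine comb_sum n k hk hnk L T hL1 ?_
      have h1 : scount n d ≤ d.degree := scount_le_deg n d
      rw [scount, ← hT] at h1
      omega
    · by_contra hcard
      apply hne
      rw [Fw, if_neg]
      have h2 : S.card ≤ (S ∪ T).card := Finset.card_le_card Finset.subset_union_left
      omega
  · refine Finset.sum_eq_zero fun S hS => ?_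
    rw [wfun, if_neg]
    rw [hdeg S hS]
    exact hcase

lemma Phi_vanish (n k : ℕ) (hk : 2 ≤ k) (hnk : 2 * k < n) :
    ∀ x ∈ polygonIdeal n k, Phi n k x = 0 := by
  have main : ∀ x ∈ Submodule.span (MvPolynomial (Option (Fin (n-1))) (ZMod 2)) (polygonRels n k),
      ∀ d, Phi n k (monomial d 1 * x) = 0 := by
    intro x hx
    refine Submodule.span_induction ?_ ?_ ?_ ?_ hx
    · intro y hy
      simp only [polygonRels, Set.mem_union, Set.mem_range, Set.mem_image,
        Set.mem_setOf_eq] at hy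
      rcases hy with (⟨i, rfl⟩ | ⟨S, hS, rfl⟩) | ⟨L, hL, rfl⟩
      · intro d; exact gen1_vanish n k d i
      · intro d; exact gen2_vanish n k (by omega) d S hS
      · intro d; exact gen3_vanish n k hk hnk d L hL.1
    · intro d; rw [mul_zero, map_zero]
    · intro a b _ _ ha hb d; rw [mul_add, map_add, ha d, hb d, add_zero]
    · intro r y _ hy d
      rw [smul_eq_mul]
      induction r using MvPolynomial.induction_on generalizing d with
      | C a =>
        rw [show monomial d 1 * (C a * y) = C a * (monomial d 1 * y) from by ring,
          C_mul', map_smul, hy d, smul_zero]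
      | add p q hp hq =>
        rw [show monomial d 1 * ((p + q) * y)
            = monomial d 1 * (p * y) + monomial d 1 * (q * y) from by ring,
          map_add, hp d, hq d, add_zero]
      | mul_X p i hp =>
        rw [show monomial d 1 * (p * X i * y) = (monomial d 1 * X i) * (p * y) from by ring,
          ← pow_one (X i), X_pow_eq_monomial, monomial_mul, mul_one]
        exact hp (d + Finsupp.single i 1)
  intro x hx
  have h0 := main x hx 0
  rwa [monomial_zero', C_1, one_mul] at h0


/-- There is an `F₂`-linear map `φ₂` on the degree-`(n−4)` component of `A_{n,k}`
sending the class of the monomial `R^{n−4−|S|}·∏_{i∈S} V_i` (for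
`|S| ≤ min(k−1, n−4)`) to the mod-2 residue of `C(n−2−|S|, k−1−|S|)`.
Here `S : Finset (Fin (n-1))`, with `i ∈ S` corresponding to the variable
`X (some i)`, i.e. `V_{i+1}`. -/
theorem exists_phi2 (n k : ℕ) (hk : 2 ≤ k) (hnk : 2 * k < n) :
    ∃ φ₂ : homComponent n k (n - 4) →ₗ[ZMod 2] ZMod 2,
      ∀ S : Finset (Fin (n - 1)), S.card ≤ min (k - 1) (n - 4) →
        ∀ hx : Ideal.Quotient.mk (polygonIdeal n k)
            (X none ^ (n - 4 - S.card) * ∏ i ∈ S, X (some i)) ∈ homComponent n k (n - 4),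
          φ₂ ⟨Ideal.Quotient.mk (polygonIdeal n k)
              (X none ^ (n - 4 - S.card) * ∏ i ∈ S, X (some i)), hx⟩ =
            (Nat.choose (n - 2 - S.card) (k - 1 - S.card) : ZMod 2) := by
  have hker : (polygonIdeal n k).restrictScalars (ZMod 2) ≤ LinearMap.ker (Phi n k) :=
    fun x hx => LinearMap.mem_ker.mpr (Phi_vanish n k hk hnk x hx)
  refine ⟨(Submodule.liftQ _ (Phi n k) hker).comp
    (((Submodule.Quotient.restrictScalarsEquiv (ZMod 2)
      (polygonIdeal n k)).symm.toLinearMap).comp (homComponent n k (n - 4)).subtype), ?_⟩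
  intro S hcard hx
  rw [LinearMap.comp_apply, LinearMap.comp_apply, Submodule.coe_subtype]
  have h1 : (⟨Ideal.Quotient.mk (polygonIdeal n k)
      (X none ^ (n - 4 - S.card) * ∏ i ∈ S, X (some i)), hx⟩ : homComponent n k (n - 4)).val
      = Submodule.Quotient.mk (X none ^ (n - 4 - S.card) * ∏ i ∈ S, X (some i)) := rfl
  rw [h1, LinearEquiv.coe_toLinearMap, Submodule.Quotient.restrictScalarsEquiv_symm_mk,
    Submodule.liftQ_apply]
  -- now compute Phi of the monomial
  rw [X_pow_eq_monomial,
    prod_X_eq_monomial'' S (fun i : Fin (n-1) => (some i : Option (Fin (n-1)))),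
    monomial_mul, one_mul, Phi_monomial, one_mul, wfun]
  have hdeg : (Finsupp.single (none : Option (Fin (n-1))) (n - 4 - S.card)
      + ∑ i ∈ S, Finsupp.single (some i) 1).degree = n - 4 := by
    rw [deg_add, deg_single, deg_eS S (fun i : Fin (n-1) => (some i : Option (Fin (n-1))))]
    omega
  rw [if_pos hdeg]
  have hsc : scount n (Finsupp.single (none : Option (Fin (n-1))) (n - 4 - S.card)
      + ∑ i ∈ S, Finsupp.single (some i) 1) = S.card := by
    rw [scount_add_eS]
    have : (Finset.univ.filter fun j : Fin (n-1) =>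
        (Finsupp.single (none : Option (Fin (n-1))) (n - 4 - S.card)) (some j) ≠ 0) = ∅ := by
      apply Finset.filter_false_of_mem
      intro j _
      simp [Finsupp.single_apply]
    rw [this, Finset.empty_union]
  rw [hsc, Fw, if_pos (by omega)]
end

section
/- Assume Notation (t, k₀, B, D, C) with B even and D = 0, and let A = A_{n,k}. There exists an F₂-linear map φ₃ from the homogeneous degree-(n−4) component of A to F₂ such that for every subset S ⊆ {1,…,n−1} with |S| ≤ k−1, φ₃ sends the class of the monomial R^{n−4−|S|}·∏_{i∈S} V_i to 1 if |S| < k−1 and to 0 if |S| = k−1. -/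
open MvPolynomial
open scoped TensorProduct

namespace Phi3Aux


lemma lucas2 (N m : ℕ) :
    (Nat.choose N m : ZMod 2)
      = (Nat.choose (N % 2) (m % 2) : ZMod 2) * (Nat.choose (N / 2) (m / 2) : ZMod 2) := by
  have : Fact (Nat.Prime 2) := ⟨Nat.prime_two⟩
  have h := Choose.choose_modEq_choose_mod_mul_choose_div_nat (n := N) (k := m) (p := 2)
  have h2 := (ZMod.natCast_eq_natCast_iff _ _ _).mpr h
  push_cast at h2
  exact h2

lemma choose_two_pow_mul_add (s : ℕ) : ∀ b r m : ℕ, r < 2 ^ s → m < 2 ^ s →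
    (Nat.choose (2 ^ s * b + r) m : ZMod 2) = (Nat.choose r m : ZMod 2) := by
  induction s with
  | zero =>
      intro b r m hr hm
      simp only [pow_zero, Nat.lt_one_iff] at hr hm
      subst hr; subst hm
      simp
  | succ s ih =>
      intro b r m hr hm
      have hpow : (2:ℕ) ^ (s+1) = 2 * 2 ^ s := by ring
      have hN2 : (2 ^ (s+1) * b + r) % 2 = r % 2 := by
        have : 2 ^ (s+1) * b = 2 * (2 ^ s * b) := by ring
        omega
      have hNd : (2 ^ (s+1) * b + r) / 2 = 2 ^ s * b + r / 2 := by
        have : 2 ^ (s+1) * b = 2 * (2 ^ s * b) := by ring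
        omega
      rw [lucas2, hN2, hNd, ih b (r / 2) (m / 2) (by omega) (by omega), ← lucas2 r m]

lemma sum_choose_zmod (e : ℕ) (M : ℕ) :
    ∑ m ∈ Finset.range (M + 1), ((e + 1).choose m : ZMod 2) = (e.choose M : ZMod 2) := by
  induction M with
  | zero => simp
  | succ M ih =>
      rw [Finset.sum_range_succ, ih, Nat.choose_succ_succ, Nat.cast_add, ← add_assoc,
        CharTwo.add_self_eq_zero, zero_add]

/-- The core combinatorial parity lemma. -/
lemma core {α : Type*} [DecidableEq α] (n k t k₀ b : ℕ)
    (hk₀ : 1 ≤ k₀) (hk₀' : k₀ ≤ 2 ^ t) (hk : k = 2 ^ t + k₀) (hb : 1 ≤ b)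
    (hn : n = k + 1 + 2 ^ t * (b + b))
    (T L : Finset α) (hL1 : n - k ≤ L.card) (hL2 : L.card ≤ n - 2)
    (hT : T.card + L.card + 3 ≤ n) :
    ∑ S ∈ L.powerset.filter (fun S => S.card ≤ k - 1),
      (if (T ∪ S).card ≤ k - 2 then (1 : ZMod 2) else 0) = 0 := by
  have hpow : (2:ℕ) ^ (t+1) = 2 ^ t + 2 ^ t := by ring
  have hk2 : 2 ≤ k := by omega
  have hq1 : 2 ^ t * (b + b) = 2 * (2 ^ t * b) := by ring
  have hq2 : 2 ^ (t + 1) * b = 2 * (2 ^ t * b) := by ring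
  have hQ1 : 1 ≤ 2 ^ t * b := Nat.one_le_iff_ne_zero.mpr (by positivity)
  have hQA : 2 ^ t ≤ 2 ^ t * b := Nat.le_mul_of_pos_right _ hb
  have h2t : 1 ≤ 2 ^ t := Nat.one_le_two_pow
  have hnk : k + 3 ≤ n := by omega
  -- drop the redundant cardinality condition
  have hstep : ∑ S ∈ L.powerset.filter (fun S => S.card ≤ k - 1),
      (if (T ∪ S).card ≤ k - 2 then (1 : ZMod 2) else 0)
      = ∑ S ∈ L.powerset, (if (T ∪ S).card ≤ k - 2 then (1 : ZMod 2) else 0) := by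
    rw [Finset.sum_filter]
    refine Finset.sum_congr rfl fun S _ => ?_
    by_cases h1 : S.card ≤ k - 1
    · simp [h1]
    · have h2 : ¬ (T ∪ S).card ≤ k - 2 := by
        intro h
        exact h1 (le_trans (le_trans (Finset.card_le_card Finset.subset_union_right) h)
          (by omega))
      simp [h1, h2]
  rw [hstep]
  by_cases hTL : (T ∩ L).Nonempty
  · -- involution S ↦ S Δ {i}
    obtain ⟨i, hi⟩ := hTL
    have hiT : i ∈ T := (Finset.mem_inter.mp hi).1
    have hiL : i ∈ L := (Finset.mem_inter.mp hi).2
    refine Finset.sum_involution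
      (fun S _ => if i ∈ S then S.erase i else insert i S) ?_ ?_ ?_ ?_
    · intro S hS
      have hU : T ∪ (if i ∈ S then S.erase i else insert i S) = T ∪ S := by
        ext x
        by_cases hxi : x = i
        · rw [hxi]; by_cases h : i ∈ S <;> simp [h, hiT]
        · by_cases h : i ∈ S <;>
            simp [h, hxi, Finset.mem_union, Finset.mem_erase, Finset.mem_insert]
      rw [hU, CharTwo.add_self_eq_zero]
    · intro S hS hf
      beta_reduce
      by_cases h : i ∈ S
      · rw [if_pos h]
        intro he
        exact Finset.notMem_erase i S (by rw [he]; exact h)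
      · rw [if_neg h]
        intro he
        exact h (he ▸ Finset.mem_insert_self i S)
    · intro S hS
      rw [Finset.mem_powerset] at hS ⊢
      beta_reduce
      by_cases h : i ∈ S
      · rw [if_pos h]; exact (Finset.erase_subset i S).trans hS
      · rw [if_neg h]; exact Finset.insert_subset hiL hS
    · intro S hS
      beta_reduce
      by_cases h : i ∈ S
      · simp only [if_pos h, Finset.notMem_erase i S, if_neg, if_false]
        exact Finset.insert_erase h
      · simp only [if_neg h, Finset.mem_insert_self i S, if_pos, if_true]
        exact Finset.erase_insert h
  · -- T and L disjoint
    have hdisj : ∀ S ∈ L.powerset, Disjoint T S := by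
      intro S hS
      rw [Finset.mem_powerset] at hS
      rw [Finset.disjoint_left]
      intro a haT haS
      exact hTL ⟨a, Finset.mem_inter.mpr ⟨haT, hS haS⟩⟩
    have hTk : T.card ≤ k - 3 := by omega
    set τ := T.card with hτ
    have hcard : ∀ S ∈ L.powerset, (if (T ∪ S).card ≤ k - 2 then (1 : ZMod 2) else 0)
        = (fun m => if τ + m ≤ k - 2 then (1 : ZMod 2) else 0) S.card := by
      intro S hS
      rw [Finset.card_union_of_disjoint (hdisj S hS)]
    rw [Finset.sum_congr rfl hcard,
      Finset.sum_powerset_apply_card (f := fun m => if τ + m ≤ k - 2 then (1 : ZMod 2) else 0)]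
    have hL3 : k - 2 - τ + 1 ≤ L.card + 1 := by omega
    have hterm : ∀ m, (L.card.choose m) • (if τ + m ≤ k - 2 then (1 : ZMod 2) else 0)
        = if m ∈ Finset.range (k - 2 - τ + 1) then ((L.card.choose m : ZMod 2)) else 0 := by
      intro m
      by_cases h : τ + m ≤ k - 2
      · rw [if_pos h, if_pos (by rw [Finset.mem_range]; omega), nsmul_eq_mul, mul_one]
      · rw [if_neg h, if_neg (by rw [Finset.mem_range]; omega), smul_zero]
    rw [Finset.sum_congr rfl (fun m _ => hterm m), Finset.sum_ite_mem,
      Finset.inter_eq_right.mpr (by rw [Finset.range_subset_range]; omega)]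
    -- now a partial sum of binomials
    obtain ⟨e, he⟩ : ∃ e, L.card = e + 1 := ⟨L.card - 1, by omega⟩
    rw [he, sum_choose_zmod]
    -- parity via Lucas
    set M := k - 2 - τ with hM
    have heB : e = 2 ^ (t+1) * b + (e - 2 ^ t * (b + b)) := by omega
    have hr : e - 2 ^ t * (b + b) < M := by omega
    have hMlt : M < 2 ^ (t + 1) := by omega
    rw [heB, choose_two_pow_mul_add (t+1) b _ M (lt_trans hr hMlt) hMlt,
      Nat.choose_eq_zero_of_lt hr, Nat.cast_zero]



variable (n k : ℕ)

abbrev σn (n : ℕ) := Option (Fin (n - 1))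

/-- set of `V`-variables appearing in a monomial -/
def Vs {n : ℕ} (d : σn n →₀ ℕ) : Finset (Fin (n - 1)) :=
  Finset.univ.filter fun i => d (some i) ≠ 0

/-- total degree of a monomial exponent -/
def dg {n : ℕ} (d : σn n →₀ ℕ) : ℕ := ∑ s : σn n, d s

/-- the weight function defining `φ₃` -/
def wt (n k : ℕ) (d : σn n →₀ ℕ) : ZMod 2 :=
  if dg d = n - 4 ∧ (Vs d).card ≤ k - 2 then 1 else 0

/-- the linear functional on the polynomial ring -/
noncomputable def psi (n k : ℕ) : MvPolynomial (σn n) (ZMod 2) →ₗ[ZMod 2] ZMod 2 :=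
  (MvPolynomial.basisMonomials (σn n) (ZMod 2)).constr (ZMod 2) (wt n k)

lemma psi_monomial (d : σn n →₀ ℕ) (a : ZMod 2) :
    psi n k (monomial d a) = a * wt n k d := by
  have h1 : (monomial d a : MvPolynomial (σn n) (ZMod 2))
      = a • (MvPolynomial.basisMonomials (σn n) (ZMod 2)) d := by
    rw [show ((MvPolynomial.basisMonomials (σn n) (ZMod 2)) d) = monomial d 1 from
      congrFun (MvPolynomial.coe_basisMonomials _ _) d, smul_monomial, smul_eq_mul, mul_one]
  rw [h1, map_smul]
  unfold psi
  rw [Module.Basis.constr_basis, smul_eq_mul]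

lemma dg_add {n : ℕ} (u v : σn n →₀ ℕ) : dg (u + v) = dg u + dg v := by
  simp [dg, Finset.sum_add_distrib]

lemma dg_single {n : ℕ} (s : σn n) (m : ℕ) : dg (Finsupp.single s m) = m := by
  simp [dg, Finsupp.single_apply]

lemma dg_sum_single {n : ℕ} (S : Finset (Fin (n - 1))) :
    dg (∑ i ∈ S, Finsupp.single (some i : σn n) 1) = S.card := by
  induction S using Finset.induction with
  | empty => simp [dg]
  | insert _ _ h ih =>
      rw [Finset.sum_insert h, dg_add, dg_single, ih, Finset.card_insert_of_notMem h]
      omega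

lemma dg_eq_degree {n : ℕ} (u : σn n →₀ ℕ) : Finsupp.degree u = dg u := by
  rw [Finsupp.degree, dg]
  exact Finset.sum_subset (Finset.subset_univ _)
    (fun x _ hx => Finsupp.notMem_support_iff.mp hx)

lemma Vs_add {n : ℕ} (u v : σn n →₀ ℕ) : Vs (u + v) = Vs u ∪ Vs v := by
  ext i
  simp [Vs, Finsupp.add_apply]
  omega

lemma Vs_single_none {n : ℕ} (m : ℕ) : Vs (Finsupp.single (none : σn n) m) = ∅ := by
  ext i
  simp [Vs, Finsupp.single_apply]

lemma Vs_single_some {n : ℕ} (i : Fin (n - 1)) (m : ℕ) (hm : m ≠ 0) :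
    Vs (Finsupp.single (some i : σn n) m) = {i} := by
  ext j
  simp [Vs, Finsupp.single_apply, hm]
  tauto

lemma Vs_sum_single {n : ℕ} (S : Finset (Fin (n - 1))) :
    Vs (∑ i ∈ S, Finsupp.single (some i : σn n) 1) = S := by
  induction S using Finset.induction with
  | empty => simp [Vs]
  | insert _ _ h ih => rw [Finset.sum_insert h, Vs_add, Vs_single_some _ 1 one_ne_zero, ih]
                       ext j; simp

lemma card_Vs_le_dg {n : ℕ} (d : σn n →₀ ℕ) : (Vs d).card ≤ dg d := by
  have h1 : (Vs d).card • 1 ≤ ∑ i ∈ Vs d, d (some i) := by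
    apply Finset.card_nsmul_le_sum
    intro i hi
    have := (Finset.mem_filter.mp hi).2
    omega
  have h2 : ∑ i ∈ Vs d, d (some i) = ∑ s ∈ (Vs d).image some, d s := by
    rw [Finset.sum_image]
    intro a _ b _ h
    exact Option.some_injective _ h
  have h3 : ∑ s ∈ (Vs d).image some, d s ≤ dg d :=
    Finset.sum_le_sum_of_subset (Finset.subset_univ _)
  simp only [smul_eq_mul, mul_one] at h1
  omega

lemma prod_X_eq {n : ℕ} (S : Finset (Fin (n - 1))) :
    (∏ i ∈ S, (X (some i) : MvPolynomial (σn n) (ZMod 2)))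
      = monomial (∑ i ∈ S, Finsupp.single (some i) 1) 1 := by
  induction S using Finset.induction with
  | empty => simp
  | insert _ _ h ih =>
      have hX : ∀ j : Fin (n - 1), (X (some j) : MvPolynomial (σn n) (ZMod 2))
          = monomial (Finsupp.single (some j) 1) 1 := fun j => by
        rw [← pow_one (X _), X_pow_eq_monomial]
      rw [Finset.prod_insert h, ih, Finset.sum_insert h, hX, monomial_mul, one_mul]


lemma psi_rel1 (n k : ℕ) (d : σn n →₀ ℕ) (a : ZMod 2) (i : Fin (n - 1)) :
    psi n k (monomial d a * ((X (some i) : MvPolynomial (σn n) (ZMod 2)) ^ 2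
      + X (some i) * X none)) = 0 := by
  have hXX : (X (some i) : MvPolynomial (σn n) (ZMod 2)) * X none
      = monomial (Finsupp.single (some i) 1 + Finsupp.single none 1) 1 := by
    rw [← pow_one (X (some i)), ← pow_one (X (none : σn n)), X_pow_eq_monomial,
      X_pow_eq_monomial, monomial_mul, one_mul]
  rw [mul_add, map_add, hXX, X_pow_eq_monomial, monomial_mul, monomial_mul, mul_one,
    psi_monomial, psi_monomial]
  have hww : wt n k (d + Finsupp.single (some i) 2)
      = wt n k (d + (Finsupp.single (some i) 1 + Finsupp.single none 1)) := by
    unfold wt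
    rw [dg_add, dg_add, dg_add, dg_single, dg_single, dg_single,
      Vs_add, Vs_add, Vs_add, Vs_single_some i 2 (by omega), Vs_single_some i 1 one_ne_zero,
      Vs_single_none, Finset.union_empty]
  rw [hww, CharTwo.add_self_eq_zero]

lemma psi_rel2 (n k : ℕ) (hk2 : 2 ≤ k) (d : σn n →₀ ℕ) (a : ZMod 2)
    (S : Finset (Fin (n - 1))) (hS : S.card = k) :
    psi n k (monomial d a * ∏ i ∈ S, (X (some i) : MvPolynomial (σn n) (ZMod 2))) = 0 := by
  rw [prod_X_eq, monomial_mul, mul_one, psi_monomial]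
  have hw : wt n k (d + ∑ i ∈ S, Finsupp.single (some i) 1) = 0 := by
    unfold wt
    rw [if_neg]
    rintro ⟨-, h2⟩
    rw [Vs_add, Vs_sum_single] at h2
    have := Finset.card_le_card (Finset.subset_union_right (s₁ := Vs d) (s₂ := S))
    omega
  rw [hw, mul_zero]

lemma psi_rel3 (n k t k₀ b : ℕ)
    (hk₀ : 1 ≤ k₀) (hk₀' : k₀ ≤ 2 ^ t) (hk : k = 2 ^ t + k₀) (hb : 1 ≤ b)
    (hn : n = k + 1 + 2 ^ t * (b + b))
    (d : σn n →₀ ℕ) (a : ZMod 2) (L : Finset (Fin (n - 1)))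
    (hL1 : n - k ≤ L.card) (hL2 : L.card ≤ n - 2) :
    psi n k (monomial d a *
      ∑ S ∈ L.powerset.filter (fun S => S.card ≤ k - 1),
        (X (none : σn n) : MvPolynomial (σn n) (ZMod 2)) ^ (L.card - 1 - S.card)
          * ∏ i ∈ S, X (some i)) = 0 := by
  have hq1 : 2 ^ t * (b + b) = 2 * (2 ^ t * b) := by ring
  have hQ1 : 1 ≤ 2 ^ t * b := Nat.one_le_iff_ne_zero.mpr (by positivity)
  have hQA : 2 ^ t ≤ 2 ^ t * b := Nat.le_mul_of_pos_right _ hb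
  have h2t : 1 ≤ 2 ^ t := Nat.one_le_two_pow
  have hk2 : 2 ≤ k := by omega
  have hterm : ∀ S ∈ L.powerset.filter (fun S => S.card ≤ k - 1),
      monomial d a * ((X (none : σn n) : MvPolynomial (σn n) (ZMod 2)) ^ (L.card - 1 - S.card)
          * ∏ i ∈ S, X (some i))
        = monomial (d + (Finsupp.single none (L.card - 1 - S.card)
            + ∑ i ∈ S, Finsupp.single (some i) 1)) a := by
    intro S hS
    rw [prod_X_eq, X_pow_eq_monomial, monomial_mul, one_mul, monomial_mul, mul_one]
  rw [Finset.mul_sum, Finset.sum_congr rfl hterm, map_sum]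
  have hpsim : ∀ S ∈ L.powerset.filter (fun S => S.card ≤ k - 1),
      psi n k (monomial (d + (Finsupp.single none (L.card - 1 - S.card)
            + ∑ i ∈ S, Finsupp.single (some i) 1)) a)
      = a * wt n k (d + (Finsupp.single none (L.card - 1 - S.card)
            + ∑ i ∈ S, Finsupp.single (some i) 1)) := fun S _ => psi_monomial _ _ _ _
  rw [Finset.sum_congr rfl hpsim, ← Finset.mul_sum]
  by_cases hdeg : dg d + (L.card - 1) = n - 4
  · have hwt : ∀ S ∈ L.powerset.filter (fun S => S.card ≤ k - 1),
        wt n k (d + (Finsupp.single none (L.card - 1 - S.card)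
            + ∑ i ∈ S, Finsupp.single (some i) 1))
        = (if ((Vs d) ∪ S).card ≤ k - 2 then (1 : ZMod 2) else 0) := by
      intro S hS
      have hSc : S.card ≤ k - 1 := (Finset.mem_filter.mp hS).2
      unfold wt
      rw [dg_add, dg_add, dg_single, dg_sum_single, Vs_add, Vs_add, Vs_single_none,
        Vs_sum_single, Finset.empty_union]
      have h1 : dg d + (L.card - 1 - S.card + S.card) = n - 4 := by omega
      simp only [h1, true_and]
    rw [Finset.sum_congr rfl hwt]
    have hT : (Vs d).card + L.card + 3 ≤ n := by
      have := card_Vs_le_dg d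
      omega
    rw [core n k t k₀ b hk₀ hk₀' hk hb hn (Vs d) L hL1 hL2 hT, mul_zero]
  · have hwt : ∀ S ∈ L.powerset.filter (fun S => S.card ≤ k - 1),
        wt n k (d + (Finsupp.single none (L.card - 1 - S.card)
            + ∑ i ∈ S, Finsupp.single (some i) 1)) = 0 := by
      intro S hS
      have hSc : S.card ≤ k - 1 := (Finset.mem_filter.mp hS).2
      unfold wt
      rw [if_neg]
      rintro ⟨h1, -⟩
      rw [dg_add, dg_add, dg_single, dg_sum_single] at h1
      omega
    rw [Finset.sum_congr rfl hwt, Finset.sum_const_zero, mul_zero]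

lemma psi_ideal (n k t k₀ b : ℕ)
    (hk₀ : 1 ≤ k₀) (hk₀' : k₀ ≤ 2 ^ t) (hk : k = 2 ^ t + k₀) (hb : 1 ≤ b)
    (hn : n = k + 1 + 2 ^ t * (b + b))
    (x : MvPolynomial (σn n) (ZMod 2)) (hx : x ∈ polygonIdeal n k) :
    psi n k x = 0 := by
  have hk2 : 2 ≤ k := by
    have h2t : 1 ≤ 2 ^ t := Nat.one_le_two_pow
    omega
  have key : ∀ g ∈ polygonRels n k, ∀ p : MvPolynomial (σn n) (ZMod 2),
      psi n k (p * g) = 0 := by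
    intro g hg
    have step : (∀ u a, psi n k (monomial u a * g) = 0) →
        ∀ p, psi n k (p * g) = 0 := by
      intro h p
      induction p using MvPolynomial.induction_on' with
      | monomial u a => exact h u a
      | add p q hp hq => rw [add_mul, map_add, hp, hq, add_zero]
    rcases hg with (hg | hg) | hg
    · obtain ⟨i, rfl⟩ := hg
      exact step fun u a => psi_rel1 n k u a i
    · obtain ⟨S, hS, rfl⟩ := hg
      exact step fun u a => psi_rel2 n k hk2 u a S hS
    · obtain ⟨L, hL, rfl⟩ := hg
      exact step fun u a => psi_rel3 n k t k₀ b hk₀ hk₀' hk hb hn u a L hL.1 hL.2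
  have main : ∀ x, x ∈ polygonIdeal n k →
      ∀ p : MvPolynomial (σn n) (ZMod 2), psi n k (p * x) = 0 := by
    intro x hx
    refine Submodule.span_induction (p := fun x _ => ∀ p, psi n k (p * x) = 0)
      key ?_ ?_ ?_ hx
    · intro p; rw [mul_zero, map_zero]
    · intro x y _ _ ihx ihy p
      rw [mul_add, map_add, ihx, ihy, add_zero]
    · intro c x _ ih p
      rw [smul_eq_mul, ← mul_assoc, ih]
  have h1 := main x hx 1
  rwa [one_mul] at h1

/-- The linear map from the homogeneous part to the quotient. -/
noncomputable def fmap (n k : ℕ) :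
    (homogeneousSubmodule (σn n) (ZMod 2) (n - 4)) →ₗ[ZMod 2] PolygonAlg n k :=
  (Ideal.Quotient.mkₐ (ZMod 2) (polygonIdeal n k)).toLinearMap.comp
    (Submodule.subtype _)

lemma fmap_apply (n k : ℕ) (y : homogeneousSubmodule (σn n) (ZMod 2) (n - 4)) :
    fmap n k y = Ideal.Quotient.mk (polygonIdeal n k) (y : MvPolynomial (σn n) (ZMod 2)) :=
  rfl

lemma range_fmap (n k : ℕ) :
    LinearMap.range (fmap n k) = homComponent n k (n - 4) := by
  unfold fmap homComponent
  rw [LinearMap.range_comp, Submodule.range_subtype]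

end Phi3Aux

open Phi3Aux in
/-- Case `B` even and `D = 0` of the Notation: there is an `F₂`-linear map `φ₃`
on the degree-`(n−4)` component of `A_{n,k}` sending the class of the monomial
`R^{n−4−|S|}·∏_{i∈S} V_i` (for `|S| ≤ k−1`) to `1` if `|S| < k−1` and to `0` if
`|S| = k−1`.  Here `S : Finset (Fin (n-1))`, with `i ∈ S` corresponding to the
variable `X (some i)`, i.e. `V_{i+1}`. -/
theorem exists_phi3 (n k t k₀ B D C : ℕ)
    (hk₀ : 1 ≤ k₀) (hk₀' : k₀ ≤ 2 ^ t) (hk : k = 2 ^ t + k₀)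
    (hB : 1 ≤ B) (hD : D < 2 ^ t) (hn : n = k + 1 + 2 ^ t * B + D)
    (hC : C = k₀ + D - 1) (hnk : 2 * k < n)
    (hBeven : Even B) (hD0 : D = 0) :
    ∃ φ₃ : homComponent n k (n - 4) →ₗ[ZMod 2] ZMod 2,
      ∀ S : Finset (Fin (n - 1)), S.card ≤ k - 1 →
        ∀ hx : Ideal.Quotient.mk (polygonIdeal n k)
            (X none ^ (n - 4 - S.card) * ∏ i ∈ S, X (some i)) ∈ homComponent n k (n - 4),
          φ₃ ⟨Ideal.Quotient.mk (polygonIdeal n k)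
              (X none ^ (n - 4 - S.card) * ∏ i ∈ S, X (some i)), hx⟩ =
            (if S.card < k - 1 then 1 else 0) := by
  obtain ⟨b, hBb⟩ := hBeven
  rw [hD0, hBb] at hn
  have hn' : n = k + 1 + 2 ^ t * (b + b) := by omega
  have hb : 1 ≤ b := by omega
  have h2t : 1 ≤ 2 ^ t := Nat.one_le_two_pow
  have hk2 : 2 ≤ k := by omega
  have hQ1 : 1 ≤ 2 ^ t * b := Nat.one_le_iff_ne_zero.mpr (by positivity)
  have hn4 : k + 3 ≤ n := by omega
  have hker : LinearMap.ker (fmap n k)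
      ≤ LinearMap.ker ((psi n k).comp (Submodule.subtype _)) := by
    intro x hxk
    rw [LinearMap.mem_ker] at hxk ⊢
    have hxI : (x : MvPolynomial (σn n) (ZMod 2)) ∈ polygonIdeal n k := by
      rw [← Ideal.Quotient.eq_zero_iff_mem]
      rw [fmap_apply] at hxk
      exact hxk
    exact psi_ideal n k t k₀ b hk₀ hk₀' hk hb hn' _ hxI
  refine ⟨(Submodule.liftQ _ ((psi n k).comp (Submodule.subtype _)) hker).comp
      (((LinearMap.quotKerEquivRange (fmap n k)).symm.toLinearMap).comp
        (LinearEquiv.ofEq _ _ (range_fmap n k).symm).toLinearMap), ?_⟩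
  intro S hS hx
  set u : σn n →₀ ℕ :=
    Finsupp.single none (n - 4 - S.card) + ∑ i ∈ S, Finsupp.single (some i) 1 with hu
  have hdgu : dg u = n - 4 := by
    rw [hu, dg_add, dg_single, dg_sum_single]
    omega
  have hum : (monomial u 1 : MvPolynomial (σn n) (ZMod 2))
      ∈ homogeneousSubmodule (σn n) (ZMod 2) (n - 4) := by
    rw [mem_homogeneousSubmodule]
    exact isHomogeneous_monomial _ ((dg_eq_degree u).trans hdgu)
  set y : homogeneousSubmodule (σn n) (ZMod 2) (n - 4) := ⟨monomial u 1, hum⟩ with hy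
  have hpoly : (X (none : σn n) : MvPolynomial (σn n) (ZMod 2)) ^ (n - 4 - S.card)
      * ∏ i ∈ S, X (some i) = monomial u 1 := by
    rw [X_pow_eq_monomial, prod_X_eq, monomial_mul, one_mul]
  have hfy : fmap n k y = Ideal.Quotient.mk (polygonIdeal n k)
      (X none ^ (n - 4 - S.card) * ∏ i ∈ S, X (some i)) := by
    rw [fmap_apply]
    exact congrArg _ hpoly.symm
  have hmem : fmap n k y ∈ homComponent n k (n - 4) :=
    (range_fmap n k) ▸ LinearMap.mem_range_self (fmap n k) y
  have helem : (⟨Ideal.Quotient.mk (polygonIdeal n k)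
      (X none ^ (n - 4 - S.card) * ∏ i ∈ S, X (some i)), hx⟩ : homComponent n k (n - 4))
      = ⟨fmap n k y, hmem⟩ := Subtype.ext hfy.symm
  rw [helem]
  have hofEq : (LinearEquiv.ofEq _ _ (range_fmap n k).symm).toLinearMap
      (⟨fmap n k y, hmem⟩ : homComponent n k (n - 4))
      = ⟨fmap n k y, LinearMap.mem_range_self (fmap n k) y⟩ := rfl
  rw [LinearMap.comp_apply, LinearMap.comp_apply, hofEq, LinearEquiv.coe_coe,
    LinearMap.quotKerEquivRange_symm_apply_image, Submodule.mkQ_apply, Submodule.liftQ_apply,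
    LinearMap.comp_apply, Submodule.subtype_apply]
  show psi n k (monomial u 1) = _
  rw [psi_monomial, one_mul]
  unfold wt
  rw [hdgu, hu, Vs_add, Vs_single_none, Vs_sum_single, Finset.empty_union]
  by_cases h : S.card ≤ k - 2
  · rw [if_pos ⟨rfl, h⟩, if_pos (by omega)]
  · rw [if_neg (by tauto), if_neg (by omega)]
end

section
/- Let k ≥ 1 and n > 2k be integers, and let ℓ be an integer with n−k ≤ ℓ ≤ n−3. Then ∑_{i=0}^{k−1} C(ℓ, i) · C(n−2−i, k−1−i) ≡ 0 (mod 2). -/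
lemma aux_sum_choose (ℓ : ℕ) : ∀ d r : ℕ,
    ((∑ i ∈ Finset.range (r + 1),
      Nat.choose ℓ i * Nat.choose (ℓ + d - i) (r - i) : ℕ) : ZMod 2)
      = (Nat.choose d r : ZMod 2) := by
  induction ℓ with
  | zero =>
    intro d r
    rw [Finset.sum_eq_single 0]
    · simp
    · intro i _ hi
      cases i with
      | zero => simp at hi
      | succ j => simp [Nat.choose]
    · simp
  | succ ℓ ih =>
    intro d r
    cases r with
    | zero => simp
    | succ r =>
      rw [Finset.sum_range_succ']
      have key : ∀ j ∈ Finset.range (r + 1),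
          Nat.choose (ℓ + 1) (j + 1) * Nat.choose (ℓ + 1 + d - (j + 1)) (r + 1 - (j + 1))
          = Nat.choose ℓ j * Nat.choose (ℓ + d - j) (r - j)
            + Nat.choose ℓ (j + 1) * Nat.choose (ℓ + d - j) (r - j) := by
        intro j _
        have h1 : ℓ + 1 + d - (j + 1) = ℓ + d - j := by omega
        have h2 : r + 1 - (j + 1) = r - j := by omega
        rw [h1, h2, Nat.choose_succ_succ, Nat.add_mul]
      rw [Finset.sum_congr rfl key, Finset.sum_add_distrib]
      have hsecond : (∑ j ∈ Finset.range (r + 1),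
          Nat.choose ℓ (j + 1) * Nat.choose (ℓ + d - j) (r - j))
          + Nat.choose (ℓ + d + 1) (r + 1)
          = ∑ i ∈ Finset.range (r + 2),
            Nat.choose ℓ i * Nat.choose (ℓ + (d + 1) - i) (r + 1 - i) := by
        conv_rhs => rw [Finset.sum_range_succ']
        congr 1
        · apply Finset.sum_congr rfl
          intro j _
          have h1 : ℓ + (d + 1) - (j + 1) = ℓ + d - j := by omega
          have h2 : r + 1 - (j + 1) = r - j := by omega
          rw [h1, h2]
        · have he : ℓ + (d + 1) = ℓ + d + 1 := by omega
          simp [he]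
      have hih1 := ih d r
      have hih2 := ih (d + 1) (r + 1)
      have hcast : ((∑ j ∈ Finset.range (r + 1),
          Nat.choose ℓ (j + 1) * Nat.choose (ℓ + d - j) (r - j) : ℕ) : ZMod 2)
          + (Nat.choose (ℓ + d + 1) (r + 1) : ZMod 2)
          = (Nat.choose (d + 1) (r + 1) : ZMod 2) := by
        rw [← hih2, ← hsecond]
        push_cast
        ring
      push_cast
      push_cast at hih1 hcast
      have h0 : ℓ + 1 + d - 0 = ℓ + d + 1 := by omega
      have hp : (Nat.choose (d + 1) (r + 1) : ZMod 2)
          = (Nat.choose d r : ZMod 2) + (Nat.choose d (r + 1) : ZMod 2) := by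
        rw [Nat.choose_succ_succ]; push_cast; ring
      rw [h0] at *
      simp only [Nat.choose_zero_right, Nat.sub_zero, Nat.cast_one, one_mul]
      rw [hih1]
      have h22 : (2 : ZMod 2) = 0 := rfl
      linear_combination hcast + hp + (Nat.choose d r : ZMod 2) * h22

/-- For `k ≥ 1`, `n > 2k` and `n − k ≤ ℓ ≤ n − 3`,
`∑_{i=0}^{k−1} C(ℓ, i) · C(n−2−i, k−1−i) ≡ 0 (mod 2)`. -/
theorem sum_choose_mul_choose_even (n k ℓ : ℕ) (hk : 1 ≤ k) (hnk : 2 * k < n)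
    (hℓ₁ : n - k ≤ ℓ) (hℓ₂ : ℓ ≤ n - 3) :
    (∑ i ∈ Finset.range k, Nat.choose ℓ i * Nat.choose (n - 2 - i) (k - 1 - i)) % 2 = 0 := by
  -- k = 1 contradicts hypotheses
  rcases Nat.lt_or_ge k 2 with hk2 | hk2
  · interval_cases k
    omega
  obtain ⟨r, rfl⟩ : ∃ r, k = r + 1 := ⟨k - 1, by omega⟩
  set d := n - 2 - ℓ with hd
  have habc : ∀ i ∈ Finset.range (r + 1),
      Nat.choose ℓ i * Nat.choose (n - 2 - i) (r + 1 - 1 - i)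
      = Nat.choose ℓ i * Nat.choose (ℓ + d - i) (r - i) := by
    intro i _
    have h1 : n - 2 - i = ℓ + d - i := by omega
    have h2 : r + 1 - 1 - i = r - i := by omega
    rw [h1, h2]
  rw [Finset.sum_congr rfl habc]
  have hz := aux_sum_choose ℓ d r
  have hdr : Nat.choose d r = 0 := by
    apply Nat.choose_eq_zero_of_lt
    omega
  rw [hdr] at hz
  have : ((∑ i ∈ Finset.range (r + 1),
      Nat.choose ℓ i * Nat.choose (ℓ + d - i) (r - i) : ℕ) : ZMod 2) = 0 := by
    simpa using hz
  have hdvd : 2 ∣ (∑ i ∈ Finset.range (r + 1),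
      Nat.choose ℓ i * Nat.choose (ℓ + d - i) (r - i)) :=
    (ZMod.natCast_eq_zero_iff _ 2).mp this
  omega
end

section
/- Assume Notation (t, k₀, B, D, C). Then: (a) the binomial coefficient C(n−2−(C+1), k−1−(C+1)) = C(2^t(B+1)−1, 2^t−1−D) is odd; (b) for every i with k₀ ≤ i ≤ C, the binomial coefficient C(n−2−i, k−1−i) is even; (c) if B is odd, then for every i with 0 ≤ i ≤ C, the binomial coefficient C(n−2−i, k−1−i) is even. -/
open Nat in
lemma odd_choose_aux : ∀ t B r : ℕ, r < 2 ^ t → Odd ((B * 2 ^ t + (2 ^ t - 1)).choose r) := by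
  intro t
  induction t with
  | zero => intro B r hr; interval_cases r; simp
  | succ t ih =>
    intro B r hr
    have h2 : Fact (Nat.Prime 2) := ⟨Nat.prime_two⟩
    have key := Choose.choose_modEq_choose_mod_mul_choose_div_nat
      (p := 2) (n := B * 2 ^ (t+1) + (2 ^ (t+1) - 1)) (k := r)
    have hP : 1 ≤ 2 ^ t := Nat.one_le_two_pow
    have hm2 : (B * 2 ^ (t+1) + (2 ^ (t+1) - 1)) % 2 = 1 := by
      have : B * 2 ^ (t+1) + (2 ^ (t+1) - 1) = 2 * (B * 2 ^ t + (2 ^ t - 1)) + 1 := by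
        rw [pow_succ]; ring_nf; omega
      omega
    have hmd : (B * 2 ^ (t+1) + (2 ^ (t+1) - 1)) / 2 = B * 2 ^ t + (2 ^ t - 1) := by
      have : B * 2 ^ (t+1) + (2 ^ (t+1) - 1) = 2 * (B * 2 ^ t + (2 ^ t - 1)) + 1 := by
        rw [pow_succ]; ring_nf; omega
      omega
    rw [hm2, hmd] at key
    have hr1 : r % 2 ≤ 1 := by omega
    have hc1 : Nat.choose 1 (r % 2) = 1 := by interval_cases h : r % 2 <;> simp
    rw [hc1, one_mul] at key
    have ihr : Odd ((B * 2 ^ t + (2 ^ t - 1)).choose (r / 2)) := by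
      apply ih; rw [pow_succ] at hr; omega
    unfold Nat.ModEq at key
    rw [Nat.odd_iff] at ihr ⊢
    omega

lemma even_of_carry {n k j : ℕ} (hkn : k ≤ n) (hj : 1 ≤ j)
    (hc : 2 ^ j ≤ k % 2 ^ j + (n - k) % 2 ^ j) : Even (n.choose k) := by
  have hn0 : 0 < n := by
    have h1 : k % 2 ^ j ≤ k := Nat.mod_le _ _
    have h2 : (n - k) % 2 ^ j ≤ n - k := Nat.mod_le _ _
    have : 0 < 2 ^ j := Nat.pow_pos (by norm_num)
    omega
  have hpow : 2 ^ j ≤ n := by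
    have h1 : k % 2 ^ j ≤ k := Nat.mod_le _ _
    have h2 : (n - k) % 2 ^ j ≤ n - k := Nat.mod_le _ _
    omega
  have hjlog : j ≤ Nat.log 2 n := (Nat.le_log_iff_pow_le one_lt_two hn0.ne').mpr hpow
  have hkey := Nat.Prime.emultiplicity_choose Nat.prime_two hkn
    (b := Nat.log 2 n + 1) (Nat.lt_succ_self _)
  have hmem : j ∈ Finset.filter (fun i => 2 ^ i ≤ k % 2 ^ i + (n - k) % 2 ^ i)
      (Finset.Ico 1 (Nat.log 2 n + 1)) := by
    simp only [Finset.mem_filter, Finset.mem_Ico]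
    exact ⟨⟨hj, by omega⟩, hc⟩
  have hcard : 1 ≤ (Finset.filter (fun i => 2 ^ i ≤ k % 2 ^ i + (n - k) % 2 ^ i)
      (Finset.Ico 1 (Nat.log 2 n + 1))).card := Finset.card_pos.mpr ⟨j, hmem⟩
  have : (1 : ℕ∞) ≤ emultiplicity 2 (n.choose k) := by
    rw [hkey]; exact_mod_cast hcard
  have hdvd := pow_dvd_of_le_emultiplicity this
  rw [pow_one] at hdvd
  exact even_iff_two_dvd.mpr hdvd



/-- With `k = 2^t + k₀` (`1 ≤ k₀ ≤ 2^t`), `n = k + 1 + 2^t·B + D` (`B ≥ 1`,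
`0 ≤ D < 2^t`) and `C = k₀ + D − 1`:
(a) `C(n−2−(C+1), k−1−(C+1)) = C(2^t(B+1)−1, 2^t−1−D)` is odd;
(b) for `k₀ ≤ i ≤ C`, `C(n−2−i, k−1−i)` is even;
(c) if `B` is odd, then for `0 ≤ i ≤ C`, `C(n−2−i, k−1−i)` is even. -/
theorem techlem (n k t k₀ B D C : ℕ)
    (hk₀ : 1 ≤ k₀) (hk₀' : k₀ ≤ 2 ^ t) (hk : k = 2 ^ t + k₀)
    (hB : 1 ≤ B) (hD : D < 2 ^ t) (hn : n = k + 1 + 2 ^ t * B + D)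
    (hC : C = k₀ + D - 1) :
    (Nat.choose (n - 2 - (C + 1)) (k - 1 - (C + 1)) =
        Nat.choose (2 ^ t * (B + 1) - 1) (2 ^ t - 1 - D) ∧
      Odd (Nat.choose (n - 2 - (C + 1)) (k - 1 - (C + 1)))) ∧
    (∀ i, k₀ ≤ i → i ≤ C → Even (Nat.choose (n - 2 - i) (k - 1 - i))) ∧
    (Odd B → ∀ i ≤ C, Even (Nat.choose (n - 2 - i) (k - 1 - i))) := by
  have hP : 1 ≤ 2 ^ t := Nat.one_le_two_pow
  have hmul : 2 ^ t * (B + 1) = 2 ^ t * B + 2 ^ t := by ring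
  have hbsucc : ∀ i, i ≥ k₀ → i ≤ C → Even (Nat.choose (n - 2 - i) (k - 1 - i)) := by
    intro i hi1 hi2
    have hD1 : 1 ≤ D := by omega
    have ht : 1 ≤ t := by
      rcases Nat.eq_zero_or_pos t with h | h
      · simp [h] at hD; omega
      · exact h
    apply even_of_carry (j := t) (by omega) ht
    have hsub : (n - 2 - i) - (k - 1 - i) = 2 ^ t * B + D := by omega
    have hrmod : (k - 1 - i) % 2 ^ t = k - 1 - i := Nat.mod_eq_of_lt (by omega)
    have hmmod : (2 ^ t * B + D) % 2 ^ t = D := by rw [Nat.mul_add_mod]; exact Nat.mod_eq_of_lt hD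
    rw [hsub, hrmod, hmmod]
    omega
  refine ⟨?_, hbsucc, ?_⟩
  · have ha1 : n - 2 - (C + 1) = 2 ^ t * (B + 1) - 1 := by omega
    have ha2 : k - 1 - (C + 1) = 2 ^ t - 1 - D := by omega
    rw [ha1, ha2]
    refine ⟨rfl, ?_⟩
    have := odd_choose_aux t B (2 ^ t - 1 - D) (by omega)
    have heq : 2 ^ t * (B + 1) - 1 = B * 2 ^ t + (2 ^ t - 1) := by
      rw [mul_comm (2 ^ t) B] at hmul; omega
    rwa [heq]
  · intro hBodd i hi
    rcases le_or_gt k₀ i with h | h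
    · exact hbsucc i h hi
    obtain ⟨b, hb⟩ := hBodd
    apply even_of_carry (j := t + 1) (by omega) (by omega)
    have hsub : (n - 2 - i) - (k - 1 - i) = 2 ^ t * B + D := by omega
    have hQ : 2 ^ (t + 1) = 2 ^ t * 2 := pow_succ 2 t
    have hrmod : (k - 1 - i) % 2 ^ (t + 1) = k - 1 - i := Nat.mod_eq_of_lt (by omega)
    have hdec : 2 ^ t * B + D = 2 ^ (t + 1) * b + (2 ^ t + D) := by
      rw [hQ, hb]; ring
    have hmmod : (2 ^ t * B + D) % 2 ^ (t + 1) = 2 ^ t + D := by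
      rw [hdec, Nat.mul_add_mod]; exact Nat.mod_eq_of_lt (by omega)
    rw [hsub, hrmod, hmmod]
    omega
end

section
/- Let t ≥ 0, let B ≥ 2 be even, let k be an integer with 2 ≤ k ≤ 2^{t+1}, and let m be an integer with 1 ≤ m ≤ k−2. Then ∑_{i=0}^{k−2} C(2^t·B + m, i) ≡ 0 (mod 2). -/
open Finset

lemma choose_two_pow_mul_add_modEq (t q m i : ℕ) (hm : m < 2 ^ (t + 1))
    (hi : i < 2 ^ (t + 1)) :
    Nat.choose (2 ^ (t + 1) * q + m) i ≡ Nat.choose m i [MOD 2] := by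
  haveI : Fact (Nat.Prime 2) := ⟨Nat.prime_two⟩
  rw [← Int.natCast_modEq_iff]
  have h1 := Choose.choose_modEq_choose_mul_prod_range_choose
    (p := 2) (n := 2 ^ (t + 1) * q + m) (k := i) (t + 1)
  have h2 := Choose.choose_modEq_prod_range_choose (p := 2) (n := m) (k := i) hm hi
  have hdig : ∀ j ∈ range (t + 1),
      ((2 ^ (t + 1) * q + m) / 2 ^ j % 2 : ℕ) = m / 2 ^ j % 2 := by
    intro j hj
    rw [mem_range] at hj
    have hsplit : 2 ^ (t + 1) * q = 2 ^ j * (2 * (2 ^ (t - j) * q)) := by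
      rw [show t + 1 = j + (1 + (t - j)) by omega, pow_add, pow_add]
      ring
    rw [hsplit, Nat.mul_add_div (by positivity)]
    omega
  have hhead : (2 ^ (t + 1) * q + m) / 2 ^ (t + 1) = q := by
    rw [Nat.mul_add_div (by positivity), Nat.div_eq_of_lt hm]; omega
  have hi0 : i / 2 ^ (t + 1) = 0 := Nat.div_eq_of_lt hi
  rw [hhead, hi0] at h1
  simp only [Nat.choose_zero_right, one_mul] at h1
  refine h1.trans ?_
  have : ∏ j ∈ range (t + 1),
      Nat.choose ((2 ^ (t + 1) * q + m) / 2 ^ j % 2) (i / 2 ^ j % 2)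
      = ∏ j ∈ range (t + 1), Nat.choose (m / 2 ^ j % 2) (i / 2 ^ j % 2) :=
    Finset.prod_congr rfl fun j hj => by rw [hdig j hj]
  rw [this, Nat.cast_one, one_mul]
  exact_mod_cast h2.symm

/-- For `B ≥ 2` even, `2 ≤ k ≤ 2^{t+1}` and `1 ≤ m ≤ k − 2`,
`∑_{i=0}^{k−2} C(2^t·B + m, i) ≡ 0 (mod 2)`. -/
theorem sum_choose_even (t B k m : ℕ) (hBeven : Even B) (hB : 2 ≤ B)
    (hk : 2 ≤ k) (hk' : k ≤ 2 ^ (t + 1)) (hm : 1 ≤ m) (hm' : m ≤ k - 2) :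
    (∑ i ∈ Finset.range (k - 1), Nat.choose (2 ^ t * B + m) i) % 2 = 0 := by
  obtain ⟨b, hb⟩ := hBeven
  have hn : 2 ^ t * B + m = 2 ^ (t + 1) * b + m := by
    rw [hb, pow_succ]; ring_nf
  have hmlt : m < 2 ^ (t + 1) := by omega
  have hmod : (∑ i ∈ Finset.range (k - 1), Nat.choose (2 ^ t * B + m) i)
      ≡ ∑ i ∈ Finset.range (k - 1), Nat.choose m i [MOD 2] := by
    rw [hn]
    unfold Nat.ModEq
    rw [Finset.sum_nat_mod, Finset.sum_nat_mod (Finset.range (k - 1)) 2 fun i => Nat.choose m i]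
    congr 1
    refine Finset.sum_congr rfl fun i hi => ?_
    rw [mem_range] at hi
    exact choose_two_pow_mul_add_modEq t b m i hmlt (by omega)
  have hsum : ∑ i ∈ Finset.range (k - 1), Nat.choose m i = 2 ^ m := by
    rw [← Nat.sum_range_choose m]
    symm
    apply Finset.sum_subset
    · intro x hx; rw [mem_range] at *; omega
    · intro x _ hx
      rw [mem_range] at hx
      exact Nat.choose_eq_zero_of_lt (by omega)
  have := hmod.trans (by rw [hsum])
  have h2 : (2 : ℕ) ^ m % 2 = 0 := by
    have : (2:ℕ) ∣ 2 ^ m := dvd_pow_self 2 (by omega)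
    omega
  calc (∑ i ∈ Finset.range (k - 1), Nat.choose (2 ^ t * B + m) i) % 2
      = 2 ^ m % 2 := this
    _ = 0 := h2
end

section
/- Let t ≥ 1 and let a, b, m be natural numbers such that a + b + 1 ≡ 0 (mod 2^{t+1}) and m mod 2^t ≠ 0. Then the product C(a, m) · C(b, m) is even. -/
lemma even_choose_of_bit (n k i : ℕ) (hn : n / 2 ^ i % 2 = 0) (hk : k / 2 ^ i % 2 = 1) :
    2 ∣ Nat.choose n k := by
  haveI : Fact (Nat.Prime 2) := ⟨Nat.prime_two⟩
  have h := Choose.choose_modEq_choose_mul_prod_range_choose (p := 2) (n := n) (k := k) (i + 1)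
  have hzero : ∏ j ∈ Finset.range (i + 1), Nat.choose (n / 2 ^ j % 2) (k / 2 ^ j % 2) = 0 := by
    apply Finset.prod_eq_zero (Finset.self_mem_range_succ i)
    rw [hn, hk]
    rfl
  have h0 : (Nat.choose n k : ℤ) ≡ 0 [ZMOD 2] := by
    refine h.trans ?_
    rw [hzero]
    simp
  rw [← Int.natCast_dvd_natCast]
  exact_mod_cast Int.modEq_zero_iff_dvd.mp h0

lemma complementary_bit (t a b i : ℕ) (hit : i < t)
    (hab : (a + b + 1) % 2 ^ (t + 1) = 0) :
    a / 2 ^ i % 2 + b / 2 ^ i % 2 = 1 := by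
  have hdvd : 2 ^ (i + 1) ∣ a + b + 1 :=
    dvd_trans (pow_dvd_pow 2 (by omega)) (Nat.dvd_of_mod_eq_zero hab)
  set N := 2 ^ (i + 1) with hN
  have hNpos : 0 < N := by positivity
  set A := a % N with hA
  set B := b % N with hB
  have hAlt : A < N := Nat.mod_lt _ hNpos
  have hBlt : B < N := Nat.mod_lt _ hNpos
  have hmodeq : (A + B + 1) ≡ (a + b + 1) [MOD N] :=
    ((Nat.mod_modEq a N).add (Nat.mod_modEq b N)).add_right 1
  have hdvd' : N ∣ A + B + 1 :=
    Nat.modEq_zero_iff_dvd.mp (hmodeq.trans (Nat.modEq_zero_iff_dvd.mpr hdvd))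
  have hsum : A + B + 1 = N := by
    have hle : N ≤ A + B + 1 := Nat.le_of_dvd (by omega) hdvd'
    have hdvd'' : N ∣ A + B + 1 - N := (Nat.dvd_sub hdvd' dvd_rfl)
    have hlt : A + B + 1 - N < N := by omega
    have := Nat.eq_zero_of_dvd_of_lt hdvd'' hlt |>.symm
    omega
  -- extract top bits of A and B
  have hA' : A / 2 ^ i = a / 2 ^ i % 2 := by
    rw [hA, hN, pow_succ, Nat.mod_mul_right_div_self]
  have hB' : B / 2 ^ i = b / 2 ^ i % 2 := by
    rw [hB, hN, pow_succ, Nat.mod_mul_right_div_self]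
  have hAeq : 2 ^ i * (A / 2 ^ i) + A % 2 ^ i = A := Nat.div_add_mod A (2 ^ i)
  have hBeq : 2 ^ i * (B / 2 ^ i) + B % 2 ^ i = B := Nat.div_add_mod B (2 ^ i)
  have hA0 : A % 2 ^ i < 2 ^ i := Nat.mod_lt _ (by positivity)
  have hB0 : B % 2 ^ i < 2 ^ i := Nat.mod_lt _ (by positivity)
  have hNeq2 : N = 2 * 2 ^ i := by rw [hN, pow_succ, mul_comm]
  have hA1 : A / 2 ^ i < 2 := Nat.div_lt_iff_lt_mul (by positivity) |>.mpr (by omega)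
  have hB1 : B / 2 ^ i < 2 := Nat.div_lt_iff_lt_mul (by positivity) |>.mpr (by omega)
  rw [← hA', ← hB']
  rcases (by omega : A / 2 ^ i = 0 ∨ A / 2 ^ i = 1) with h1 | h1 <;>
    rcases (by omega : B / 2 ^ i = 0 ∨ B / 2 ^ i = 1) with h2 | h2 <;>
      rw [h1, h2] <;> rw [h1] at hAeq <;> rw [h2] at hBeq <;>
        simp only [mul_zero, mul_one, zero_add] at hAeq hBeq <;> omega

/-- If `t ≥ 1`, `a + b + 1 ≡ 0 (mod 2^{t+1})` (so the binary digits of `a` and `b`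
in positions `0,…,t` are complementary) and `m mod 2^t ≠ 0`, then
`C(a, m) · C(b, m)` is even. -/
theorem choose_mul_choose_even (t a b m : ℕ) (ht : 1 ≤ t)
    (hab : (a + b + 1) % 2 ^ (t + 1) = 0) (hm : m % 2 ^ t ≠ 0) :
    Even (Nat.choose a m * Nat.choose b m) := by
  -- find a bit i < t where m has bit 1
  obtain ⟨i, hit, hmi⟩ : ∃ i, i < t ∧ m / 2 ^ i % 2 = 1 := by
    by_contra hc
    push_neg at hc
    apply hm
    apply Nat.zero_of_testBit_eq_false
    intro j
    rw [Nat.testBit_mod_two_pow]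
    rcases lt_or_ge j t with hj | hj
    · have h1 := hc j hj
      have h2 : m / 2 ^ j % 2 < 2 := Nat.mod_lt _ (by norm_num)
      simp [Nat.testBit_eq_decide_div_mod_eq]
      omega
    · simp [Nat.not_lt.mpr hj]
  have key := complementary_bit t a b i hit hab
  have : a / 2 ^ i % 2 = 0 ∨ b / 2 ^ i % 2 = 0 := by omega
  rcases this with h | h
  · exact even_iff_two_dvd.mpr ((even_choose_of_bit a m i h hmi).mul_right _)
  · exact even_iff_two_dvd.mpr ((even_choose_of_bit b m i h hmi).mul_left _)
end

section
/- Assume Notation (t, k₀, B, D, C) with B even and D ≥ 1, and set ℓ = ⌊log₂ D⌋. Assume C − 2^{⌊log₂ C⌋} < 2^{ℓ+1}. Then for all integers j, g with 0 ≤ j ≤ C and 0 ≤ g ≤ C, the product C(C, j) · C(C, g) · C(2^t(B+1) + (C−j−g) − 1, 2^t·B + D) · C(2^t(B+1) − 1 − (C−j−g), 2^t·B + D) is odd if and only if C(C,j) and C(C,g) are both odd, 2^{ℓ+1} divides C−j−g, and |C−j−g| < 2^t. (The first factor of the two middle binomial coefficients is interpreted with integer top 2^t(B+1)+(C−j−g)−1,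 which is positive under these hypotheses.) -/
private lemma and_eq_zero_iff' (m n : ℕ) :
    m &&& n = 0 ↔ ∀ i, (m.testBit i && n.testBit i) = false := by
  constructor
  · intro h i
    have := congrArg (Nat.testBit · i) h
    simpa using this
  · intro h
    apply Nat.eq_of_testBit_eq
    intro i
    simpa using h i

private lemma and_half (m n : ℕ) (hmn : m % 2 = 0 ∨ n % 2 = 0) :
    m &&& n = 0 ↔ (m / 2) &&& (n / 2) = 0 := by
  rw [and_eq_zero_iff', and_eq_zero_iff']
  constructor
  · intro h i
    have := h (i + 1)
    rwa [Nat.testBit_add_one, Nat.testBit_add_one] at this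
  · intro h i
    cases i with
    | zero =>
      rcases hmn with h' | h' <;> simp [Nat.testBit_zero, h']
    | succ i =>
      rw [Nat.testBit_add_one, Nat.testBit_add_one]
      exact h i

private lemma kummer_aux : ∀ s : ℕ, ∀ m n : ℕ, m + n ≤ s →
    (Odd ((m + n).choose n) ↔ m &&& n = 0) := by
  intro s
  induction s with
  | zero =>
    intro m n h
    have hm : m = 0 := by omega
    have hn : n = 0 := by omega
    subst hm; subst hn; simp
  | succ s ih =>
    intro m n h
    haveI : Fact (Nat.Prime 2) := ⟨Nat.prime_two⟩
    have lucas : (m + n).choose n % 2 =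
        (((m + n) % 2).choose (n % 2) * (((m + n) / 2).choose (n / 2))) % 2 :=
      Choose.choose_modEq_choose_mod_mul_choose_div_nat
    rw [Nat.odd_iff, lucas, ← Nat.odd_iff, Nat.odd_mul]
    have ihh := ih (m / 2) (n / 2) (by omega)
    rcases Nat.mod_two_eq_zero_or_one m with hm | hm <;>
      rcases Nat.mod_two_eq_zero_or_one n with hn | hn
    · have e1 : (m + n) % 2 = 0 := by omega
      have e2 : (m + n) / 2 = m / 2 + n / 2 := by omega
      rw [e1, hn, e2, and_half m n (Or.inl hm)]
      simpa using ihh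
    · have e1 : (m + n) % 2 = 1 := by omega
      have e2 : (m + n) / 2 = m / 2 + n / 2 := by omega
      rw [e1, hn, e2, and_half m n (Or.inl hm)]
      simpa using ihh
    · have e1 : (m + n) % 2 = 1 := by omega
      have e2 : (m + n) / 2 = m / 2 + n / 2 := by omega
      rw [e1, hn, e2, and_half m n (Or.inr hn)]
      simpa using ihh
    · have e1 : (m + n) % 2 = 0 := by omega
      rw [e1, hn]
      have hne : m &&& n ≠ 0 := by
        intro h0
        have := (and_eq_zero_iff' m n).mp h0 0
        simp [Nat.testBit_zero, hm, hn] at this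
      simp [hne]

private lemma kummer (m n : ℕ) : Odd ((m + n).choose n) ↔ m &&& n = 0 :=
  kummer_aux (m + n) m n le_rfl

private lemma andA (t B' D x : ℕ) (hD : D < 2 ^ (t + 1)) (hx : x < 2 ^ (t + 1)) :
    x &&& (2 ^ (t + 1) * B' + D) = x &&& D := by
  apply Nat.eq_of_testBit_eq
  intro i
  simp only [Nat.testBit_and]
  by_cases hi : i < t + 1
  · rw [Nat.testBit_two_pow_mul_add _ hD, if_pos hi]
  · rw [Nat.testBit_lt_two_pow
      (lt_of_lt_of_le hx (Nat.pow_le_pow_right (by norm_num) (le_of_not_gt hi)))]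
    simp

private lemma andB (s x D : ℕ) (hD : D < 2 ^ s) : x &&& D = (x % 2 ^ s) &&& D := by
  apply Nat.eq_of_testBit_eq
  intro i
  simp only [Nat.testBit_and, Nat.testBit_mod_two_pow]
  by_cases hi : i < s
  · simp [hi]
  · rw [Nat.testBit_lt_two_pow
      (lt_of_lt_of_le hD (Nat.pow_le_pow_right (by norm_num) (le_of_not_gt hi)))]
    simp [hi]

private lemma andCL (s D x : ℕ) (hD : D < 2 ^ s) (hx : x < 2 ^ s) :
    (2 ^ s - 1 - x) &&& D = 0 ↔ D &&& x = D := by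
  have h1 : 2 ^ s - 1 - x = 2 ^ s - (x + 1) := by omega
  rw [h1, and_eq_zero_iff']
  constructor
  · intro h
    apply Nat.eq_of_testBit_eq
    intro i
    have hi := h i
    rw [Nat.testBit_two_pow_sub_succ hx] at hi
    simp only [Nat.testBit_and]
    cases hd : D.testBit i
    · simp
    · have his : i < s := by
        by_contra hc
        have : D.testBit i = false := Nat.testBit_lt_two_pow
          (lt_of_lt_of_le hD (Nat.pow_le_pow_right (by norm_num) (le_of_not_gt hc)))
        rw [hd] at this
        exact Bool.noConfusion this
      rw [hd] at hi
      cases hx' : x.testBit i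
      · simp [his, hx'] at hi
      · simp [hd, hx']
  · intro h i
    rw [Nat.testBit_two_pow_sub_succ hx]
    have hbit := congrArg (Nat.testBit · i) h
    simp only [Nat.testBit_and] at hbit
    cases hd : D.testBit i
    · simp [hd]
    · rw [hd] at hbit
      simp only [Bool.true_and] at hbit
      simp [hbit, hd]

private lemma coreP0 (s D M a b : ℕ) (h1 : 2 ^ s ≤ 2 * D) (h2 : D < 2 ^ s)
    (hM : M % 2 ^ s = 2 ^ s - 1 - D) (hab : a + b = 2 * M) :
    (((a % 2 ^ s) &&& D = 0) ∧ ((b % 2 ^ s) &&& D = 0)) ↔ a % 2 ^ s = 2 ^ s - 1 - D := by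
  have hQ0 : 0 < 2 ^ s := Nat.two_pow_pos s
  have hαQ : a % 2 ^ s < 2 ^ s := Nat.mod_lt _ hQ0
  have hβQ : b % 2 ^ s < 2 ^ s := Nat.mod_lt _ hQ0
  have h2m : 2 * (2 ^ s - 1 - D) < 2 ^ s := by omega
  have e0 : (a % 2 ^ s + b % 2 ^ s) % 2 ^ s = (a + b) % 2 ^ s := (Nat.add_mod a b _).symm
  have e1 : (2 * (M % 2 ^ s)) % 2 ^ s = (2 * M) % 2 ^ s :=
    Nat.ModEq.mul_left 2 (Nat.mod_modEq M _)
  have hsum : (a % 2 ^ s + b % 2 ^ s) % 2 ^ s = 2 * (2 ^ s - 1 - D) := by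
    rw [e0, hab, ← e1, hM, Nat.mod_eq_of_lt h2m]
  constructor
  · rintro ⟨hα0, hβ0⟩
    have hα' : a % 2 ^ s ≤ 2 ^ s - 1 - D := by
      have hrw : 2 ^ s - 1 - (2 ^ s - 1 - (a % 2 ^ s)) = a % 2 ^ s := by omega
      have hcl := (andCL s D (2 ^ s - 1 - (a % 2 ^ s)) h2 (by omega)).mp (by rwa [hrw])
      have := Nat.and_le_right (n := D) (m := 2 ^ s - 1 - (a % 2 ^ s))
      omega
    have hβ' : b % 2 ^ s ≤ 2 ^ s - 1 - D := by
      have hrw : 2 ^ s - 1 - (2 ^ s - 1 - (b % 2 ^ s)) = b % 2 ^ s := by omega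
      have hcl := (andCL s D (2 ^ s - 1 - (b % 2 ^ s)) h2 (by omega)).mp (by rwa [hrw])
      have := Nat.and_le_right (n := D) (m := 2 ^ s - 1 - (b % 2 ^ s))
      omega
    have hlt : a % 2 ^ s + b % 2 ^ s < 2 ^ s := by omega
    have := Nat.mod_eq_of_lt hlt
    omega
  · intro hαm
    have hβm : b % 2 ^ s = 2 ^ s - 1 - D := by
      rcases Nat.lt_or_ge (a % 2 ^ s + b % 2 ^ s) (2 ^ s) with hc | hc
      · have := Nat.mod_eq_of_lt hc
        omega
      · have h' : (a % 2 ^ s + b % 2 ^ s) % 2 ^ s = a % 2 ^ s + b % 2 ^ s - 2 ^ s := by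
          rw [Nat.mod_eq_sub_mod hc]
          exact Nat.mod_eq_of_lt (by omega)
        omega
    rw [hαm, hβm]
    exact ⟨(andCL s D D h2 h2).mpr (Nat.and_self D), (andCL s D D h2 h2).mpr (Nat.and_self D)⟩

set_option maxHeartbeats 2000000 in
/-- With `k = 2^t + k₀` (`1 ≤ k₀ ≤ 2^t`), `n = k + 1 + 2^t·B + D` (`B ≥ 1` even,
`1 ≤ D < 2^t`), `C = k₀ + D − 1`, `ℓ = ⌊log₂ D⌋`, and assuming
`C − 2^⌊log₂ C⌋ < 2^{ℓ+1}`: for `0 ≤ j, g ≤ C`, writing `E = C − j − g ∈ ℤ`, the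
product `C(C,j) · C(C,g) · C(2^t(B+1)+E−1, 2^tB+D) · C(2^t(B+1)−1−E, 2^tB+D)`
is odd iff `C(C,j)` and `C(C,g)` are odd, `2^{ℓ+1} ∣ E` and `|E| < 2^t`.
(The integer tops are converted to `ℕ` via `Int.toNat`; they are positive under
these hypotheses.) -/
theorem P0_odd_iff (n k t k₀ B D C ℓ : ℕ)
    (hk₀ : 1 ≤ k₀) (hk₀' : k₀ ≤ 2 ^ t) (hk : k = 2 ^ t + k₀)
    (hB : 1 ≤ B) (hD : D < 2 ^ t) (hn : n = k + 1 + 2 ^ t * B + D)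
    (hC : C = k₀ + D - 1)
    (hBeven : Even B) (hD1 : 1 ≤ D) (hl : ℓ = Nat.log 2 D)
    (hCsmall : C - 2 ^ (Nat.log 2 C) < 2 ^ (ℓ + 1))
    (j g : ℕ) (hj : j ≤ C) (hg : g ≤ C) (E : ℤ) (hE : E = (C : ℤ) - j - g) :
    Odd (Nat.choose C j * Nat.choose C g *
        Nat.choose ((2 ^ t * (B + 1) : ℤ) + E - 1).toNat (2 ^ t * B + D) *
        Nat.choose ((2 ^ t * (B + 1) : ℤ) - 1 - E).toNat (2 ^ t * B + D)) ↔
      (Odd (Nat.choose C j) ∧ Odd (Nat.choose C g) ∧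
        ((2 ^ (ℓ + 1) : ℤ) ∣ E) ∧ |E| < 2 ^ t) := by
  have hDP : D < 2 ^ (ℓ + 1) := by rw [hl]; exact Nat.lt_pow_succ_log_self one_lt_two D
  have hPD : 2 ^ ℓ ≤ D := by rw [hl]; exact Nat.pow_log_le_self 2 (by omega)
  have hlt : ℓ + 1 ≤ t := by
    have h' : 2 ^ ℓ < 2 ^ t := lt_of_le_of_lt hPD hD
    have := (Nat.pow_lt_pow_iff_right one_lt_two).mp h'
    omega
  have hP2D : 2 ^ (ℓ + 1) ≤ 2 * D := by
    rw [pow_succ]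
    omega
  have hPt : (2 : ℤ) ^ (ℓ + 1) ∣ (2 : ℤ) ^ t := pow_dvd_pow 2 hlt
  have hpow1 : (2 : ℕ) ^ (t + 1) = 2 * 2 ^ t := by ring
  have hDz : (1 : ℤ) ≤ (D : ℤ) := by exact_mod_cast hD1
  have hDtz : (D : ℤ) < (2 : ℤ) ^ t := by exact_mod_cast hD
  have hDPz : (D : ℤ) < (2 : ℤ) ^ (ℓ + 1) := by exact_mod_cast hDP
  rw [Nat.odd_mul, Nat.odd_mul, Nat.odd_mul]
  have key : (Odd (Nat.choose ((2 ^ t * (B + 1) : ℤ) + E - 1).toNat (2 ^ t * B + D)) ∧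
      Odd (Nat.choose ((2 ^ t * (B + 1) : ℤ) - 1 - E).toNat (2 ^ t * B + D))) ↔
      (((2 ^ (ℓ + 1) : ℤ) ∣ E) ∧ |E| < 2 ^ t) := by
    have hN0 : 2 ^ t * B + D ≠ 0 := by omega
    by_cases hc1 : (2 : ℤ) ^ t - D ≤ E
    · have h4 : ((2 ^ t * (B + 1) : ℤ) - 1 - E).toNat < 2 ^ t * B + D := by
        rw [Int.toNat_lt' (Nat.pos_of_ne_zero hN0)]
        push_cast
        nlinarith [hc1]
      have hOdd4 : ¬ Odd (Nat.choose ((2 ^ t * (B + 1) : ℤ) - 1 - E).toNat (2 ^ t * B + D)) := by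
        rw [Nat.choose_eq_zero_of_lt h4]
        simp
      have hRHS : ¬ (((2 ^ (ℓ + 1) : ℤ) ∣ E) ∧ |E| < 2 ^ t) := by
        rintro ⟨hdvd, habs⟩
        rw [abs_lt] at habs
        have hdvd2 : (2 : ℤ) ^ (ℓ + 1) ∣ ((2 : ℤ) ^ t - E) := dvd_sub hPt hdvd
        have hpos : 0 < (2 : ℤ) ^ t - E := by linarith [habs.2]
        have hle := Int.le_of_dvd hpos hdvd2
        linarith
      constructor
      · rintro ⟨h3, h4⟩
        exact absurd h4 hOdd4
      · intro hr
        exact absurd hr hRHS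
    · by_cases hc2 : E ≤ (D : ℤ) - 2 ^ t
      · have h3 : ((2 ^ t * (B + 1) : ℤ) + E - 1).toNat < 2 ^ t * B + D := by
          rw [Int.toNat_lt' (Nat.pos_of_ne_zero hN0)]
          push_cast
          nlinarith [hc2]
        have hOdd3 : ¬ Odd (Nat.choose ((2 ^ t * (B + 1) : ℤ) + E - 1).toNat (2 ^ t * B + D)) := by
          rw [Nat.choose_eq_zero_of_lt h3]
          simp
        have hRHS : ¬ (((2 ^ (ℓ + 1) : ℤ) ∣ E) ∧ |E| < 2 ^ t) := by
          rintro ⟨hdvd, habs⟩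
          rw [abs_lt] at habs
          have hdvd2 : (2 : ℤ) ^ (ℓ + 1) ∣ ((2 : ℤ) ^ t + E) := dvd_add hPt hdvd
          have hpos : 0 < (2 : ℤ) ^ t + E := by linarith [habs.1]
          have hle := Int.le_of_dvd hpos hdvd2
          linarith
        constructor
        · rintro ⟨h3, h4⟩
          exact absurd h3 hOdd3
        · intro hr
          exact absurd hr hRHS
      · push_neg at hc1 hc2
        set M : ℕ := 2 ^ t - 1 - D with hMdef
        have hcast : ((2 ^ t : ℕ) : ℤ) = (2 : ℤ) ^ t := by push_cast; ring
        have hM : (M : ℤ) = (2 : ℤ) ^ t - 1 - (D : ℤ) := by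
          rw [← hcast]; omega
        have hEa : 0 ≤ (M : ℤ) + E := by rw [hM]; linarith
        have hEb : 0 ≤ (M : ℤ) - E := by rw [hM]; linarith
        obtain ⟨a, ha⟩ : ∃ a : ℕ, (a : ℤ) = (M : ℤ) + E :=
          ⟨((M : ℤ) + E).toNat, Int.toNat_of_nonneg hEa⟩
        obtain ⟨b, hb⟩ : ∃ b : ℕ, (b : ℤ) = (M : ℤ) - E :=
          ⟨((M : ℤ) - E).toNat, Int.toNat_of_nonneg hEb⟩
        have hab : a + b = 2 * M := by
          have : (a : ℤ) + b = 2 * M := by rw [ha, hb]; ring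
          exact_mod_cast this
        have haN : ((2 ^ t * (B + 1) : ℤ) + E - 1).toNat = 2 ^ t * B + D + a := by
          have h1 : ((2 ^ t * (B + 1) : ℤ) + E - 1) = ((2 ^ t * B + D + a : ℕ) : ℤ) := by
            push_cast
            rw [ha, hM]
            ring
          rw [h1, Int.toNat_natCast]
        have hbN : ((2 ^ t * (B + 1) : ℤ) - 1 - E).toNat = 2 ^ t * B + D + b := by
          have h1 : ((2 ^ t * (B + 1) : ℤ) - 1 - E) = ((2 ^ t * B + D + b : ℕ) : ℤ) := by
            push_cast
            rw [hb, hM]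
            ring
          rw [h1, Int.toNat_natCast]
        rw [haN, hbN]
        have ha2 : a < 2 ^ (t + 1) := by omega
        have hb2 : b < 2 ^ (t + 1) := by omega
        have hD2 : D < 2 ^ (t + 1) := by omega
        obtain ⟨B2, hB2⟩ := hBeven
        have hNsplit : 2 ^ t * B + D = 2 ^ (t + 1) * B2 + D := by
          rw [hB2, pow_succ]; ring
        have hchain : ∀ x : ℕ, x < 2 ^ (t + 1) →
            (Odd ((2 ^ t * B + D + x).choose (2 ^ t * B + D)) ↔
              (x % 2 ^ (ℓ + 1)) &&& D = 0) := by
          intro x hx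
          rw [show 2 ^ t * B + D + x = x + (2 ^ t * B + D) from by ring, kummer,
            hNsplit, andA t B2 D x hD2 hx, andB (ℓ + 1) x D hDP]
        rw [hchain a ha2, hchain b hb2]
        have hPle2 : 2 ^ (ℓ + 1) ≤ 2 ^ t := Nat.pow_le_pow_right (by norm_num) hlt
        obtain ⟨q, hq⟩ : 2 ^ (ℓ + 1) ∣ 2 ^ t := pow_dvd_pow 2 hlt
        have hmul : 2 ^ (ℓ + 1) * (q - 1) = 2 ^ (ℓ + 1) * q - 2 ^ (ℓ + 1) :=
          Nat.mul_sub_left_distrib _ _ 1 |>.trans (by rw [Nat.mul_one])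
        have hMsplit : M = 2 ^ (ℓ + 1) * (q - 1) + (2 ^ (ℓ + 1) - 1 - D) := by
          rw [hmul]; omega
        have hMmod : M % 2 ^ (ℓ + 1) = 2 ^ (ℓ + 1) - 1 - D := by
          rw [hMsplit, Nat.mul_add_mod, Nat.mod_eq_of_lt (by omega)]
        rw [coreP0 (ℓ + 1) D M a b hP2D hDP hMmod hab]
        have habs : |E| < 2 ^ t := by
          rw [abs_lt]
          constructor <;> linarith
        constructor
        · intro hcond
          refine ⟨?_, habs⟩
          have h1 : ((a % 2 ^ (ℓ + 1) : ℕ) : ℤ) = ((M % 2 ^ (ℓ + 1) : ℕ) : ℤ) := by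
            rw [hcond, hMmod]
          push_cast at h1
          have h2 : Int.ModEq ((2 : ℤ) ^ (ℓ + 1)) (M : ℤ) (a : ℤ) := h1.symm
          have h3 := h2.dvd
          have hE' : E = (a : ℤ) - M := by omega
          rw [hE']
          exact h3
        · rintro ⟨hdvd, -⟩
          have hd2 : (2 : ℤ) ^ (ℓ + 1) ∣ (M : ℤ) - a := by
            rw [show (M : ℤ) - a = -E from by omega]
            exact dvd_neg.mpr hdvd
          have h1 : Int.ModEq ((2 : ℤ) ^ (ℓ + 1)) (a : ℤ) (M : ℤ) :=
            Int.modEq_iff_dvd.mpr hd2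
          have h2 : a % 2 ^ (ℓ + 1) = M % 2 ^ (ℓ + 1) := by
            have h1' : (a : ℤ) % (2 : ℤ) ^ (ℓ + 1) = (M : ℤ) % (2 : ℤ) ^ (ℓ + 1) := h1
            exact_mod_cast h1'
          rw [h2, hMmod]
  constructor
  · rintro ⟨⟨⟨h1', h2'⟩, h3⟩, h4⟩
    exact ⟨h1', h2', key.mp ⟨h3, h4⟩⟩
  · rintro ⟨h1', h2', hr⟩
    exact ⟨⟨⟨h1', h2'⟩, (key.mpr hr).1⟩, (key.mpr hr).2⟩
end

section
/- Assume Notation (t, k₀, B, D, C) with B even and D ≥ 1, set ℓ = ⌊log₂ D⌋, and assume C − 2^{⌊log₂ C⌋} < 2^{ℓ+1}. Let j, g be integers with 0 ≤ j, g ≤ C such that C(C,j) and C(C,g) are odd, 2^{ℓ+1} divides C−j−g, and |C−j−g| < 2^t. Then the binomial coefficient C(2^t(B+1)−C−2, C−j−2g) (interpreted as 0 when C−j−2g < 0) is even, except possibly when (g = 0 and j = C) or when (C = 2^{ℓ+2}−1, t ≥ ℓ+2, and C−j−g = 2^{ℓ+1}). -/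
/-- If `choose a b` is odd, then for every `μ`, `b % 2^μ ≤ a % 2^μ`
(digit domination, via Lucas's theorem). -/
lemma odd_choose_mod_le : ∀ (μ a b : ℕ), Odd (a.choose b) → b % 2 ^ μ ≤ a % 2 ^ μ := by
  intro μ
  induction μ with
  | zero => intro a b _; simp [Nat.mod_one]
  | succ μ ih =>
    intro a b h
    have : Fact (Nat.Prime 2) := ⟨Nat.prime_two⟩
    have lucas := Choose.choose_modEq_choose_mod_mul_choose_div_nat (n := a) (k := b) (p := 2)
    have hodd : Odd (Nat.choose (a % 2) (b % 2) * Nat.choose (a / 2) (b / 2)) := by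
      rw [Nat.odd_iff] at h ⊢
      rw [Nat.ModEq] at lucas
      omega
    rw [Nat.odd_mul] at hodd
    have h1 : b % 2 ≤ a % 2 := by
      by_contra hlt
      rw [Nat.choose_eq_zero_of_lt (by omega)] at hodd
      simpa using hodd.1
    have h2 := ih (a / 2) (b / 2) hodd.2
    have ea : a % 2 ^ (μ + 1) = a % 2 + 2 * (a / 2 % 2 ^ μ) := by
      rw [pow_succ']; exact Nat.mod_mul
    have eb : b % 2 ^ (μ + 1) = b % 2 + 2 * (b / 2 % 2 ^ μ) := by
      rw [pow_succ']; exact Nat.mod_mul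
    omega

lemma mod_add_small {a b μ : ℕ} (hd : 2 ^ μ ∣ a) (hb : b < 2 ^ μ) : (a + b) % 2 ^ μ = b := by
  obtain ⟨q, rfl⟩ := hd
  rw [Nat.mul_add_mod, Nat.mod_eq_of_lt hb]

/-- With `k = 2^t + k₀` (`1 ≤ k₀ ≤ 2^t`), `n = k + 1 + 2^t·B + D` (`B ≥ 1` even,
`1 ≤ D < 2^t`), `C = k₀ + D − 1`, `ℓ = ⌊log₂ D⌋`, `C − 2^⌊log₂ C⌋ < 2^{ℓ+1}`:
if `0 ≤ j, g ≤ C`, `C(C,j)` and `C(C,g)` are odd, `2^{ℓ+1} ∣ C−j−g` and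
`|C−j−g| < 2^t`, then `C(2^t(B+1)−C−2, C−j−2g)` (interpreted as `0` when
`C−j−2g < 0`) is even, except possibly when (`g = 0` and `j = C`) or when
(`C = 2^{ℓ+2}−1`, `t ≥ ℓ+2` and `C−j−g = 2^{ℓ+1}`). -/
theorem third_coeff_even (n k t k₀ B D C ℓ : ℕ)
    (hk₀ : 1 ≤ k₀) (hk₀' : k₀ ≤ 2 ^ t) (hk : k = 2 ^ t + k₀)
    (hB : 1 ≤ B) (hD : D < 2 ^ t) (hn : n = k + 1 + 2 ^ t * B + D)
    (hC : C = k₀ + D - 1)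
    (hBeven : Even B) (hD1 : 1 ≤ D) (hl : ℓ = Nat.log 2 D)
    (hCsmall : C - 2 ^ (Nat.log 2 C) < 2 ^ (ℓ + 1))
    (j g : ℕ) (hj : j ≤ C) (hg : g ≤ C)
    (hCj : Odd (Nat.choose C j)) (hCg : Odd (Nat.choose C g))
    (hdvd : (2 ^ (ℓ + 1) : ℤ) ∣ ((C : ℤ) - j - g))
    (habs : |(C : ℤ) - j - g| < 2 ^ t)
    (hexc : ¬((g = 0 ∧ j = C) ∨
      (C = 2 ^ (ℓ + 2) - 1 ∧ ℓ + 2 ≤ t ∧ (C : ℤ) - j - g = 2 ^ (ℓ + 1)))) :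
    Even (if 0 ≤ (C : ℤ) - j - 2 * g then
        Nat.choose (2 ^ t * (B + 1) - C - 2) ((C : ℤ) - j - 2 * g).toNat
      else 0) := by
  set e := Nat.log 2 C with he
  -- cast bridges for omega
  have zm : (((2 : ℕ) ^ (ℓ + 1) : ℕ) : ℤ) = (2 : ℤ) ^ (ℓ + 1) := by push_cast; ring
  have ze : (((2 : ℕ) ^ e : ℕ) : ℤ) = (2 : ℤ) ^ e := by push_cast; ring
  have zt : (((2 : ℕ) ^ t : ℕ) : ℤ) = (2 : ℤ) ^ t := by push_cast; ring
  have hC1 : 1 ≤ C := by omega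
  have h2e : 2 ^ e ≤ C := Nat.pow_log_le_self 2 (by omega)
  have hCe1 : C < 2 ^ (e + 1) := Nat.lt_pow_succ_log_self (by norm_num) C
  have hle : ℓ ≤ e := by
    rw [hl, he]; exact Nat.log_mono_right (by omega)
  have hp2e : (2 : ℕ) ^ (e + 1) = 2 * 2 ^ e := by ring
  set c := C - 2 ^ e with hc
  have hcC : C = 2 ^ e + c := by omega
  have hcm : c < 2 ^ (ℓ + 1) := hCsmall
  by_cases hcase : ℓ + 1 ≤ e
  swap
  · -- e = ℓ, so C < 2^(ℓ+1) and C − j − g = 0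
    have heℓ : e = ℓ := by omega
    have hClt : C < 2 ^ (ℓ + 1) := by rw [← heℓ, ← hp2e] at *; omega
    have hS0 : (C : ℤ) - j - g = 0 := by
      refine Int.eq_zero_of_abs_lt_dvd hdvd ?_
      rw [abs_lt]
      constructor <;> omega
    rcases Nat.eq_zero_or_pos g with hg0 | hg1
    · exact absurd (Or.inl ⟨hg0, by omega⟩) hexc
    · rw [if_neg (by omega)]; exact Even.zero
  · -- main case: ℓ + 1 ≤ e
    have hm_e : 2 ^ (ℓ + 1) ≤ 2 ^ e := Nat.pow_le_pow_right (by norm_num) hcase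
    have hCmod : C % 2 ^ e = c := by
      rw [hcC, Nat.add_mod_left, Nat.mod_eq_of_lt (by omega)]
    have hj1 : j % 2 ^ e ≤ c := by
      have := odd_choose_mod_le e C j hCj; omega
    have hg1 : g % 2 ^ e ≤ c := by
      have := odd_choose_mod_le e C g hCg; omega
    have hjd : 2 ^ e * (j / 2 ^ e) + j % 2 ^ e = j := Nat.div_add_mod j (2 ^ e)
    have hgd : 2 ^ e * (g / 2 ^ e) + g % 2 ^ e = g := Nat.div_add_mod g (2 ^ e)
    have haj : j / 2 ^ e < 2 := Nat.div_lt_of_lt_mul (by omega)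
    have hag : g / 2 ^ e < 2 := Nat.div_lt_of_lt_mul (by omega)
    rcases Nat.le_one_iff_eq_zero_or_eq_one.mp (Nat.lt_succ_iff.mp hag) with hag0 | hag1
    swap
    · -- g has the top bit: C − j − 2g < 0
      rw [hag1, mul_one] at hgd
      rw [if_neg (by omega)]; exact Even.zero
    · -- g has no top bit
      rw [hag0, mul_zero, zero_add] at hgd
      -- now g = g % 2^e ≤ c
      rcases Nat.le_one_iff_eq_zero_or_eq_one.mp (Nat.lt_succ_iff.mp haj) with haj0 | haj1
      swap
      · -- j has the top bit: C − j − g = c − j' − g, must be 0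
        rw [haj1, mul_one] at hjd
        have hS0 : (C : ℤ) - j - g = 0 := by
          refine Int.eq_zero_of_abs_lt_dvd hdvd ?_
          rw [abs_lt]
          constructor <;> omega
        rcases Nat.eq_zero_or_pos g with hg0 | hgpos
        · exact absurd (Or.inl ⟨hg0, by omega⟩) hexc
        · rw [if_neg (by omega)]; exact Even.zero
      · -- neither has the top bit: C − j − g = 2^e + (c − j − g)
        rw [haj0, mul_zero, zero_add] at hjd
        -- j = j % 2^e ≤ c, g ≤ c
        have hdvd2 : (2 ^ (ℓ + 1) : ℤ) ∣ ((c : ℤ) - j - g) := by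
          have h2 : (2 ^ (ℓ + 1) : ℤ) ∣ (2 : ℤ) ^ e :=
            ⟨(2 : ℤ) ^ (e - (ℓ + 1)), by rw [← pow_add]; congr 1; omega⟩
          have h3 := dvd_sub hdvd h2
          have h4 : (C : ℤ) - j - g - 2 ^ e = (c : ℤ) - j - g := by omega
          rwa [h4] at h3
        have hcjg : c = j + g := by
          have h0 : (c : ℤ) - j - g = 0 := by
            refine Int.eq_zero_of_abs_lt_dvd hdvd2 ?_
            rw [abs_lt]
            constructor <;> omega
          omega
        -- so C − j − g = 2^e, hence e < t
        have hS : (C : ℤ) - j - g = (2 : ℤ) ^ e := by omega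
        have het : (2 : ℕ) ^ e < 2 ^ t := by
          rw [hS, abs_of_nonneg (by positivity)] at habs
          omega
        have het1 : e + 1 ≤ t := by
          have := (Nat.pow_lt_pow_iff_right (a := 2) (by norm_num)).mp het
          omega
        have hpt : (2 : ℕ) ^ (e + 1) ≤ 2 ^ t := Nat.pow_le_pow_right (by norm_num) het1
        -- rule out the second exceptional case
        by_cases hbad : c = 2 ^ (ℓ + 1) - 1 ∧ e = ℓ + 1
        · exfalso
          apply hexc
          right
          have pp : (2 : ℕ) ^ (ℓ + 2) = 2 * 2 ^ (ℓ + 1) := by ring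
          have pe : (2 : ℕ) ^ e = 2 ^ (ℓ + 1) := by rw [hbad.2]
          refine ⟨by omega, by omega, ?_⟩
          rw [hS, hbad.2]
        · -- from now on the binomial coefficient is genuinely even
          have hcsmall2 : c + 2 ≤ 2 ^ e := by
            rcases Nat.lt_or_ge e (ℓ + 2) with h' | h'
            · have heq : e = ℓ + 1 := by omega
              have hcne : c ≠ 2 ^ (ℓ + 1) - 1 := fun h => hbad ⟨h, heq⟩
              rw [heq]; omega
            · have : (2 : ℕ) ^ (ℓ + 2) ≤ 2 ^ e := Nat.pow_le_pow_right (by norm_num) h'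
              have pp : (2 : ℕ) ^ (ℓ + 2) = 2 * 2 ^ (ℓ + 1) := by ring
              omega
          have hCt : C + 2 ≤ 2 ^ t := by omega
          have hr : 0 ≤ (C : ℤ) - j - 2 * g := by omega
          rw [if_pos hr]
          have hrr : ((C : ℤ) - j - 2 * g).toNat = 2 ^ e - g := by omega
          rw [hrr]
          have hN : 2 ^ t * (B + 1) - C - 2 = 2 ^ t * B + (2 ^ t - C - 2) := by
            rw [Nat.mul_add, Nat.mul_one]; omega
          rw [hN]
          rcases Nat.even_or_odd (Nat.choose (2 ^ t * B + (2 ^ t - C - 2)) (2 ^ e - g))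
            with hev | hod
          · exact hev
          exfalso
          have hdvdtB : ∀ μ : ℕ, μ ≤ t → 2 ^ μ ∣ 2 ^ t * B :=
            fun μ hμ => Dvd.dvd.mul_right (pow_dvd_pow 2 hμ) B
          rcases Nat.eq_zero_or_pos g with hg0 | hgpos
          · -- g = 0, use μ = e + 1
            have L := odd_choose_mod_le (e + 1) _ _ hod
            have rmod : (2 ^ e - g) % 2 ^ (e + 1) = 2 ^ e := by
              rw [hg0, Nat.sub_zero, Nat.mod_eq_of_lt (by omega)]
            have Nmod : (2 ^ t * B + (2 ^ t - C - 2)) % 2 ^ (e + 1) = 2 ^ e - c - 2 := by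
              have heq : 2 ^ t * B + (2 ^ t - C - 2)
                  = (2 ^ t * B + (2 ^ t - 2 ^ (e + 1))) + (2 ^ e - c - 2) := by omega
              rw [heq]
              exact mod_add_small
                (dvd_add (hdvdtB _ het1) (Nat.dvd_sub (pow_dvd_pow 2 het1) dvd_rfl))
                (by omega)
            omega
          · -- g ≥ 1
            rcases Nat.lt_or_ge c (2 ^ (ℓ + 1) - 1) with hclt | hceq
            · -- c ≤ 2^(ℓ+1) − 2, use μ = ℓ + 1
              have L := odd_choose_mod_le (ℓ + 1) _ _ hod
              have rmod : (2 ^ e - g) % 2 ^ (ℓ + 1) = 2 ^ (ℓ + 1) - g := by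
                have heq : 2 ^ e - g = (2 ^ e - 2 ^ (ℓ + 1)) + (2 ^ (ℓ + 1) - g) := by omega
                rw [heq]
                exact mod_add_small (Nat.dvd_sub (pow_dvd_pow 2 hcase) dvd_rfl) (by omega)
              have Nmod : (2 ^ t * B + (2 ^ t - C - 2)) % 2 ^ (ℓ + 1)
                  = 2 ^ (ℓ + 1) - c - 2 := by
                have heq : 2 ^ t * B + (2 ^ t - C - 2)
                    = (2 ^ t * B + (2 ^ t - 2 ^ e - 2 ^ (ℓ + 1))) + (2 ^ (ℓ + 1) - c - 2) := by
                  omega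
                rw [heq]
                exact mod_add_small
                  (dvd_add (hdvdtB _ (by omega))
                    (Nat.dvd_sub (Nat.dvd_sub (pow_dvd_pow 2 (by omega))
                      (pow_dvd_pow 2 hcase)) dvd_rfl))
                  (by omega)
              omega
            · -- c = 2^(ℓ+1) − 1, hence e ≥ ℓ + 2, use μ = ℓ + 2
              have hceq' : c = 2 ^ (ℓ + 1) - 1 := by omega
              have he2 : ℓ + 2 ≤ e := by
                rcases Nat.lt_or_ge e (ℓ + 2) with h' | h'
                · exact absurd ⟨hceq', by omega⟩ hbad
                · exact h'
              have pp : (2 : ℕ) ^ (ℓ + 2) = 2 * 2 ^ (ℓ + 1) := by ring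
              have hm2e : (2 : ℕ) ^ (ℓ + 2) ≤ 2 ^ e := Nat.pow_le_pow_right (by norm_num) he2
              have L := odd_choose_mod_le (ℓ + 2) _ _ hod
              have rmod : (2 ^ e - g) % 2 ^ (ℓ + 2) = 2 ^ (ℓ + 2) - g := by
                have heq : 2 ^ e - g = (2 ^ e - 2 ^ (ℓ + 2)) + (2 ^ (ℓ + 2) - g) := by omega
                rw [heq]
                exact mod_add_small (Nat.dvd_sub (pow_dvd_pow 2 he2) dvd_rfl) (by omega)
              have Nmod : (2 ^ t * B + (2 ^ t - C - 2)) % 2 ^ (ℓ + 2)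
                  = 2 ^ (ℓ + 2) - c - 2 := by
                have heq : 2 ^ t * B + (2 ^ t - C - 2)
                    = (2 ^ t * B + (2 ^ t - 2 ^ e - 2 ^ (ℓ + 2))) + (2 ^ (ℓ + 2) - c - 2) := by
                  omega
                rw [heq]
                exact mod_add_small
                  (dvd_add (hdvdtB _ (by omega))
                    (Nat.dvd_sub (Nat.dvd_sub (pow_dvd_pow 2 (by omega))
                      (pow_dvd_pow 2 he2)) dvd_rfl))
                  (by omega)
              omega
end
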